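/- arXiv:1407.2870 — 14 statements merged into one kernel-verified Lean document; each statement's English description precedes it below -/
import Mathlib

section
/- Let a₁,b₁,a₂,b₂,a₃,b₃ be real numbers such that the vectors (a₁,b₁) and (a₂,b₂) are linearly independent over ℝ. Let G₁,G₂,G₃ : ℂ → ℂ be analytic on the open unit disk with Gᵢ(0)=0 and Gᵢ′(0)=0 for i=1,2,3. Define f on the punctured unit disk {z ∈ ℂ : 0<|z|<1} by f(z) = (Re((a₁+i b₁)z + G₁(z)), Re((a₂+i b₂)z + G₂(z)), log|z| + Re((a₃+i b₃)z + G₃(z))). Then there exists ε ∈ (0,1) such that the restriction of f to {z : 0<|z|<ε} is injective, its real derivative is injective at every such point, and ‖f(z)‖ → ∞ as z → 0. (In other words, a meromorphic end of order 1 in normal form whose leading coefficients a₁+b₁i and a₂+b₂i are independent over ℝ is properly embedded.) -/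
open Complex Filter Function

lemma aux_det (a₁ b₁ a₂ b₂ : ℝ) (h : LinearIndependent ℝ ![(a₁, b₁), (a₂, b₂)]) :
    a₁ * b₂ - b₁ * a₂ ≠ 0 := by
  rw [LinearIndependent.pair_iff] at h
  intro hd
  obtain ⟨hb₂, hb₁⟩ := h b₂ (-b₁) (by
    simp only [Prod.smul_mk, smul_eq_mul, Prod.mk_add_mk, Prod.mk_eq_zero]
    constructor <;> nlinarith)
  have hb₁' : b₁ = 0 := by linarith [neg_eq_zero.mp hb₁]
  obtain ⟨ha₂, ha₁⟩ := h a₂ (-a₁) (by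
    simp only [Prod.smul_mk, smul_eq_mul, Prod.mk_add_mk, Prod.mk_eq_zero]
    constructor <;> nlinarith)
  have ha₁' : a₁ = 0 := by linarith [neg_eq_zero.mp ha₁]
  obtain ⟨h10, -⟩ := h 1 0 (by simp [ha₁', ha₂, hb₁', hb₂])
  exact one_ne_zero h10

lemma aux_clm_apply (L : ℂ →L[ℂ] ℂ) (v : ℂ) : L v = v * L 1 := by
  have := L.map_smul v (1 : ℂ)
  simpa [smul_eq_mul] using this

/-- A meromorphic end of order 1 in normal form whose leading coefficients
`a₁ + b₁ i` and `a₂ + b₂ i` are independent over `ℝ` is properly embedded. -/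
theorem stmt_0 (a₁ b₁ a₂ b₂ a₃ b₃ : ℝ)
    (hind : LinearIndependent ℝ ![(a₁, b₁), (a₂, b₂)])
    (G₁ G₂ G₃ : ℂ → ℂ)
    (hG₁ : AnalyticOnNhd ℂ G₁ (Metric.ball 0 1))
    (hG₂ : AnalyticOnNhd ℂ G₂ (Metric.ball 0 1))
    (hG₃ : AnalyticOnNhd ℂ G₃ (Metric.ball 0 1))
    (hG₁0 : G₁ 0 = 0) (hG₂0 : G₂ 0 = 0) (hG₃0 : G₃ 0 = 0)
    (hG₁0' : deriv G₁ 0 = 0) (hG₂0' : deriv G₂ 0 = 0) (hG₃0' : deriv G₃ 0 = 0)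
    (f : ℂ → ℝ × ℝ × ℝ)
    (hf : ∀ z, f z =
      ((((a₁ : ℂ) + b₁ * I) * z + G₁ z).re,
       (((a₂ : ℂ) + b₂ * I) * z + G₂ z).re,
       Real.log (‖z‖) + (((a₃ : ℂ) + b₃ * I) * z + G₃ z).re)) :
    ∃ ε ∈ Set.Ioo (0 : ℝ) 1,
      Set.InjOn f {z : ℂ | 0 < ‖z‖ ∧ ‖z‖ < ε} ∧
      (∀ z : ℂ, 0 < ‖z‖ → ‖z‖ < ε →
        Function.Injective (fderiv ℝ f z)) ∧
      Tendsto (fun z : ℂ => ‖f z‖) (nhdsWithin 0 {z : ℂ | z ≠ 0}) atTop := by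
  have hd := aux_det a₁ b₁ a₂ b₂ hind
  set α : ℂ := (a₁ : ℂ) + b₁ * I with hα
  set β : ℂ := (a₂ : ℂ) + b₂ * I with hβ
  set γ : ℂ := (a₃ : ℂ) + b₃ * I with hγ
  -- the invertible linear part
  set M₁ : ℂ →L[ℝ] ℝ :=
    Complex.reCLM.comp (((ContinuousLinearMap.mul ℂ ℂ) α).restrictScalars ℝ) with hM₁
  set M₂ : ℂ →L[ℝ] ℝ :=
    Complex.reCLM.comp (((ContinuousLinearMap.mul ℂ ℂ) β).restrictScalars ℝ) with hM₂
  set A : ℂ →L[ℝ] ℝ × ℝ := M₁.prod M₂ with hA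
  have hAapp : ∀ z : ℂ, A z = ((α * z).re, (β * z).re) := by
    intro z
    simp [hA, hM₁, hM₂]
  have hAinj : Function.Injective A := by
    intro z w hzw0
    have hzw : A (z - w) = 0 := by rw [map_sub, hzw0, sub_self]
    set v := z - w
    have h1 : (α * v).re = 0 := by
      have := congrArg Prod.fst hzw; rwa [hAapp] at this
    have h2 : (β * v).re = 0 := by
      have := congrArg (fun p : ℝ × ℝ => p.2) hzw; rwa [hAapp] at this
    have h1' : a₁ * v.re - b₁ * v.im = 0 := by
      simpa [hα, Complex.mul_re, Complex.add_re, Complex.add_im] using h1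
    have h2' : a₂ * v.re - b₂ * v.im = 0 := by
      simpa [hβ, Complex.mul_re, Complex.add_re, Complex.add_im] using h2
    have hx : v.re * (a₁ * b₂ - b₁ * a₂) = 0 := by linear_combination b₂ * h1' - b₁ * h2'
    have hy : v.im * (a₁ * b₂ - b₁ * a₂) = 0 := by linear_combination a₂ * h1' - a₁ * h2'
    have : v = 0 := Complex.ext
      (by rcases mul_eq_zero.mp hx with h | h; exact h; exact absurd h hd)
      (by rcases mul_eq_zero.mp hy with h | h; exact h; exact absurd h hd)
    exact sub_eq_zero.mp this
  obtain ⟨K, hK, hAK⟩ := (A : ℂ →ₗ[ℝ] ℝ × ℝ).exists_antilipschitzWith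
    (LinearMap.ker_eq_bot.mpr hAinj)
  have hKpos : (0 : ℝ) < K := hK
  have hKv : ∀ v : ℂ, ‖v‖ ≤ K * ‖A v‖ := by
    intro v
    simpa [dist_eq_norm, map_zero] using hAK.le_mul_dist v 0
  set δ : ℝ := 1 / (2 * K) with hδ
  have hδpos : 0 < δ := by positivity
  have hKδ : (K : ℝ) * δ = 1 / 2 := by
    rw [hδ]; field_simp
  -- the eventual smallness of the perturbations
  have hmem0 : (0 : ℂ) ∈ Metric.ball (0 : ℂ) 1 := by simp
  have hev1 : ∀ᶠ z in nhds (0 : ℂ), ‖deriv G₁ z‖ < δ := by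
    have h : Tendsto (deriv G₁) (nhds 0) (nhds 0) := by
      simpa [hG₁0'] using ((hG₁.deriv) 0 hmem0).continuousAt.tendsto
    exact h.norm.eventually_lt_const (by simpa using hδpos)
  have hev2 : ∀ᶠ z in nhds (0 : ℂ), ‖deriv G₂ z‖ < δ := by
    have h : Tendsto (deriv G₂) (nhds 0) (nhds 0) := by
      simpa [hG₂0'] using ((hG₂.deriv) 0 hmem0).continuousAt.tendsto
    exact h.norm.eventually_lt_const (by simpa using hδpos)
  have hev3 : ∀ᶠ z in nhds (0 : ℂ), |(γ * z + G₃ z).re| < 1 := by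
    have hc : ContinuousAt (fun z : ℂ => (γ * z + G₃ z).re) 0 :=
      (Complex.continuous_re.continuousAt).comp
        ((continuousAt_const.mul continuousAt_id).add (hG₃ 0 hmem0).continuousAt)
    have hc0 := hc.tendsto
    rw [show ((γ * (0:ℂ) + G₃ 0).re) = 0 by simp [hG₃0]] at hc0
    have := Filter.Tendsto.eventually_lt_const (show (0:ℝ) < 1 by norm_num)
      (by simpa using hc0.norm)
    simpa [Real.norm_eq_abs] using this
  obtain ⟨ε', hε'pos, hball⟩ := Metric.eventually_nhds_iff.mp ((hev1.and hev2).and hev3)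
  set ε : ℝ := min ε' 1 / 2 with hε
  have hεpos : 0 < ε := by positivity
  have hεlt1 : ε < 1 := by
    have : min ε' 1 ≤ 1 := min_le_right _ _
    rw [hε]; linarith
  have hεsmall : ∀ z : ℂ, ‖z‖ < ε →
      (‖deriv G₁ z‖ < δ ∧ ‖deriv G₂ z‖ < δ) ∧ |(γ * z + G₃ z).re| < 1 := by
    intro z hz
    apply hball
    rw [dist_zero_right]
    have h1 : min ε' 1 ≤ ε' := min_le_left _ _
    rw [hε] at hz
    linarith
  have hεball : ∀ z : ℂ, ‖z‖ < ε → z ∈ Metric.ball (0 : ℂ) 1 := by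
    intro z hz
    rw [Metric.mem_ball, dist_zero_right]
    linarith
  -- the perturbation E and its derivative
  set E : ℂ → ℝ × ℝ := fun z => ((G₁ z).re, (G₂ z).re) with hE
  set DE : ℂ → ℂ →L[ℝ] ℝ × ℝ := fun x =>
    (Complex.reCLM.comp ((fderiv ℂ G₁ x).restrictScalars ℝ)).prod
      (Complex.reCLM.comp ((fderiv ℂ G₂ x).restrictScalars ℝ)) with hDE
  have hEderiv : ∀ x ∈ Metric.ball (0 : ℂ) 1, HasFDerivAt E (DE x) x := by
    intro x hx
    exact HasFDerivAt.prodMk (Complex.reCLM.hasFDerivAt.comp x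
        (((hG₁ x hx).differentiableAt.hasFDerivAt).restrictScalars ℝ))
      (Complex.reCLM.hasFDerivAt.comp x
        (((hG₂ x hx).differentiableAt.hasFDerivAt).restrictScalars ℝ))
  have hDEnorm : ∀ x : ℂ, ‖x‖ < ε → ‖DE x‖ ≤ δ := by
    intro x hx
    apply ContinuousLinearMap.opNorm_le_bound _ hδpos.le
    intro v
    obtain ⟨⟨hd1, hd2⟩, -⟩ := hεsmall x hx
    have key : ∀ G : ℂ → ℂ, ‖deriv G x‖ < δ →
        ‖Complex.reCLM ((ContinuousLinearMap.restrictScalars ℝ (fderiv ℂ G x)) v)‖ ≤ δ * ‖v‖ := by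
      intro G hG
      have h1 : (ContinuousLinearMap.restrictScalars ℝ (fderiv ℂ G x)) v
          = v * deriv G x := by
        rw [show (ContinuousLinearMap.restrictScalars ℝ (fderiv ℂ G x)) v
            = (fderiv ℂ G x) v from rfl]
        rw [aux_clm_apply (fderiv ℂ G x) v, fderiv_apply_one_eq_deriv]
      rw [h1]
      calc ‖Complex.reCLM (v * deriv G x)‖ ≤ ‖v * deriv G x‖ := by
            simpa [Real.norm_eq_abs] using Complex.abs_re_le_norm (v * deriv G x)
        _ = ‖v‖ * ‖deriv G x‖ := by rw [norm_mul]
        _ ≤ ‖v‖ * δ := mul_le_mul_of_nonneg_left hG.le (norm_nonneg v)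
        _ = δ * ‖v‖ := mul_comm _ _
    have hDEv : DE x v = (Complex.reCLM ((ContinuousLinearMap.restrictScalars ℝ (fderiv ℂ G₁ x)) v),
        Complex.reCLM ((ContinuousLinearMap.restrictScalars ℝ (fderiv ℂ G₂ x)) v)) := rfl
    rw [hDEv, Prod.norm_def]
    exact max_le (key G₁ hd1) (key G₂ hd2)
  -- Lipschitz estimate for E on the small ball
  have hlip : ∀ z w : ℂ, ‖z‖ < ε → ‖w‖ < ε →
      ‖E z - E w‖ ≤ δ * ‖z - w‖ := by
    intro z w hz hw
    have hsub : Metric.ball (0 : ℂ) ε ⊆ Metric.ball (0 : ℂ) 1 :=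
      Metric.ball_subset_ball hεlt1.le
    apply Convex.norm_image_sub_le_of_norm_fderiv_le
      (fun x hx => (hEderiv x (hsub hx)).differentiableAt)
      (fun x hx => by
        rw [(hEderiv x (hsub hx)).fderiv]
        exact hDEnorm x (by rwa [Metric.mem_ball, dist_zero_right] at hx))
      (convex_ball 0 ε)
      (by rwa [Metric.mem_ball, dist_zero_right])
      (by rwa [Metric.mem_ball, dist_zero_right])
  -- the projection onto the first two coordinates
  set π : (ℝ × ℝ × ℝ) →L[ℝ] ℝ × ℝ :=
    (ContinuousLinearMap.fst ℝ ℝ (ℝ × ℝ)).prod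
      ((ContinuousLinearMap.fst ℝ ℝ ℝ).comp (ContinuousLinearMap.snd ℝ ℝ (ℝ × ℝ))) with hπ
  have hπf : ∀ z : ℂ, π (f z) = A z + E z := by
    intro z
    rw [hf z]
    show ((α * z + G₁ z).re, (β * z + G₂ z).re) = A z + E z
    rw [hAapp, hE]
    simp [Prod.ext_iff]
  refine ⟨ε, ⟨hεpos, hεlt1⟩, ?_, ?_, ?_⟩
  · -- injectivity of f
    intro z hz w hw hfzw
    have h1 : A z + E z = A w + E w := by rw [← hπf, ← hπf, hfzw]
    have h2 : A (z - w) = E w - E z := by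
      rw [map_sub]; linear_combination h1
    have h3 : ‖z - w‖ ≤ (1 / 2) * ‖z - w‖ := by
      calc ‖z - w‖ ≤ K * ‖A (z - w)‖ := hKv _
        _ = K * ‖E w - E z‖ := by rw [h2]
        _ ≤ K * (δ * ‖w - z‖) :=
            mul_le_mul_of_nonneg_left (hlip w z hw.2 hz.2) hKpos.le
        _ = (K * δ) * ‖z - w‖ := by rw [norm_sub_rev w z]; ring
        _ = (1 / 2) * ‖z - w‖ := by rw [hKδ]
    have h4 : ‖z - w‖ = 0 := le_antisymm (by linarith) (norm_nonneg _)
    exact sub_eq_zero.mp (norm_eq_zero.mp h4)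
  · -- injectivity of the derivative
    intro z hz0 hzε
    have hzne : z ≠ 0 := by
      intro h; rw [h] at hz0; simp at hz0
    have hzball : z ∈ Metric.ball (0 : ℂ) 1 := hεball z hzε
    -- differentiability of f at z
    have hf3 : f = fun z : ℂ =>
        ((α * z + G₁ z).re, (β * z + G₂ z).re,
          Real.log (Complex.normSq z) / 2 + (γ * z + G₃ z).re) := by
      funext w
      rw [hf w]
      simp only [Complex.norm_def, Real.log_sqrt (Complex.normSq_nonneg w)]
    have hd1 : DifferentiableAt ℝ (fun w : ℂ => (α * w + G₁ w).re) z := by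
      have hdC : DifferentiableAt ℂ (fun w : ℂ => α * w + G₁ w) z :=
        ((differentiableAt_const α).mul differentiableAt_id).add (hG₁ z hzball).differentiableAt
      exact Complex.reCLM.differentiableAt.comp z (hdC.restrictScalars ℝ)
    have hd2 : DifferentiableAt ℝ (fun w : ℂ => (β * w + G₂ w).re) z := by
      have hdC : DifferentiableAt ℂ (fun w : ℂ => β * w + G₂ w) z :=
        ((differentiableAt_const β).mul differentiableAt_id).add (hG₂ z hzball).differentiableAt
      exact Complex.reCLM.differentiableAt.comp z (hdC.restrictScalars ℝ)
    have hd3re : DifferentiableAt ℝ (fun w : ℂ => (γ * w + G₃ w).re) z := by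
      have hdC : DifferentiableAt ℂ (fun w : ℂ => γ * w + G₃ w) z :=
        ((differentiableAt_const γ).mul differentiableAt_id).add (hG₃ z hzball).differentiableAt
      exact Complex.reCLM.differentiableAt.comp z (hdC.restrictScalars ℝ)
    have hdns : DifferentiableAt ℝ (fun w : ℂ => Complex.normSq w) z := by
      have heq : (fun w : ℂ => Complex.normSq w) = fun w : ℂ => w.re * w.re + w.im * w.im := by
        funext w; exact Complex.normSq_apply w
      rw [heq]
      exact ((Complex.reCLM.differentiableAt.mul Complex.reCLM.differentiableAt).add
        (Complex.imCLM.differentiableAt.mul Complex.imCLM.differentiableAt))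
    have hdlog : DifferentiableAt ℝ (fun w : ℂ => Real.log (Complex.normSq w)) z :=
      hdns.log (ne_of_gt (Complex.normSq_pos.mpr hzne))
    have hdf : DifferentiableAt ℝ f z := by
      have hdlog2 : DifferentiableAt ℝ (fun w : ℂ => Real.log (Complex.normSq w) / 2) z := by
        have heq2 : (fun w : ℂ => Real.log (Complex.normSq w) / 2)
            = fun w : ℂ => (1 / 2 : ℝ) * Real.log (Complex.normSq w) := by
          funext w; ring
        rw [heq2]
        exact hdlog.const_mul _
      rw [hf3]
      exact hd1.prodMk (hd2.prodMk (hdlog2.add hd3re))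
    -- compute the derivative of π ∘ f
    have hcomp : HasFDerivAt (fun w => π (f w)) (π.comp (fderiv ℝ f z)) z :=
      π.hasFDerivAt.comp z hdf.hasFDerivAt
    have heqfun : (fun w => π (f w)) = fun w => A w + E w := funext hπf
    rw [heqfun] at hcomp
    have hAE : HasFDerivAt (fun w => A w + E w) (A + DE z) z :=
      A.hasFDerivAt.add (hEderiv z hzball)
    have huniq : π.comp (fderiv ℝ f z) = A + DE z := hcomp.unique hAE
    intro v v' hvv'
    have h1 : (A + DE z) v = (A + DE z) v' := by
      rw [← huniq]
      simp only [ContinuousLinearMap.comp_apply, hvv']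
    have h2 : A (v - v') = DE z v' - DE z v := by
      simp only [ContinuousLinearMap.add_apply] at h1
      rw [map_sub]; linear_combination h1
    have h3 : ‖v - v'‖ ≤ (1 / 2) * ‖v - v'‖ := by
      calc ‖v - v'‖ ≤ K * ‖A (v - v')‖ := hKv _
        _ = K * ‖DE z (v' - v)‖ := by rw [h2, map_sub]
        _ ≤ K * (δ * ‖v' - v‖) := by
            apply mul_le_mul_of_nonneg_left _ hKpos.le
            calc ‖DE z (v' - v)‖ ≤ ‖DE z‖ * ‖v' - v‖ := (DE z).le_opNorm _
              _ ≤ δ * ‖v' - v‖ :=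
                  mul_le_mul_of_nonneg_right (hDEnorm z hzε) (norm_nonneg _)
        _ = (K * δ) * ‖v - v'‖ := by rw [norm_sub_rev v' v]; ring
        _ = (1 / 2) * ‖v - v'‖ := by rw [hKδ]
    have h4 : ‖v - v'‖ = 0 := le_antisymm (by linarith) (norm_nonneg _)
    exact sub_eq_zero.mp (norm_eq_zero.mp h4)
  · -- properness
    have hlog : Tendsto (fun z : ℂ => -Real.log (‖z‖) - 1)
        (nhdsWithin 0 {z : ℂ | z ≠ 0}) atTop := by
      have habs : Tendsto (fun z : ℂ => ‖z‖)
          (nhdsWithin 0 {z : ℂ | z ≠ 0}) (nhdsWithin 0 (Set.Ioi 0)) := by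
        apply tendsto_nhdsWithin_of_tendsto_nhds_of_eventually_within
        · have := continuous_norm.tendsto (0 : ℂ)
          simpa using this.mono_left nhdsWithin_le_nhds
        · filter_upwards [self_mem_nhdsWithin] with z hz
          exact norm_pos_iff.mpr hz
      have h1 : Tendsto (fun z : ℂ => Real.log (‖z‖))
          (nhdsWithin 0 {z : ℂ | z ≠ 0}) atBot :=
        Real.tendsto_log_nhdsGT_zero.comp habs
      have h2 : Tendsto (fun z : ℂ => -Real.log (‖z‖))
          (nhdsWithin 0 {z : ℂ | z ≠ 0}) atTop := tendsto_neg_atBot_atTop.comp h1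
      exact tendsto_atTop_add_const_right _ (-1) h2
    apply tendsto_atTop_mono' _ _ hlog
    have hev : ∀ᶠ z in nhdsWithin (0 : ℂ) {z : ℂ | z ≠ 0}, ‖z‖ < ε := by
      apply eventually_nhdsWithin_of_eventually_nhds
      have : Tendsto (fun z : ℂ => ‖z‖) (nhds 0) (nhds 0) := by
        have := continuous_norm.tendsto (0 : ℂ); simpa using this
      exact this.eventually_lt_const hεpos
    filter_upwards [hev] with z hz
    obtain ⟨-, hu3⟩ := hεsmall z hz
    have key : -Real.log (‖z‖) - 1 ≤ |Real.log (‖z‖) + (γ * z + G₃ z).re| := by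
      have h1 : -(Real.log (‖z‖) + (γ * z + G₃ z).re)
          ≤ |Real.log (‖z‖) + (γ * z + G₃ z).re| := neg_le_abs _
      have h2 : (γ * z + G₃ z).re ≤ 1 := by
        have := abs_le.mp hu3.le; linarith [this.2]
      linarith
    calc -Real.log (‖z‖) - 1
        ≤ |Real.log (‖z‖) + (γ * z + G₃ z).re| := key
      _ ≤ ‖f z‖ := by
          have h5 : (f z).2.2 = Real.log (‖z‖) + (γ * z + G₃ z).re := by
            rw [hf z]
          calc |Real.log (‖z‖) + (γ * z + G₃ z).re| = ‖(f z).2.2‖ := by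
                rw [h5, Real.norm_eq_abs]
            _ ≤ ‖(f z).2‖ := norm_snd_le _
            _ ≤ ‖f z‖ := norm_snd_le _
end

section
/- Let n ≥ 2 be an integer, a ∈ ℝ, and let G₁,G₂ : ℂ → ℂ be analytic on the open unit disk. Define f on the punctured unit disk by f(z) = (Re G₁(z), Re G₂(z), a·log|z| + Re(z^{1−n}/(1−n))). Then f is not a proper map: there exists a sequence (z_k) in ℂ∖{0} with z_k → 0 such that the sequence (f(z_k)) is bounded in ℝ³ (indeed one can choose z_k so that the third coordinate of f(z_k) equals 0). -/
open Complex Filter Function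

private lemma re_calc_aux (m : ℕ) (hm : 0 < m) (r θ : ℝ) (hr : 0 < r) :
    (((r : ℂ) * Complex.exp (θ * I)) ^ (-(m:ℤ)) / (-(m:ℂ))).re
      = -(Real.cos (m * θ)) / (m * r ^ m) := by
  have hz : ((r:ℂ) * Complex.exp (θ * I)) ^ (-(m:ℤ))
      = (↑((r^m)⁻¹) : ℂ) * Complex.exp (((-(m*θ):ℝ)) * I) := by
    rw [zpow_neg, zpow_natCast, mul_pow, ← Complex.exp_nat_mul, mul_inv, ← Complex.exp_neg]
    push_cast; ring_nf
  have h2 : (-(↑m:ℂ)) = Complex.ofReal (-(m:ℝ)) := by simp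
  rw [hz, h2, Complex.div_ofReal_re, Complex.exp_mul_I, Complex.re_ofReal_mul]
  simp [Real.cos_neg, ← Complex.ofReal_natCast, ← Complex.ofReal_mul,
    Complex.cos_ofReal_re, Complex.sin_ofReal_im]
  field_simp

/-- An end of type `(0,0,n)`, `n ≥ 2`, is never proper: there is a sequence
tending to the puncture along which the image stays bounded (indeed with
vanishing third coordinate). -/
theorem stmt_1 (n : ℕ) (hn : 2 ≤ n) (a : ℝ) (G₁ G₂ : ℂ → ℂ)
    (hG₁ : AnalyticOnNhd ℂ G₁ (Metric.ball 0 1))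
    (hG₂ : AnalyticOnNhd ℂ G₂ (Metric.ball 0 1))
    (f : ℂ → ℝ × ℝ × ℝ)
    (hf : ∀ z, f z =
      ((G₁ z).re, (G₂ z).re,
        a * Real.log ‖z‖ + (z ^ ((1 : ℤ) - n) / ((1 : ℂ) - n)).re)) :
    ∃ z : ℕ → ℂ, (∀ k, z k ≠ 0 ∧ ‖z k‖ < 1) ∧
      Tendsto z atTop (nhds 0) ∧
      (∃ C : ℝ, ∀ k, ‖f (z k)‖ ≤ C) ∧
      (∀ k, (f (z k)).2.2 = 0) := by
  obtain ⟨m, rfl⟩ : ∃ m : ℕ, n = m + 1 := ⟨n - 1, by omega⟩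
  have hm : 0 < m := by omega
  have hm' : (0:ℝ) < m := by exact_mod_cast hm
  set c : ℝ := 2 * m * |a| + 1 with hc
  have hc1 : 1 ≤ c := by
    have : (0:ℝ) ≤ 2 * m * |a| := by positivity
    linarith
  set r : ℕ → ℝ := fun k => ((c * (k + 2))⁻¹) ^ 2 with hrdef
  have hck : ∀ k : ℕ, (2:ℝ) ≤ c * (k + 2) := by
    intro k
    calc (2:ℝ) = 1 * 2 := by ring
    _ ≤ c * (k + 2) := by
        apply mul_le_mul hc1 (by linarith [Nat.cast_nonneg (α:=ℝ) k]) (by norm_num) (by linarith)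
  have hrpos : ∀ k, 0 < r k := by
    intro k
    have := hck k
    exact pow_pos (inv_pos.mpr (by linarith)) 2
  have hrle : ∀ k, r k ≤ 1/4 := by
    intro k
    have h2 := hck k
    have : (c * (k + 2))⁻¹ ≤ (2:ℝ)⁻¹ := by
      exact inv_anti₀ (by norm_num) h2
    calc r k ≤ ((2:ℝ)⁻¹)^2 := by
          apply pow_le_pow_left₀ (by positivity) this
      _ = 1/4 := by norm_num
  have hsqrt : ∀ k, Real.sqrt (r k) = (c * (k + 2))⁻¹ := by
    intro k
    exact Real.sqrt_sq (by have := hck k; positivity)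
  set t : ℕ → ℝ := fun k => m * a * (r k) ^ m * Real.log (r k) with htdef
  have ht1 : ∀ k, |t k| ≤ 1 := by
    intro k
    have hrk := hrpos k
    have hrk1 : r k < 1 := lt_of_le_of_lt (hrle k) (by norm_num)
    have hs : 0 < Real.sqrt (r k) := Real.sqrt_pos.mpr hrk
    -- |log r| ≤ 2 / √r
    have hlog : |Real.log (r k)| ≤ 2 / Real.sqrt (r k) := by
      have hneg : Real.log (r k) < 0 := Real.log_neg hrk hrk1
      rw [abs_of_neg hneg]
      have hls : Real.log (Real.sqrt (r k)) = Real.log (r k) / 2 := Real.log_sqrt hrk.le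
      have h3 : Real.log (Real.sqrt (r k))⁻¹ ≤ (Real.sqrt (r k))⁻¹ := by
        calc Real.log (Real.sqrt (r k))⁻¹ ≤ (Real.sqrt (r k))⁻¹ - 1 :=
              Real.log_le_sub_one_of_pos (by positivity)
          _ ≤ (Real.sqrt (r k))⁻¹ := by linarith
      have h2 : Real.log (Real.sqrt (r k))⁻¹ = -(Real.log (r k) / 2) := by
        rw [Real.log_inv, hls]
      rw [div_eq_mul_inv]
      linarith
    have hpow : (r k) ^ m ≤ r k := by
      calc (r k) ^ m ≤ (r k) ^ 1 := pow_le_pow_of_le_one hrk.le hrk1.le hm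
        _ = r k := pow_one _
    have hkey : |t k| ≤ 2 * m * |a| * Real.sqrt (r k) := by
      have : |t k| = m * |a| * (r k)^m * |Real.log (r k)| := by
        rw [htdef]
        rw [abs_mul, abs_mul, abs_mul, Nat.abs_cast, _root_.abs_pow, _root_.abs_of_pos hrk]
      rw [this]
      have hrs : r k / Real.sqrt (r k) = Real.sqrt (r k) := by
        rw [div_eq_iff hs.ne']
        exact (Real.mul_self_sqrt hrk.le).symm
      calc (m:ℝ) * |a| * (r k)^m * |Real.log (r k)|
          ≤ m * |a| * (r k) * (2 / Real.sqrt (r k)) := by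
            apply mul_le_mul (by nlinarith [abs_nonneg a, hrk.le]) hlog (abs_nonneg _)
              (by positivity)
        _ = 2 * m * |a| * (r k / Real.sqrt (r k)) := by ring
        _ = 2 * m * |a| * Real.sqrt (r k) := by rw [hrs]
    calc |t k| ≤ 2 * m * |a| * Real.sqrt (r k) := hkey
      _ ≤ c * Real.sqrt (r k) := by
          apply mul_le_mul_of_nonneg_right (by rw [hc]; linarith) (Real.sqrt_nonneg _)
      _ = c * (c * (k+2))⁻¹ := by rw [hsqrt]
      _ = ((k:ℝ) + 2)⁻¹ := by
          rw [mul_inv, ← mul_assoc, mul_inv_cancel₀ (by linarith : c ≠ 0), one_mul]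
      _ ≤ 1 := by
          rw [inv_le_one_iff₀]
          right; linarith [Nat.cast_nonneg (α:=ℝ) k]
  set θ : ℕ → ℝ := fun k => Real.arccos (t k) / m with hθdef
  have hcos : ∀ k, Real.cos (m * θ k) = t k := by
    intro k
    have : (m:ℝ) * θ k = Real.arccos (t k) := by
      rw [hθdef]; field_simp
    rw [this]
    have := abs_le.mp (ht1 k)
    exact Real.cos_arccos this.1 this.2
  set z : ℕ → ℂ := fun k => (r k : ℂ) * Complex.exp (θ k * I) with hzdef
  have habs : ∀ k, ‖z k‖ = r k := by
    intro k
    rw [hzdef]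
    rw [norm_mul, Complex.norm_exp_ofReal_mul_I, mul_one, Complex.norm_real, Real.norm_eq_abs,
      abs_of_pos (hrpos k)]
  have hthird : ∀ k, (f (z k)).2.2 = 0 := by
    intro k
    rw [hf]
    simp only
    have hexp : ((1 : ℤ) - ((m+1 : ℕ) : ℤ)) = -(m:ℤ) := by push_cast; ring
    have hden : ((1:ℂ) - ((m+1 : ℕ) : ℂ)) = -(m:ℂ) := by push_cast; ring
    rw [habs k, hexp, hden]
    have hre := re_calc_aux m hm (r k) (θ k) (hrpos k)
    have hz' : z k = (r k : ℂ) * Complex.exp ((θ k : ℝ) * I) := rfl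
    rw [hz', hre, hcos k, htdef]
    simp only
    have h1 : (m:ℝ) * (r k)^m ≠ 0 := by positivity
    field_simp
    ring_nf
    rw [mul_assoc (a * Real.log (r k)), ← mul_pow, mul_inv_cancel₀ (hrpos k).ne', one_pow]
    ring
  have hrt : Tendsto r atTop (nhds 0) := by
    have h1 : Tendsto (fun k : ℕ => c * ((k:ℝ) + 2)) atTop atTop := by
      apply Tendsto.const_mul_atTop (by linarith : (0:ℝ) < c)
      exact tendsto_atTop_add_const_right _ 2 tendsto_natCast_atTop_atTop
    have h2 := (tendsto_inv_atTop_zero.comp h1).pow 2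
    have h0 : ((0:ℝ))^2 = 0 := by norm_num
    rw [hrdef]
    exact h0 ▸ h2
  have hz0 : Tendsto z atTop (nhds 0) := by
    rw [tendsto_zero_iff_norm_tendsto_zero]
    refine Tendsto.congr (fun k => ?_) hrt
    rw [habs k]
  refine ⟨z, ?_, hz0, ?_, hthird⟩
  · intro k
    constructor
    · intro h
      apply (hrpos k).ne'
      rw [← habs k, h, norm_zero]
    · rw [habs k]; linarith [hrle k]
  · have hc1' : ContinuousAt G₁ 0 := (hG₁ 0 (by simp)).continuousAt
    have hc2' : ContinuousAt G₂ 0 := (hG₂ 0 (by simp)).continuousAt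
    have ht1' : Tendsto (fun k => (G₁ (z k)).re) atTop (nhds (G₁ 0).re) :=
      (Complex.continuous_re.continuousAt.tendsto.comp (hc1'.tendsto.comp hz0))
    have ht2' : Tendsto (fun k => (G₂ (z k)).re) atTop (nhds (G₂ 0).re) :=
      (Complex.continuous_re.continuousAt.tendsto.comp (hc2'.tendsto.comp hz0))
    have htend : Tendsto (fun k => f (z k)) atTop (nhds ((G₁ 0).re, (G₂ 0).re, 0)) := by
      refine Tendsto.congr (fun k => ?_) (ht1'.prodMk_nhds (ht2'.prodMk_nhds tendsto_const_nhds))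
      have h3 := hthird k
      rw [hf] at h3 ⊢
      simp only at h3 ⊢
      rw [h3]
    obtain ⟨C, hC⟩ := htend.norm.bddAbove_range
    exact ⟨C, fun k => hC ⟨k, rfl⟩⟩
end

section
/- Let n ≥ 3 be an integer and define f : ℂ∖{0} → ℝ³ by f(z) = (Re(−1/z), log|z|, Re(z^{n−1})/(n−1) − Im z). Then: (1) f is injective; (2) f is an immersion, i.e. its real derivative is injective at every point of ℂ∖{0}; (3) f is proper, i.e. the preimage of every compact subset of ℝ³ is compact. -/
open Complex Filter Function

noncomputable def F (n : ℕ) : ℂ → ℝ × ℝ × ℝ := fun z =>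
  ((-(1 / z)).re, Real.log ‖z‖,
    (z ^ (n - 1)).re / ((n : ℝ) - 1) - z.im)

lemma F_inj (n : ℕ) (hn : 3 ≤ n) : Set.InjOn (F n) {z : ℂ | z ≠ 0} := by
  intro z hz w hw h
  simp only [F, Prod.mk.injEq] at h
  obtain ⟨h1, h2, h3⟩ := h
  have hz : z ≠ 0 := hz
  have hw : w ≠ 0 := hw
  have habs : ‖z‖ = ‖w‖ := by
    rw [← Real.exp_log (norm_pos_iff.mpr hz), ← Real.exp_log (norm_pos_iff.mpr hw), h2]
  have hns : Complex.normSq z = Complex.normSq w := by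
    rw [Complex.normSq_eq_norm_sq, Complex.normSq_eq_norm_sq, habs]
  have hns0 : Complex.normSq z ≠ 0 := (Complex.normSq_pos.2 hz).ne'
  have hre : z.re = w.re := by
    have : z.re / Complex.normSq z = w.re / Complex.normSq w := by
      simpa [Complex.inv_re, one_div] using h1
    rw [hns] at this
    have hns0' : Complex.normSq w ≠ 0 := hns ▸ hns0
    field_simp at this
    exact this
  have him2 : z.im ^ 2 = w.im ^ 2 := by
    have := hns
    simp only [Complex.normSq_apply, hre] at this
    nlinarith [this]
  rcases sq_eq_sq_iff_eq_or_eq_neg.mp him2 with him | him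
  · exact Complex.ext hre him
  · -- z = conj w
    have hconj : z = (starRingEnd ℂ) w := by
      apply Complex.ext <;> simp [hre, him]
    have hrepow : (z ^ (n - 1)).re = (w ^ (n - 1)).re := by
      rw [hconj, ← map_pow, Complex.conj_re]
    rw [hrepow] at h3
    have him' : z.im = w.im := by linarith
    exact Complex.ext hre him'

lemma F_imm (n : ℕ) (hn : 3 ≤ n) : ∀ z : ℂ, z ≠ 0 →
    Function.Injective (fderiv ℝ (F n) z) := by
  intro z hz
  have hns0 : Complex.normSq z ≠ 0 := (Complex.normSq_pos.2 hz).ne'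
  have hn1 : ((n : ℝ) - 1) ≠ 0 := by
    have : (3:ℝ) ≤ (n:ℝ) := by exact_mod_cast hn
    linarith
  -- first component
  have d1c : HasDerivAt (fun w : ℂ => -(1/w)) ((z^2)⁻¹) z := by
    simpa [one_div] using (hasDerivAt_inv hz).fun_neg
  have h1 : HasFDerivAt (fun w : ℂ => (-(1/w)).re)
      (Complex.reCLM.comp (((1 : ℂ →L[ℂ] ℂ).smulRight ((z^2)⁻¹)).restrictScalars ℝ)) z :=
    Complex.reCLM.hasFDerivAt.comp z (d1c.hasFDerivAt.restrictScalars ℝ)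
  -- second component
  have dns : HasFDerivAt (fun w : ℂ => Complex.normSq w)
      ((z.re • Complex.reCLM + z.re • Complex.reCLM) +
        (z.im • Complex.imCLM + z.im • Complex.imCLM)) z := by
    have h := ((Complex.reCLM.hasFDerivAt (x := z)).mul (Complex.reCLM.hasFDerivAt (x := z))).add
      ((Complex.imCLM.hasFDerivAt (x := z)).mul (Complex.imCLM.hasFDerivAt (x := z)))
    have e : (⇑Complex.reCLM * ⇑Complex.reCLM + ⇑Complex.imCLM * ⇑Complex.imCLM) =
        fun w : ℂ => Complex.normSq w := by
      funext w; simp [Complex.normSq_apply]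
    rw [e] at h
    exact h
  have h2 : HasFDerivAt (fun w : ℂ => Real.log ‖w‖)
      ((2:ℝ)⁻¹ • ((Complex.normSq z)⁻¹ • ((z.re • Complex.reCLM + z.re • Complex.reCLM) +
        (z.im • Complex.imCLM + z.im • Complex.imCLM)))) z := by
    have heq : (fun w : ℂ => Real.log ‖w‖) =
        fun w => Real.log (Complex.normSq w) * (2:ℝ)⁻¹ := funext fun w => by
      rw [Complex.norm_def, Real.log_sqrt (Complex.normSq_nonneg w), div_eq_mul_inv]
    rw [heq]
    simpa using ((Real.hasDerivAt_log hns0).comp_hasFDerivAt z dns).mul_const (2:ℝ)⁻¹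
  -- third component
  have dpow : HasDerivAt (fun w : ℂ => w ^ (n-1)) ((n-1 : ℕ) * z ^ (n-1-1)) z :=
    hasDerivAt_pow (n-1) z
  have h3 : HasFDerivAt (fun w : ℂ => (w ^ (n-1)).re / ((n:ℝ)-1) - w.im)
      ((((n:ℝ)-1)⁻¹ • (Complex.reCLM.comp
          (((1 : ℂ →L[ℂ] ℂ).smulRight ((n-1 : ℕ) * z ^ (n-1-1))).restrictScalars ℝ)))
        - Complex.imCLM) z := by
    have h := ((Complex.reCLM.hasFDerivAt.comp z
        (dpow.hasFDerivAt.restrictScalars ℝ)).mul_const (((n:ℝ)-1)⁻¹)).sub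
      Complex.imCLM.hasFDerivAt
    have e : ((fun y => (⇑Complex.reCLM ∘ fun w : ℂ => w ^ (n - 1)) y * ((n:ℝ) - 1)⁻¹) -
        ⇑Complex.imCLM) = fun w : ℂ => (w ^ (n-1)).re / ((n:ℝ)-1) - w.im := by
      funext w; simp [div_eq_mul_inv]
    rw [e] at h
    exact h
  have hD : HasFDerivAt (F n)
      ((Complex.reCLM.comp (((1 : ℂ →L[ℂ] ℂ).smulRight ((z^2)⁻¹)).restrictScalars ℝ)).prod
        (((2:ℝ)⁻¹ • ((Complex.normSq z)⁻¹ • ((z.re • Complex.reCLM + z.re • Complex.reCLM) +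
          (z.im • Complex.imCLM + z.im • Complex.imCLM)))).prod
        ((((n:ℝ)-1)⁻¹ • (Complex.reCLM.comp
            (((1 : ℂ →L[ℂ] ℂ).smulRight ((n-1 : ℕ) * z ^ (n-1-1))).restrictScalars ℝ)))
          - Complex.imCLM))) z := h1.prodMk (h2.prodMk h3)
  rw [hD.fderiv]
  rw [injective_iff_map_eq_zero]
  intro v hv
  simp only [ContinuousLinearMap.prod_apply, ContinuousLinearMap.coe_comp',
    Function.comp_apply, ContinuousLinearMap.coe_restrictScalars',
    ContinuousLinearMap.smulRight_apply, ContinuousLinearMap.one_apply,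
    ContinuousLinearMap.sub_apply,
    ContinuousLinearMap.smul_apply, ContinuousLinearMap.add_apply,
    Complex.reCLM_apply, Complex.imCLM_apply, smul_eq_mul,
    Prod.ext_iff, Prod.fst_zero, Prod.snd_zero] at hv
  obtain ⟨e1, e2, e3⟩ := hv
  set x := z.re with hx
  set y := z.im with hy
  set a := v.re with ha
  set b := v.im with hb
  have hnc : x*x + y*y ≠ 0 := by simpa [Complex.normSq_apply] using hns0
  have E2 : x*a + y*b = 0 := by
    rcases mul_eq_zero.mp e2 with h | h
    · norm_num at h
    rcases mul_eq_zero.mp h with h | h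
    · exact absurd (inv_eq_zero.mp h) hns0
    · linarith
  have E1 : a*(x*x) - a*(y*y) + 2*(x*y)*b = 0 := by
    have h := e1
    rw [Complex.mul_re, Complex.inv_re, Complex.inv_im] at h
    simp only [pow_two, Complex.mul_re, Complex.mul_im, Complex.normSq_apply] at h
    rw [← hx, ← hy, ← ha, ← hb] at h
    have hd : (x*x - y*y)*(x*x - y*y) + (x*y + y*x)*(x*y + y*x) ≠ 0 := by
      have heq : (x*x - y*y)*(x*x - y*y) + (x*y + y*x)*(x*y + y*x) = (x*x+y*y)*(x*x+y*y) := by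
        ring
      rw [heq]
      exact mul_ne_zero hnc hnc
    field_simp [hd] at h
    rcases div_eq_zero_iff.mp h with h | h
    · linear_combination h
    · have : (x*x+y*y)*(x*x+y*y) = 0 := by linear_combination h
      exact absurd this (mul_ne_zero hnc hnc)
  have ha0 : a = 0 := by
    have hmul : a * (x*x + y*y) = 0 := by linear_combination (-1) * E1 + 2*x*E2
    rcases mul_eq_zero.mp hmul with h | h
    · exact h
    · exact absurd h hnc
  have hyb : y * b = 0 := by
    have := E2
    rw [ha0] at this
    linarith
  rcases mul_eq_zero.mp hyb with hy0 | hb0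
  · -- z is real
    have hzx : z = (x:ℂ) := by
      apply Complex.ext
      · simp [hx]
      · simpa using hy0
    have hb0 : b = 0 := by
      rw [hzx] at e3
      rw [← Complex.ofReal_pow] at e3
      rw [Complex.mul_re] at e3
      simp only [Complex.mul_re, Complex.mul_im, Complex.natCast_re, Complex.natCast_im,
        Complex.ofReal_re, Complex.ofReal_im, mul_zero, zero_mul, sub_zero, add_zero,
        mul_comm] at e3
      rw [← ha, ha0] at e3
      simpa using e3
    apply Complex.ext <;> simp [← ha, ← hb, ha0, hb0]
  · apply Complex.ext <;> simp [← ha, ← hb, ha0, hb0]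

lemma F_prop (n : ℕ) (hn : 3 ≤ n) : ∀ K : Set (ℝ × ℝ × ℝ), IsCompact K →
    IsCompact {z : ℂ | z ≠ 0 ∧ F n z ∈ K} := by
  intro K hK
  obtain ⟨M, hM⟩ := hK.isBounded.exists_norm_le
  set A : Set ℂ := {w : ℂ | Real.exp (-M) ≤ ‖w‖} ∩ Metric.closedBall 0 (Real.exp M)
    with hA_def
  have hA_pos : ∀ w ∈ A, w ≠ 0 := by
    intro w hw hw0
    have := hw.1
    rw [hw0] at this
    simp at this
    linarith [Real.exp_pos (-M)]
  have hAclosed : IsClosed A :=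
    (isClosed_le continuous_const continuous_norm).inter Metric.isClosed_closedBall
  have hAcompact : IsCompact A :=
    (isCompact_closedBall 0 (Real.exp M)).inter_left
      (isClosed_le continuous_const continuous_norm)
  have hcont : ContinuousOn (F n) A := by
    apply ContinuousOn.prodMk
    · exact Complex.continuous_re.comp_continuousOn
        ((continuousOn_const.div continuousOn_id fun w hw => hA_pos w hw).neg)
    · apply ContinuousOn.prodMk
      · intro w hw
        exact ((Real.continuousAt_log (norm_ne_zero_iff.mpr (hA_pos w hw))).comp
          continuous_norm.continuousAt).continuousWithinAt
      · exact (((Complex.continuous_re.comp (continuous_pow (n-1))).div_const _).sub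
          Complex.continuous_im).continuousOn
  have hSeq : {z : ℂ | z ≠ 0 ∧ F n z ∈ K} = A ∩ (F n) ⁻¹' K := by
    ext z
    simp only [Set.mem_setOf_eq, Set.mem_inter_iff, Set.mem_preimage]
    constructor
    · rintro ⟨hz0, hzK⟩
      refine ⟨⟨?_, ?_⟩, hzK⟩
      · have h1 : |Real.log ‖z‖| ≤ M := by
          calc |Real.log ‖z‖| = ‖(F n z).2.1‖ := by simp [F]
            _ ≤ ‖(F n z).2‖ := norm_fst_le _
            _ ≤ ‖F n z‖ := norm_snd_le _
            _ ≤ M := hM _ hzK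
        have h2 : -M ≤ Real.log ‖z‖ := neg_le_of_abs_le h1
        calc Real.exp (-M) ≤ Real.exp (Real.log ‖z‖) := Real.exp_le_exp.2 h2
          _ = ‖z‖ := Real.exp_log (norm_pos_iff.mpr hz0)
      · have h1 : |Real.log ‖z‖| ≤ M := by
          calc |Real.log ‖z‖| = ‖(F n z).2.1‖ := by simp [F]
            _ ≤ ‖(F n z).2‖ := norm_fst_le _
            _ ≤ ‖F n z‖ := norm_snd_le _
            _ ≤ M := hM _ hzK
        have h2 : Real.log ‖z‖ ≤ M := le_of_abs_le h1
        rw [Metric.mem_closedBall, dist_zero_right]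
        calc ‖z‖ = Real.exp (Real.log ‖z‖) :=
              (Real.exp_log (norm_pos_iff.mpr hz0)).symm
          _ ≤ Real.exp M := Real.exp_le_exp.2 h2
    · rintro ⟨hzA, hzK⟩
      exact ⟨hA_pos z hzA, hzK⟩
  rw [hSeq]
  exact (hAcompact.of_isClosed_subset
    (hcont.preimage_isClosed_of_isClosed hAclosed hK.isClosed)
    Set.inter_subset_left)

/-- The sphere with one `(0,1,2)` end at `0` and one `(0,1,n)` end at `∞`:
`f(z) = (Re(-1/z), log|z|, Re(z^{n-1})/(n-1) - Im z)` is injective, an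
immersion, and proper on `ℂ ∖ {0}`. -/
theorem stmt_3 (n : ℕ) (hn : 3 ≤ n) (f : ℂ → ℝ × ℝ × ℝ)
    (hf : ∀ z, f z =
      ((-(1 / z)).re, Real.log ‖z‖,
        (z ^ (n - 1)).re / ((n : ℝ) - 1) - z.im)) :
    Set.InjOn f {z : ℂ | z ≠ 0} ∧
    (∀ z : ℂ, z ≠ 0 → Function.Injective (fderiv ℝ f z)) ∧
    (∀ K : Set (ℝ × ℝ × ℝ), IsCompact K →
      IsCompact {z : ℂ | z ≠ 0 ∧ f z ∈ K}) := by
  have hfe : f = F n := funext hf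
  subst hfe
  exact ⟨F_inj n hn, F_imm n hn, F_prop n hn⟩
end

section
/- Define f : ℂ∖{0} → ℝ³ by f(z) = (Re(−z²/2 − z^{−2}/2), Im(1/z), Re z). Then f is injective and proper (the preimage of every compact subset of ℝ³ is compact), i.e. f is a proper embedding of the twice-punctured sphere with two ends of type (0,2,3) at 0 and ∞. -/
open Complex Filter Function

private lemma reA_aux (z : ℂ) (hz : z ≠ 0) :
    (-(z ^ 2) / 2 - z ^ (-2 : ℤ) / 2).re
      = (z.im ^ 2 - z.re ^ 2) * (1 + (Complex.normSq z ^ 2)⁻¹) / 2 := by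
  have h2 : z ^ (-2 : ℤ) = (z ^ 2)⁻¹ := by rw [zpow_neg, zpow_ofNat]
  have hns : (0:ℝ) < Complex.normSq z := Complex.normSq_pos.mpr hz
  have half : ∀ w : ℂ, (w / 2).re = w.re / 2 := by
    intro w
    simp [Complex.div_re, Complex.normSq_apply]
  have hre2 : (z ^ 2).re = z.re ^ 2 - z.im ^ 2 := by
    rw [pow_two, Complex.mul_re]; ring
  have hinv : ((z ^ 2)⁻¹).re = (z.re ^ 2 - z.im ^ 2) / (Complex.normSq z) ^ 2 := by
    rw [Complex.inv_re, hre2, map_pow]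
  rw [h2, Complex.sub_re, half, half, Complex.neg_re, hre2, hinv]
  field_simp
  ring

private lemma bound_aux (M x a : ℝ) (hM1 : 1 ≤ M)
    (hrpos : 0 < x ^ 2 + a ^ 2)
    (e1 : |(a ^ 2 - x ^ 2) * (1 + ((x ^ 2 + a ^ 2) ^ 2)⁻¹) / 2| ≤ M)
    (e2 : |-a / (x ^ 2 + a ^ 2)| ≤ M)
    (e3 : |x| ≤ M) :
    1 ≤ (2 * M ^ 2 + 2 * M) * (x ^ 2 + a ^ 2) ∧
      x ^ 2 + a ^ 2 ≤ 2 * M ^ 2 + 2 * M := by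
  have hMpos : (0:ℝ) < M := lt_of_lt_of_le one_pos hM1
  set r := x ^ 2 + a ^ 2 with hrdef
  have hinv : 0 < (r ^ 2)⁻¹ := by positivity
  have hinvr : (r ^ 2)⁻¹ * r ^ 2 = 1 := inv_mul_cancel₀ (by positivity)
  have hax : |a| ≤ M * r := by
    rw [abs_div, abs_neg, abs_of_pos hrpos] at e2
    have h := mul_le_mul_of_nonneg_right e2 hrpos.le
    rwa [div_mul_cancel₀ _ hrpos.ne'] at h
  have ha2 : a ^ 2 ≤ M ^ 2 * r ^ 2 := by
    have h := pow_le_pow_left₀ (abs_nonneg a) hax 2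
    rw [_root_.sq_abs, mul_pow] at h
    exact h
  have he1 := abs_le.1 e1
  have hd1 : (a ^ 2 - x ^ 2) * (1 + (r ^ 2)⁻¹) ≤ 2 * M := by linarith [he1.2]
  have hd2 : (x ^ 2 - a ^ 2) * (1 + (r ^ 2)⁻¹) ≤ 2 * M := by
    have hneg : (x ^ 2 - a ^ 2) * (1 + (r ^ 2)⁻¹)
        = -((a ^ 2 - x ^ 2) * (1 + (r ^ 2)⁻¹)) := by ring
    rw [hneg]
    linarith [he1.1]
  have hx2 : x ^ 2 ≤ M ^ 2 := by
    have h := pow_le_pow_left₀ (abs_nonneg x) e3 2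
    rwa [_root_.sq_abs] at h
  constructor
  · have hxa : x ^ 2 - a ^ 2 ≤ 2 * M * r ^ 2 := by
      rcases le_or_gt (x ^ 2 - a ^ 2) 0 with h | h
      · nlinarith [hrpos, hMpos]
      · have h5 : (x ^ 2 - a ^ 2) * (r ^ 2)⁻¹ ≤ 2 * M := by
          have hexp : (x ^ 2 - a ^ 2) * (1 + (r ^ 2)⁻¹)
              = (x ^ 2 - a ^ 2) + (x ^ 2 - a ^ 2) * (r ^ 2)⁻¹ := by ring
          rw [hexp] at hd2
          linarith
        have h6 := mul_le_mul_of_nonneg_right h5 (sq_nonneg r)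
        rwa [mul_assoc, hinvr, mul_one] at h6
    have hrc : r ≤ (2 * M ^ 2 + 2 * M) * r ^ 2 := by nlinarith [hxa, ha2]
    by_contra hcon
    push_neg at hcon
    have h7 : (2 * M ^ 2 + 2 * M) * r * r < 1 * r := mul_lt_mul_of_pos_right hcon hrpos
    nlinarith [h7, hrc]
  · have haup : a ^ 2 ≤ x ^ 2 + 2 * M := by
      rcases le_or_gt (a ^ 2 - x ^ 2) 0 with h | h
      · linarith [hMpos]
      · have hexp : (a ^ 2 - x ^ 2) * (1 + (r ^ 2)⁻¹)
            = (a ^ 2 - x ^ 2) + (a ^ 2 - x ^ 2) * (r ^ 2)⁻¹ := by ring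
        rw [hexp] at hd1
        nlinarith [mul_pos h hinv]
    linarith [hx2, haup]

/-- The twice-punctured sphere with two ends of type `(0,2,3)`:
`f(z) = (Re(-z²/2 - z⁻²/2), Im(1/z), Re z)` is injective and proper on
`ℂ ∖ {0}`. -/
theorem stmt_4 (f : ℂ → ℝ × ℝ × ℝ)
    (hf : ∀ z, f z =
      ((-(z ^ 2) / 2 - z ^ (-2 : ℤ) / 2).re, (1 / z).im, z.re)) :
    Set.InjOn f {z : ℂ | z ≠ 0} ∧
    (∀ K : Set (ℝ × ℝ × ℝ), IsCompact K →
      IsCompact {z : ℂ | z ≠ 0 ∧ f z ∈ K}) := by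
  have hA : ∀ z : ℂ, z ≠ 0 →
      (f z).1 = (z.im ^ 2 - z.re ^ 2) * (1 + (normSq z ^ 2)⁻¹) / 2 := by
    intro z hz; rw [hf]; exact reA_aux z hz
  have hB : ∀ z : ℂ, (f z).2.1 = -z.im / normSq z := by
    intro z; rw [hf]; simp [Complex.inv_im]
  have hC : ∀ z : ℂ, (f z).2.2 = z.re := by intro z; rw [hf]
  constructor
  · rintro z hz w hw hzw
    simp only [Set.mem_setOf_eq] at hz hw
    have hx : w.re = z.re := by
      have h := congrArg (fun p => p.2.2) hzw
      simp only [hC] at h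
      exact h.symm
    set x := z.re with hxdef
    set a := z.im with hadef
    set b := w.im with hbdef
    have hr : normSq z = x ^ 2 + a ^ 2 := by rw [Complex.normSq_apply]; ring
    have hs : normSq w = x ^ 2 + b ^ 2 := by rw [Complex.normSq_apply, hx]; ring
    have hrpos : 0 < x ^ 2 + a ^ 2 := hr ▸ normSq_pos.mpr hz
    have hspos : 0 < x ^ 2 + b ^ 2 := hs ▸ normSq_pos.mpr hw
    have h2 : -a / (x ^ 2 + a ^ 2) = -b / (x ^ 2 + b ^ 2) := by
      have h := congrArg (fun p => p.2.1) hzw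
      simp only [hB, hr, hs] at h
      exact h
    have h2' : a * (x ^ 2 + b ^ 2) = b * (x ^ 2 + a ^ 2) := by
      field_simp at h2
      linarith [h2]
    have key : (a - b) * (x ^ 2 - a * b) = 0 := by linear_combination h2'
    have hab : a = b := by
      by_contra hne
      have hxab : x ^ 2 = a * b := by
        rcases mul_eq_zero.1 key with h | h
        · exact absurd (sub_eq_zero.1 h) hne
        · linarith [sub_eq_zero.1 h]
      have ha0 : a ≠ 0 := by
        rintro h0
        rw [h0] at hxab hrpos
        nlinarith [hxab, hrpos]
      have hb0 : b ≠ 0 := by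
        rintro h0
        rw [h0] at hxab hspos
        nlinarith [hxab, hspos]
      have habpos : 0 < a * b :=
        lt_of_le_of_ne (by nlinarith [sq_nonneg x]) (Ne.symm (mul_ne_zero ha0 hb0))
      have h1 : (a ^ 2 - x ^ 2) * (1 + ((x ^ 2 + a ^ 2) ^ 2)⁻¹) / 2
          = (b ^ 2 - x ^ 2) * (1 + ((x ^ 2 + b ^ 2) ^ 2)⁻¹) / 2 := by
        have h := congrArg (fun p => p.1) hzw
        simp only [hA z hz, hA w hw, hr, hs, hx] at h
        exact h
      set u := ((x ^ 2 + a ^ 2) ^ 2)⁻¹ with hudef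
      set v := ((x ^ 2 + b ^ 2) ^ 2)⁻¹ with hvdef
      have hu0 : 0 < u := by rw [hudef]; positivity
      have hv0 : 0 < v := by rw [hvdef]; positivity
      have hE : (a ^ 2 - x ^ 2) * (1 + u) = (b ^ 2 - x ^ 2) * (1 + v) := by
        linear_combination 2 * h1
      have h0 : (a - b) * (a * (1 + u) + b * (1 + v)) = 0 := by
        linear_combination hE + (u - v) * hxab
      have hsum : a * (1 + u) + b * (1 + v) = 0 :=
        (mul_eq_zero.1 h0).resolve_left (sub_ne_zero.mpr hne)
      have hquad : a ^ 2 * (1 + u) + (a * b) * (1 + v) = 0 := by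
        linear_combination a * hsum
      have ha2 : 0 < a ^ 2 := by positivity
      nlinarith [hquad, ha2, habpos, hu0, hv0, mul_pos ha2 hu0, mul_pos habpos hv0]
    exact Complex.ext hx.symm hab
  · intro K hK
    obtain ⟨R0, hR0⟩ := hK.isBounded.subset_closedBall 0
    set M := max R0 1 with hMdef
    have hM1 : (1:ℝ) ≤ M := le_max_right _ _
    have hMpos : 0 < M := lt_of_lt_of_le one_pos hM1
    have hcpos : 0 < 2 * M ^ 2 + 2 * M := by positivity
    have hbound : ∀ p ∈ K, |p.1| ≤ M ∧ |p.2.1| ≤ M ∧ |p.2.2| ≤ M := by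
      intro p hp
      have hnorm : ‖p‖ ≤ M :=
        le_trans (le_trans (mem_closedBall_zero_iff.1 (hR0 hp)) (le_max_left _ _)) le_rfl
      refine ⟨?_, ?_, ?_⟩
      · exact le_trans (by rw [← Real.norm_eq_abs]; exact norm_fst_le p) hnorm
      · refine le_trans ?_ hnorm
        rw [← Real.norm_eq_abs]
        exact le_trans (norm_fst_le p.2) (norm_snd_le p)
      · refine le_trans ?_ hnorm
        rw [← Real.norm_eq_abs]
        exact le_trans (norm_snd_le p.2) (norm_snd_le p)
    have hlow : ∀ z : ℂ, z ≠ 0 → f z ∈ K → 1 ≤ (2 * M ^ 2 + 2 * M) * normSq z ∧ normSq z ≤ 2 * M ^ 2 + 2 * M := by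
      intro z hz hzK
      obtain ⟨e1, e2, e3⟩ := hbound _ hzK
      rw [hA z hz] at e1
      rw [hB z] at e2
      rw [hC z] at e3
      have hr : normSq z = z.re ^ 2 + z.im ^ 2 := by rw [Complex.normSq_apply]; ring
      have hrpos : 0 < z.re ^ 2 + z.im ^ 2 := hr ▸ normSq_pos.mpr hz
      rw [hr] at e1 e2 ⊢
      exact bound_aux M z.re z.im hM1 hrpos e1 e2 e3
    have hTsub : {z : ℂ | 1 ≤ (2 * M ^ 2 + 2 * M) * normSq z} ⊆ {z : ℂ | z ≠ 0} := by
      intro z hz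
      simp only [Set.mem_setOf_eq] at hz ⊢
      rintro rfl
      rw [map_zero, mul_zero] at hz
      linarith
    have hset : {z : ℂ | z ≠ 0 ∧ f z ∈ K}
        = {z : ℂ | 1 ≤ (2 * M ^ 2 + 2 * M) * normSq z} ∩ f ⁻¹' K := by
      ext z
      simp only [Set.mem_setOf_eq, Set.mem_inter_iff, Set.mem_preimage]
      constructor
      · rintro ⟨hz, hzK⟩
        exact ⟨(hlow z hz hzK).1, hzK⟩
      · rintro ⟨hz1, hzK⟩
        exact ⟨hTsub hz1, hzK⟩
    have hfc : ContinuousOn f {z : ℂ | z ≠ 0} := by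
      have hfeq : f = fun z : ℂ =>
          ((-(z ^ 2) / 2 - z ^ (-2 : ℤ) / 2).re, (1 / z).im, z.re) := funext hf
      rw [hfeq]
      have hne : ({z : ℂ | z ≠ 0} : Set ℂ) ⊆ {(0:ℂ)}ᶜ := fun z hz => hz
      apply ContinuousOn.prodMk
      · apply Complex.continuous_re.comp_continuousOn
        apply ContinuousOn.sub
        · exact (((continuous_pow 2).neg).continuousOn).div_const _
        · exact ((continuousOn_zpow₀ (-2 : ℤ)).mono hne).div_const _
      · apply ContinuousOn.prodMk
        · apply Complex.continuous_im.comp_continuousOn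
          exact continuousOn_const.div continuousOn_id fun z hz => hz
        · exact Complex.continuous_re.continuousOn
    have hTc : IsClosed {z : ℂ | 1 ≤ (2 * M ^ 2 + 2 * M) * normSq z} :=
      isClosed_le continuous_const (continuous_const.mul Complex.continuous_normSq)
    have hSclosed : IsClosed ({z : ℂ | 1 ≤ (2 * M ^ 2 + 2 * M) * normSq z} ∩ f ⁻¹' K) :=
      (hfc.mono hTsub).preimage_isClosed_of_isClosed hTc hK.isClosed
    rw [hset]
    apply (isCompact_closedBall (0:ℂ) (Real.sqrt (2 * M ^ 2 + 2 * M))).of_isClosed_subset hSclosed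
    rintro z ⟨hz1, hz2⟩
    have hzne : z ≠ 0 := hTsub hz1
    have hle : normSq z ≤ 2 * M ^ 2 + 2 * M := (hlow z hzne hz2).2
    rw [Metric.mem_closedBall, dist_zero_right]
    have hnz : ‖z‖ = Real.sqrt (normSq z) := by
      rw [Complex.norm_def]
    rw [hnz]
    exact Real.sqrt_le_sqrt hle
end

section
/- Let n ≥ 2 be an integer and define f : ℂ → ℝ³ by f(z) = (Re z, Re(z²)/2, Re(z^{n+1})/(n+1) − Im z). Then: (1) f is injective; (2) f is an immersion, i.e. its real derivative is injective at every point of ℂ; (3) f is proper, i.e. the preimage of every compact subset of ℝ³ is compact. -/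
open Complex Filter Function

noncomputable def mCLM (c : ℂ) : ℂ →L[ℝ] ℂ := c • ContinuousLinearMap.id ℝ ℂ

lemma hpow (m : ℕ) (z : ℂ) : HasFDerivAt (fun w : ℂ => w ^ m) (mCLM ((m : ℂ) * z ^ (m-1))) z := by
  have h := ((hasDerivAt_pow m z).hasFDerivAt).restrictScalars ℝ
  refine h.congr_fderiv ?_
  ext v
  simp [mCLM, mul_comm]

noncomputable def Lmap (n : ℕ) (z : ℂ) : ℂ →L[ℝ] ℝ × ℝ × ℝ :=
  Complex.reCLM.prod
    (((2:ℝ)⁻¹ • Complex.reCLM.comp (mCLM ((2:ℂ) * z))).prod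
      ((((n:ℝ)+1)⁻¹ • Complex.reCLM.comp (mCLM (((n:ℕ)+1 : ℂ) * z ^ n))) - Complex.imCLM))

lemma Lmap_apply (n : ℕ) (z v : ℂ) :
    Lmap n z v = ((v.re : ℝ),
      (2:ℝ)⁻¹ * ((2:ℂ) * z * v).re,
      ((n:ℝ)+1)⁻¹ * ((((n:ℕ)+1 : ℂ)) * z ^ n * v).re - v.im) := by
  simp [Lmap, mCLM]

lemma hL (n : ℕ) (z : ℂ) :
    HasFDerivAt (fun z : ℂ => ((z.re, (z ^ 2).re / 2, (z ^ (n + 1)).re / ((n : ℝ) + 1) - z.im) : ℝ × ℝ × ℝ)) (Lmap n z) z := by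
  have h1 : HasFDerivAt (fun z : ℂ => z.re) (Complex.reCLM : ℂ →L[ℝ] ℝ) z := Complex.reCLM.hasFDerivAt
  have h2 : HasFDerivAt (fun z : ℂ => (z^2).re / 2)
      ((2:ℝ)⁻¹ • Complex.reCLM.comp (mCLM ((2:ℂ) * z))) z := by
    have h := (Complex.reCLM.hasFDerivAt.comp z (hpow 2 z)).const_smul ((2:ℝ)⁻¹)
    have heq : (fun z : ℂ => (z^2).re / 2) = fun z : ℂ => (2:ℝ)⁻¹ • (Complex.reCLM ∘ fun w : ℂ => w ^ 2) z := by
      funext w; simp [div_eq_inv_mul]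
    rw [heq]
    refine h.congr_fderiv ?_
    norm_num
  have h3 : HasFDerivAt (fun z : ℂ => (z^(n+1)).re / ((n:ℝ)+1) - z.im)
      ((((n:ℝ)+1)⁻¹ • Complex.reCLM.comp (mCLM (((n:ℕ)+1 : ℂ) * z ^ n))) - Complex.imCLM) z := by
    have h := ((Complex.reCLM.hasFDerivAt.comp z (hpow (n+1) z)).const_smul (((n:ℝ)+1)⁻¹)).sub Complex.imCLM.hasFDerivAt
    have heq : (fun z : ℂ => (z^(n+1)).re / ((n:ℝ)+1) - z.im)
        = fun z : ℂ => ((n:ℝ)+1)⁻¹ • (Complex.reCLM ∘ fun w : ℂ => w ^ (n+1)) z - Complex.imCLM z := by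
      funext w; simp [div_eq_inv_mul]
    rw [heq]
    refine h.congr_fderiv ?_
    push_cast
    ring_nf
  exact h1.prodMk (h2.prodMk h3)

/-- The embedded sphere with a single end of type `(2,3,n+1)`:
`f(z) = (Re z, Re(z²)/2, Re(z^{n+1})/(n+1) - Im z)` is injective, an
immersion, and proper on `ℂ`. -/
theorem stmt_5 (n : ℕ) (hn : 2 ≤ n) (f : ℂ → ℝ × ℝ × ℝ)
    (hf : ∀ z, f z =
      (z.re, (z ^ 2).re / 2, (z ^ (n + 1)).re / ((n : ℝ) + 1) - z.im)) :
    Function.Injective f ∧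
    (∀ z : ℂ, Function.Injective (fderiv ℝ f z)) ∧
    (∀ K : Set (ℝ × ℝ × ℝ), IsCompact K → IsCompact (f ⁻¹' K)) := by
  have hfe : f = fun z : ℂ => ((z.re, (z ^ 2).re / 2, (z ^ (n + 1)).re / ((n : ℝ) + 1) - z.im) : ℝ × ℝ × ℝ) :=
    funext hf
  have hn1 : ((n : ℝ) + 1) ≠ 0 := by positivity
  refine ⟨?_, ?_, ?_⟩
  · -- injectivity
    intro z w h
    rw [hf z, hf w, Prod.mk.injEq, Prod.mk.injEq] at h
    obtain ⟨h1, h2, h3⟩ := h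
    have hz2 : (z^2).re = z.re * z.re - z.im * z.im := by rw [sq, Complex.mul_re]
    have hw2 : (w^2).re = w.re * w.re - w.im * w.im := by rw [sq, Complex.mul_re]
    have h2' : z.im * z.im = w.im * w.im := by
      have h2'' : (z^2).re = (w^2).re := by linarith [h2]
      rw [hz2, hw2, h1] at h2''
      linarith
    rcases mul_self_eq_mul_self_iff.mp h2' with him | him
    · exact Complex.ext h1 him
    · -- z.im = -w.im, so w = conj z
      have hw : w = (starRingEnd ℂ) z := by
        apply Complex.ext
        · simpa using h1.symm
        · simp [Complex.conj_im]; linarith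
      have hre : (w^(n+1)).re = (z^(n+1)).re := by
        rw [hw]
        rw [show ((starRingEnd ℂ) z) ^ (n+1) = (starRingEnd ℂ) (z ^ (n+1)) from (map_pow _ _ _).symm]
        exact Complex.conj_re _
      rw [hre] at h3
      have : z.im = w.im := by linarith
      exact Complex.ext h1 this
  · -- immersion
    intro z
    have hd := hL n z
    rw [← hfe] at hd
    rw [hd.fderiv]
    have key : ∀ v : ℂ, Lmap n z v = 0 → v = 0 := by
      intro v hv
      rw [Lmap_apply] at hv
      rw [show ((0 : ℝ × ℝ × ℝ)) = ((0:ℝ), (0:ℝ), (0:ℝ)) from rfl, Prod.mk.injEq, Prod.mk.injEq] at hv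
      obtain ⟨e1, e2, e3⟩ := hv
      simp only [Complex.mul_re, Complex.mul_im, Complex.add_re, Complex.add_im,
        Complex.natCast_re, Complex.natCast_im, Complex.one_re, Complex.one_im, e1] at e2 e3
      by_cases hvim : v.im = 0
      · exact Complex.ext e1 hvim
      · exfalso
        have hzim : z.im = 0 := by
          simp at e2
          rcases e2 with h | h
          · exact h
          · exact absurd h hvim
        have hzn : (z^n).im = 0 := by
          have hz : z = ((z.re : ℝ) : ℂ) := Complex.ext rfl (by simp [hzim])
          rw [hz]
          rw [show ((z.re : ℂ)) ^ n = ((z.re ^ n : ℝ) : ℂ) from (Complex.ofReal_pow _ _).symm]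
          exact Complex.ofReal_im _
        rw [hzn] at e3
        apply hvim
        have hpos : (0:ℝ) < (n:ℝ) + 1 := by positivity
        have := e3
        field_simp at this
        linarith
    intro v w h
    have : Lmap n z (v - w) = 0 := by
      rw [map_sub, h, sub_self]
    exact sub_eq_zero.mp (key _ this)
  · -- properness
    intro K hK
    have hcont : Continuous f := by
      rw [hfe]
      exact Complex.continuous_re.prodMk
        (((Complex.continuous_re.comp (continuous_pow 2)).div_const 2).prodMk
          (((Complex.continuous_re.comp (continuous_pow (n+1))).div_const _).sub
            Complex.continuous_im))
    obtain ⟨C, hC⟩ := hK.isBounded.exists_norm_le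
    set C' := max C 0 with hC'
    have hC'0 : 0 ≤ C' := le_max_right _ _
    have hCC : ∀ p ∈ K, ‖p‖ ≤ C' := fun p hp => le_trans (hC p hp) (le_max_left _ _)
    set R := Real.sqrt (2 * C' ^ 2 + 2 * C') with hR
    apply IsCompact.of_isClosed_subset (isCompact_closedBall (0 : ℂ) R)
      (hK.isClosed.preimage hcont)
    intro z hz
    have hfz : ‖f z‖ ≤ C' := hCC _ hz
    have h1 : |z.re| ≤ C' := by
      have := le_trans (norm_fst_le (f z)) hfz
      rwa [hf z] at this
    have h2 : |(z^2).re / 2| ≤ C' := by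
      have := le_trans (le_trans (norm_fst_le (f z).2) (norm_snd_le (f z))) hfz
      rwa [hf z] at this
    have hz2 : (z^2).re = z.re * z.re - z.im * z.im := by rw [sq, Complex.mul_re]
    have him : z.im * z.im ≤ C' ^ 2 + 2 * C' := by
      have ha := abs_le.mp h1
      have hb := abs_le.mp h2
      nlinarith [hb.1, hb.2, ha.1, ha.2]
    have hnsq : ‖z‖ ^ 2 ≤ 2 * C' ^ 2 + 2 * C' := by
      rw [Complex.sq_norm, Complex.normSq_apply]
      have ha := abs_le.mp h1
      nlinarith [ha.1, ha.2]
    have : ‖z‖ ≤ R := by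
      have h := Real.sqrt_le_sqrt hnsq
      rwa [Real.sqrt_sq (norm_nonneg z)] at h
    simpa [Metric.mem_closedBall, dist_zero_right] using this
end

section
/- Let n ≥ 1 be an integer and define f : ℂ → ℝ³ by f(z) = (−Im z, −(Re z)(Im z), Re(z^{2n+1})/(2n+1) + Re z). Equivalently, writing z = x+iy, f(x,y) = (−y, −xy, (x²+y²)^{n+1/2} cos((2n+1)·arctan(y/x))/(2n+1) + x). Then: (1) f is injective; (2) f is an immersion, i.e. its real derivative is injective at every point of ℂ; (3) f is proper, i.e. the preimage of every compact subset of ℝ³ is compact. -/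
open Complex Filter Function

theorem aux_pow_sub (x y : ℂ) (M : ℝ) (m : ℕ) (hx : ‖x‖ ≤ M) (hy : ‖y‖ ≤ M) :
    ‖x ^ m - y ^ m‖ ≤ m * M ^ (m - 1) * ‖x - y‖ := by
  have hM : 0 ≤ M := le_trans (norm_nonneg x) hx
  rw [← geom_sum₂_mul, norm_mul]
  gcongr ?_ * _
  calc ‖∑ i ∈ Finset.range m, x ^ i * y ^ (m - 1 - i)‖
      ≤ ∑ i ∈ Finset.range m, ‖x ^ i * y ^ (m - 1 - i)‖ := norm_sum_le _ _
    _ ≤ ∑ i ∈ Finset.range m, M ^ (m - 1) := by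
        apply Finset.sum_le_sum
        intro i hi
        rw [norm_mul, norm_pow, norm_pow]
        calc ‖x‖ ^ i * ‖y‖ ^ (m - 1 - i) ≤ M ^ i * M ^ (m - 1 - i) := by
              have h0 : (0:ℝ) ≤ ‖x‖ := norm_nonneg _
              have h0' : (0:ℝ) ≤ ‖y‖ := norm_nonneg _
              gcongr
          _ = M ^ (m - 1) := by
              rw [← pow_add]
              congr 1
              have := Finset.mem_range.mp hi
              omega
    _ = m * M ^ (m - 1) := by rw [Finset.sum_const, Finset.card_range, nsmul_eq_mul]

theorem aux_bound (n : ℕ) (hn : 1 ≤ n) (R : ℝ) (hR : 0 ≤ R) (z : ℂ)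
    (him : |z.im| ≤ R)
    (hth : |(z ^ (2 * n + 1)).re / (2 * (n : ℝ) + 1) + z.re| ≤ R) :
    |z.re| ≤ (2 * (n:ℝ) + 1) * 2 ^ (2*n) * (R + 1) + (2 * (n:ℝ) + 1) * (R + 1) + R + 1 := by
  set c : ℝ := 2 * (n:ℝ) + 1 with hc
  set A : ℝ := c * 2 ^ (2*n) * (R + 1) + c * (R + 1) + R + 1 with hA
  by_contra hx
  push_neg at hx
  set X : ℝ := |z.re| with hX
  have hc1 : (1:ℝ) ≤ c := by
    have : (0:ℝ) ≤ (n:ℝ) := n.cast_nonneg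
    rw [hc]; linarith
  have h2pow : (1:ℝ) ≤ 2 ^ (2*n) := one_le_pow₀ (by norm_num)
  have hAR : R + 1 ≤ A := by
    have h1 : 0 ≤ c * 2 ^ (2*n) * (R + 1) := by positivity
    have h2 : 0 ≤ c * (R + 1) := by positivity
    rw [hA]; linarith
  have hX1 : 1 ≤ X := by linarith
  have hXR : R ≤ X := by linarith
  have hb1 : |(z ^ (2*n+1)).re| ≤ c * R + c * X := by
    have h1 : |(z ^ (2*n+1)).re / c| ≤ R + X := by
      calc |(z ^ (2*n+1)).re / c| = |(z ^ (2*n+1)).re / c + z.re - z.re| := by ring_nf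
        _ ≤ |(z ^ (2*n+1)).re / c + z.re| + |z.re| := abs_sub _ _
        _ ≤ R + X := add_le_add hth le_rfl
    have hcpos : (0:ℝ) < c := by linarith
    calc |(z ^ (2*n+1)).re| = c * |(z ^ (2*n+1)).re / c| := by
          rw [abs_div, abs_of_pos hcpos]; field_simp
        _ ≤ c * (R + X) := by gcongr
        _ = c * R + c * X := by ring
  have hzx : ‖z - (z.re:ℂ)‖ = |z.im| := by
    have h : z - (z.re:ℂ) = Complex.I * z.im := by
      apply Complex.ext <;> simp
    rw [h]
    simp [map_mul]
  have hznorm : ‖z‖ ≤ 2 * X := by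
    calc ‖z‖ ≤ |z.re| + |z.im| := Complex.norm_le_abs_re_add_abs_im z
      _ ≤ X + X := add_le_add le_rfl (le_trans him hXR)
      _ = 2 * X := by ring
  have hxnorm : ‖(z.re:ℂ)‖ ≤ 2 * X := by
    rw [Complex.norm_real, Real.norm_eq_abs]
    linarith
  have hps := aux_pow_sub z (z.re:ℂ) (2*X) (2*n+1) hznorm hxnorm
  rw [hzx] at hps
  have h2n : 2*n+1-1 = 2*n := by omega
  rw [h2n] at hps
  have hcn : ((2*n+1:ℕ):ℝ) = c := by rw [hc]; push_cast; ring
  rw [hcn] at hps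
  have hnn : (0:ℝ) ≤ c * (2*X) ^ (2*n) :=
    mul_nonneg (by linarith) (pow_nonneg (by linarith) _)
  have hps' : ‖z ^ (2*n+1) - (z.re:ℂ) ^ (2*n+1)‖ ≤ c * (2*X) ^ (2*n) * R := by
    calc ‖z ^ (2*n+1) - (z.re:ℂ) ^ (2*n+1)‖ ≤ c * (2*X) ^ (2*n) * |z.im| := hps
      _ ≤ c * (2*X) ^ (2*n) * R := mul_le_mul_of_nonneg_left him hnn
  have hlow : X ^ (2*n+1) - c * (2*X) ^ (2*n) * R ≤ |(z ^ (2*n+1)).re| := by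
    have h1 : |((z.re:ℂ) ^ (2*n+1)).re| = X ^ (2*n+1) := by
      rw [← Complex.ofReal_pow, Complex.ofReal_re, _root_.abs_pow]
    have h2 : |((z.re:ℂ) ^ (2*n+1)).re| - |(z ^ (2*n+1)).re| ≤ ‖z ^ (2*n+1) - (z.re:ℂ) ^ (2*n+1)‖ := by
      calc |((z.re:ℂ) ^ (2*n+1)).re| - |(z ^ (2*n+1)).re|
          ≤ |((z.re:ℂ) ^ (2*n+1)).re - (z ^ (2*n+1)).re| := abs_sub_abs_le_abs_sub _ _
        _ = |(((z.re:ℂ) ^ (2*n+1)) - z ^ (2*n+1)).re| := by rw [Complex.sub_re]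
        _ ≤ ‖((z.re:ℂ) ^ (2*n+1)) - z ^ (2*n+1)‖ := Complex.abs_re_le_norm _
        _ = ‖z ^ (2*n+1) - (z.re:ℂ) ^ (2*n+1)‖ := by rw [norm_sub_rev]
    linarith [h1 ▸ h2, hps']
  have hexp : (2*X) ^ (2*n) = 2 ^ (2*n) * X ^ (2*n) := mul_pow 2 X (2*n)
  rw [hexp] at hlow
  have hmain : X ^ (2*n+1) ≤ c * R + c * X + c * (2 ^ (2*n) * X ^ (2*n)) * R :=
    by linarith
  set P : ℝ := X ^ (2*n) with hP
  have hP1 : 1 ≤ P := one_le_pow₀ hX1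
  have hXP : X ≤ P := by
    calc X = X ^ 1 := (pow_one X).symm
      _ ≤ X ^ (2*n) := pow_le_pow_right₀ hX1 (by omega)
  have hpow_succ : X ^ (2*n+1) = X * P := by rw [hP, pow_succ]; ring
  have hAP : A * P < X * P := mul_lt_mul_of_pos_right hx (by linarith)
  have e1 : A * P = c * 2^(2*n) * R * P + c * 2^(2*n) * P + c*R*P + c*P + R*P + P := by
    rw [hA]; ring
  have g1 : 0 ≤ c * R * (P - 1) := mul_nonneg (mul_nonneg (by linarith) hR) (by linarith)
  have g2 : 0 ≤ c * (P - X) := mul_nonneg (by linarith) (by linarith)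
  have g3 : 0 ≤ c * 2^(2*n) * P := mul_nonneg (mul_nonneg (by linarith) (by linarith)) (by linarith)
  have g4 : 0 ≤ R * P := mul_nonneg hR (by linarith)
  linarith [hAP, hmain, hpow_succ, e1, g1, g2, g3, g4]

/-- The embedded sphere with a single end of type `(2,3,2n+1)`:
`f(z) = (-Im z, -(Re z)(Im z), Re(z^{2n+1})/(2n+1) + Re z)` is injective, an
immersion, and proper on `ℂ`. -/
theorem stmt_6 (n : ℕ) (hn : 1 ≤ n) (f : ℂ → ℝ × ℝ × ℝ)
    (hf : ∀ z, f z =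
      (-z.im, -(z.re * z.im), (z ^ (2 * n + 1)).re / (2 * (n : ℝ) + 1) + z.re)) :
    Function.Injective f ∧
    (∀ z : ℂ, Function.Injective (fderiv ℝ f z)) ∧
    (∀ K : Set (ℝ × ℝ × ℝ), IsCompact K → IsCompact (f ⁻¹' K)) := by
  have hfeq : f = fun z : ℂ =>
      ((-z.im, -(z.re * z.im), (z ^ (2 * n + 1)).re / (2 * (n : ℝ) + 1) + z.re) : ℝ × ℝ × ℝ) :=
    funext hf
  refine ⟨?_, ?_, ?_⟩
  · -- injectivity
    intro a b hab
    rw [hf a, hf b, Prod.mk.injEq, Prod.mk.injEq] at hab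
    obtain ⟨h1, h2, h3⟩ := hab
    have him : a.im = b.im := by linarith [neg_injective h1]
    rcases eq_or_ne a.im 0 with him0 | him0
    · have hb0 : b.im = 0 := him ▸ him0
      have ha : a = (a.re : ℂ) := Complex.ext rfl (by simp [him0])
      have hb : b = (b.re : ℂ) := Complex.ext rfl (by simp [hb0])
      have hra : (a ^ (2*n+1)).re = a.re ^ (2*n+1) := by
        conv_lhs => rw [ha, ← Complex.ofReal_pow, Complex.ofReal_re]
      have hrb : (b ^ (2*n+1)).re = b.re ^ (2*n+1) := by
        conv_lhs => rw [hb, ← Complex.ofReal_pow, Complex.ofReal_re]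
      rw [hra, hrb] at h3
      have hsm : StrictMono (fun x : ℝ => x ^ (2*n+1) / (2*(n:ℝ)+1) + x) := by
        have hodd : Odd (2*n+1) := ⟨n, by ring⟩
        have hcpos : (0:ℝ) < 2*(n:ℝ)+1 := by positivity
        exact (hodd.strictMono_pow.div_const hcpos).add strictMono_id
      have := hsm.injective h3
      exact Complex.ext this him
    · have hre : a.re = b.re := by
        rw [him] at h2
        have h2' : a.re * b.im = b.re * b.im := by linarith [neg_injective h2]
        have hb0 : b.im ≠ 0 := him ▸ him0
        exact mul_right_cancel₀ hb0 h2'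
      exact Complex.ext hre him
  · -- immersion
    intro z
    have h1 : HasFDerivAt (fun z : ℂ => -z.im) (-Complex.imCLM) z := Complex.imCLM.hasFDerivAt.neg
    have h2 : HasFDerivAt (fun z : ℂ => -(z.re * z.im))
        (-(z.re • Complex.imCLM + z.im • Complex.reCLM)) z :=
      (Complex.reCLM.hasFDerivAt.mul Complex.imCLM.hasFDerivAt).neg
    have hpow : HasFDerivAt (fun z : ℂ => z ^ (2*n+1))
        (((ContinuousLinearMap.smulRight (1:ℂ→L[ℂ]ℂ) ((2*n+1:ℕ) * z^(2*n+1-1)))).restrictScalars ℝ) z :=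
      (hasDerivAt_pow (2*n+1) z).hasFDerivAt.restrictScalars ℝ
    have h3 : HasFDerivAt (fun z : ℂ => (z ^ (2*n+1)).re / (2*(n:ℝ)+1) + z.re)
        ((2*(n:ℝ)+1)⁻¹ • (Complex.reCLM.comp (((ContinuousLinearMap.smulRight (1:ℂ→L[ℂ]ℂ) ((2*n+1:ℕ) * z^(2*n+1-1)))).restrictScalars ℝ)) + Complex.reCLM) z := by
      simp only [div_eq_inv_mul]
      exact (((Complex.reCLM.hasFDerivAt.comp z hpow).const_mul _)).add Complex.reCLM.hasFDerivAt
    have hL : HasFDerivAt f ((-Complex.imCLM).prod ((-(z.re • Complex.imCLM + z.im • Complex.reCLM)).prod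
        ((2*(n:ℝ)+1)⁻¹ • (Complex.reCLM.comp (((ContinuousLinearMap.smulRight (1:ℂ→L[ℂ]ℂ) ((2*n+1:ℕ) * z^(2*n+1-1)))).restrictScalars ℝ)) + Complex.reCLM))) z := by
      rw [hfeq]
      exact h1.prodMk (h2.prodMk h3)
    rw [hL.fderiv]
    set L := (-Complex.imCLM).prod ((-(z.re • Complex.imCLM + z.im • Complex.reCLM)).prod
        ((2*(n:ℝ)+1)⁻¹ • (Complex.reCLM.comp (((ContinuousLinearMap.smulRight (1:ℂ→L[ℂ]ℂ) ((2*n+1:ℕ) * z^(2*n+1-1)))).restrictScalars ℝ)) + Complex.reCLM)) with hLdef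
    have key : ∀ v : ℂ, L v = 0 → v = 0 := by
      intro v hv
      simp only [hLdef, ContinuousLinearMap.prod_apply, Prod.mk_eq_zero,
        ContinuousLinearMap.neg_apply, ContinuousLinearMap.add_apply,
        ContinuousLinearMap.smul_apply, ContinuousLinearMap.coe_comp',
        ContinuousLinearMap.coe_restrictScalars', Function.comp_apply,
        ContinuousLinearMap.smulRight_apply, ContinuousLinearMap.one_apply,
        Complex.imCLM_apply, Complex.reCLM_apply, neg_eq_zero, smul_eq_mul] at hv
      obtain ⟨hvim, hmix, hthird⟩ := hv
      have him : v.im = 0 := hvim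
      have hcne : (2 * (n:ℝ) + 1) ≠ 0 := by positivity
      have h2n : 2*n+1-1 = 2*n := by omega
      rw [h2n] at hthird
      have hmul : (v * (((2 * n + 1 : ℕ):ℂ) * z ^ (2 * n))).re
          = v.re * ((2*(n:ℝ)+1) * (z ^ (2*n)).re) := by
        simp [Complex.mul_re, him]
      rw [hmul] at hthird
      have hth : v.re * ((z ^ (2*n)).re + 1) = 0 := by
        field_simp at hthird
        have h2' : v.re * ((z ^ (2*n)).re + 1) * (2*(n:ℝ)+1) = 0 := by linear_combination (2*(n:ℝ)+1) * hthird
        exact (mul_eq_zero.mp h2').resolve_right hcne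
      have hre : v.re = 0 := by
        rcases eq_or_ne z.im 0 with hzim | hzim
        · have hz : z = (z.re : ℂ) := Complex.ext rfl (by simp [hzim])
          have hzz : (z ^ (2*n)).re = z.re ^ (2*n) := by
            conv_lhs => rw [hz, ← Complex.ofReal_pow, Complex.ofReal_re]
          rw [hzz] at hth
          have h0 : (0:ℝ) ≤ z.re ^ (2*n) := (even_two_mul n).pow_nonneg _
          rcases mul_eq_zero.mp hth with h | h
          · exact h
          · linarith
        · rw [him, mul_zero, zero_add] at hmix
          exact (mul_eq_zero.mp hmix).resolve_left hzim
      exact Complex.ext hre him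
    intro a b hab
    have := key (a - b) (by rw [map_sub, hab, sub_self])
    exact sub_eq_zero.mp this
  · -- properness
    intro K hK
    have hfc : Continuous f := by
      rw [hfeq]
      refine Continuous.prodMk ?_ (Continuous.prodMk ?_ ?_)
      · exact Complex.continuous_im.neg
      · exact (Complex.continuous_re.mul Complex.continuous_im).neg
      · exact ((Complex.continuous_re.comp (continuous_pow (2*n+1))).div_const _).add
          Complex.continuous_re
    obtain ⟨R0, hR0⟩ := hK.isBounded.subset_closedBall 0
    set R : ℝ := max R0 0 with hRdef
    have hR : 0 ≤ R := le_max_right _ _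
    have hKR : K ⊆ Metric.closedBall 0 R :=
      hR0.trans (Metric.closedBall_subset_closedBall (le_max_left _ _))
    set A : ℝ := (2 * (n:ℝ) + 1) * 2 ^ (2*n) * (R + 1) + (2 * (n:ℝ) + 1) * (R + 1) + R + 1 with hAdef
    have hsub : f ⁻¹' K ⊆ Metric.closedBall (0:ℂ) (A + R) := by
      intro z hz
      have hmem : f z ∈ Metric.closedBall (0 : ℝ × ℝ × ℝ) R := hKR hz
      have hnorm : ‖f z‖ ≤ R := by
        rwa [Metric.mem_closedBall, dist_zero_right] at hmem
      have him : |z.im| ≤ R := by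
        have h := (norm_fst_le (f z)).trans hnorm
        rw [hf z] at h
        simpa [Real.norm_eq_abs, abs_neg] using h
      have hth : |(z ^ (2 * n + 1)).re / (2 * (n : ℝ) + 1) + z.re| ≤ R := by
        have h := ((norm_snd_le (f z).2).trans (norm_snd_le (f z))).trans hnorm
        rw [hf z] at h
        simpa [Real.norm_eq_abs] using h
      have hre := aux_bound n hn R hR z him hth
      rw [Metric.mem_closedBall, dist_zero_right]
      calc ‖z‖ ≤ |z.re| + |z.im| := Complex.norm_le_abs_re_add_abs_im z
        _ ≤ A + R := add_le_add hre him
    exact (isCompact_closedBall (0:ℂ) (A + R)).of_isClosed_subset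
      (hK.isClosed.preimage hfc) hsub
end

section
/- Let n ≥ 2 be an integer and define f : ℂ → ℝ³ by f(z) = (Re z, Re(z³)/3, Re(z^{2n+1})/(2n+1) − Im z); equivalently, f(x,y) = (x, x(x²−3y²)/3, (x²+y²)^{n+1/2} cos((2n+1)·arctan(y/x))/(2n+1) − y). Then f is injective and an immersion (its real derivative is injective at every point), but f is NOT proper: there is a sequence (z_k) in ℂ with |z_k| → ∞ (namely z_k = (−1)ⁿ y_k^{−(2n−1)} + i y_k with y_k → ∞) such that the sequence (f(z_k)) is bounded in ℝ³. -/
open Complex Filter Function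

lemma re_cube_aux (z : ℂ) : (z^3).re = z.re^3 - 3*z.re*z.im^2 := by
  simp [pow_succ, Complex.mul_re, Complex.mul_im]; ring

lemma re_imag_odd (b : ℝ) (n : ℕ) : (((b:ℂ)*I)^(2*n+1)).re = 0 := by
  rw [mul_pow, pow_succ I, pow_mul, I_sq]
  simp [Complex.mul_re, ← ofReal_pow, ← ofReal_one, ← ofReal_neg]

-- key estimate
lemma key_est (n : ℕ) (hn : 2 ≤ n) (y : ℝ) (hy : 1 ≤ y) (x : ℝ)
    (hx : x = (-1:ℝ)^n * (y^(2*n-1))⁻¹) :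
    |(((x:ℂ) + (y:ℂ)*I) ^ (2*n+1)).re - (2*(n:ℝ)+1) * y| ≤
      (2*n) * (2*(n:ℝ)+1)^(2*n+1) := by
  have hy0 : (0:ℝ) < y := by linarith
  have hxabs : |x| = (y^(2*n-1))⁻¹ := by
    rw [hx, abs_mul]
    simp [abs_of_pos hy0, _root_.abs_pow, abs_inv]
  set g : ℕ → ℂ := fun j => (x:ℂ)^j * ((y:ℂ)*I)^(2*n+1-j) * ((2*n+1).choose j : ℂ) with hg
  have hexp : ((x:ℂ) + (y:ℂ)*I) ^ (2*n+1)
      = (∑ i ∈ Finset.range (2*n), g (i+1+1)) + g (0+1) + g 0 := by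
    rw [add_pow, Finset.sum_range_succ', Finset.sum_range_succ']
  have hg0 : (g 0).re = 0 := by
    simp only [hg, pow_zero, one_mul, Nat.sub_zero, Nat.choose_zero_right,
      Nat.cast_one, mul_one]
    exact re_imag_odd y n
  have hg1 : (g 1).re = (2*(n:ℝ)+1) * y := by
    have hI2n : ((y:ℂ)*I)^(2*n) = (((-1:ℝ)^n * y^(2*n) : ℝ) : ℂ) := by
      rw [pow_mul]
      have : ((y:ℂ)*I)^2 = ((-(y^2) : ℝ) : ℂ) := by
        push_cast; rw [mul_pow, I_sq]; ring
      rw [this, ← ofReal_pow]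
      congr 1
      rw [neg_pow, ← pow_mul]
    have h21 : 2*n+1-1 = 2*n := by omega
    simp only [hg, pow_one, h21, Nat.choose_one_right, hI2n]
    rw [← ofReal_natCast, ← ofReal_mul, ← ofReal_mul, ofReal_re]
    rw [hx]
    have hsplit : y^(2*n) = y^(2*n-1) * y := by
      rw [← pow_succ]; congr 1; omega
    have hne : (y:ℝ)^(2*n-1) ≠ 0 := by positivity
    have hsq : ((-1:ℝ)^n) * ((-1:ℝ)^n) = 1 := by
      rw [← pow_add]; exact Even.neg_one_pow ⟨n, rfl⟩
    push_cast
    field_simp [hsplit]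
    rw [sq, hsq, one_mul, hsplit]
  have hterm : ∀ i ∈ Finset.range (2*n), |(g (i+1+1)).re| ≤ (2*(n:ℝ)+1)^(2*n+1) := by
    intro i hi
    have hi' : i < 2*n := Finset.mem_range.1 hi
    have h1 : |(g (i+2)).re| ≤ ‖g (i+2)‖ := Complex.abs_re_le_norm _
    have h2 : ‖g (i+2)‖ =
        |x|^(i+2) * y^(2*n+1-(i+2)) * ((2*n+1).choose (i+2) : ℝ) := by
      simp [hg, norm_mul, norm_pow, Complex.norm_real, Complex.norm_natCast,
        abs_of_pos hy0]
    have h3 : |x|^(i+2) * y^(2*n+1-(i+2)) ≤ 1 := by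
      rw [hxabs, ← inv_pow, ← pow_mul, inv_pow]
      rw [inv_mul_le_one₀ (by positivity)]  -- maybe wrong name
      apply pow_le_pow_right₀ hy
      calc 2*n+1-(i+2) ≤ 2*n-1 := by omega
        _ ≤ (2*n-1)*(i+2) := Nat.le_mul_of_pos_right _ (by omega)
    have h4 : ((2*n+1).choose (i+2) : ℝ) ≤ (2*(n:ℝ)+1)^(2*n+1) := by
      have h := le_trans (Nat.choose_le_pow (2*n+1) (i+2))
        (Nat.pow_le_pow_right (by omega) (show i+2 ≤ 2*n+1 by omega))
      exact_mod_cast h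
    calc |(g (i+1+1)).re| ≤ ‖g (i+2)‖ := h1
      _ = |x|^(i+2) * y^(2*n+1-(i+2)) * ((2*n+1).choose (i+2) : ℝ) := h2
      _ ≤ 1 * ((2*n+1).choose (i+2) : ℝ) := by
          apply mul_le_mul_of_nonneg_right h3 (by positivity)
      _ = ((2*n+1).choose (i+2) : ℝ) := one_mul _
      _ ≤ (2*(n:ℝ)+1)^(2*n+1) := h4
  have hsum : |(∑ i ∈ Finset.range (2*n), g (i+1+1)).re| ≤ (2*n) * (2*(n:ℝ)+1)^(2*n+1) := by
    rw [Complex.re_sum]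
    calc |∑ i ∈ Finset.range (2*n), (g (i+1+1)).re|
        ≤ ∑ i ∈ Finset.range (2*n), |(g (i+1+1)).re| := Finset.abs_sum_le_sum_abs _ _
      _ ≤ ∑ _i ∈ Finset.range (2*n), (2*(n:ℝ)+1)^(2*n+1) := Finset.sum_le_sum hterm
      _ = (2*n) * (2*(n:ℝ)+1)^(2*n+1) := by
          rw [Finset.sum_const, Finset.card_range]; push_cast; ring
  have : (((x:ℂ) + (y:ℂ)*I) ^ (2*n+1)).re
      = (∑ i ∈ Finset.range (2*n), g (i+1+1)).re + (2*(n:ℝ)+1) * y := by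
    rw [hexp, Complex.add_re, Complex.add_re, hg0, hg1, add_zero]
  rw [this]
  simpa using hsum


set_option maxHeartbeats 1000000

/-- The regular embedded end of type `(2,4,2n+1)`:
`f(z) = (Re z, Re(z³)/3, Re(z^{2n+1})/(2n+1) - Im z)` is injective and an
immersion, but not proper: along `z_k = (-1)ⁿ y_k^{-(2n-1)} + i y_k` with
`y_k → ∞` the image stays bounded. -/
theorem stmt_7 (n : ℕ) (hn : 2 ≤ n) (f : ℂ → ℝ × ℝ × ℝ)
    (hf : ∀ z, f z =
      (z.re, (z ^ 3).re / 3, (z ^ (2 * n + 1)).re / (2 * (n : ℝ) + 1) - z.im)) :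
    Function.Injective f ∧
    (∀ z : ℂ, Function.Injective (fderiv ℝ f z)) ∧
    (∃ y : ℕ → ℝ, Tendsto y atTop atTop ∧
      Tendsto
        (fun k => ‖
          ((((-1 : ℝ) ^ n * (y k) ^ (-(2 * (n : ℤ) - 1)) : ℝ) : ℂ)
            + (y k : ℂ) * I)‖) atTop atTop ∧
      ∃ C : ℝ, ∀ k,
        ‖f ((((-1 : ℝ) ^ n * (y k) ^ (-(2 * (n : ℤ) - 1)) : ℝ) : ℂ)
            + (y k : ℂ) * I)‖ ≤ C) := by
  have hfE : f = fun z : ℂ =>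
      ((z.re, (z ^ 3).re / 3, (z ^ (2 * n + 1)).re / (2 * (n : ℝ) + 1) - z.im) : ℝ × ℝ × ℝ) :=
    funext hf
  subst hfE
  refine ⟨?_, ?_, ?_⟩
  · -- injectivity
    have hc : (2 * (n : ℝ) + 1) ≠ 0 := by positivity
    intro v w h
    simp only [Prod.mk.injEq] at h
    obtain ⟨h1, h2, h3⟩ := h
    have h2' : (v^3).re = (w^3).re := by
      field_simp at h2; exact h2
    rw [re_cube_aux, re_cube_aux, h1] at h2'
    have key : w.re * (v.im^2 - w.im^2) = 0 := by nlinarith [h2']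
    rcases mul_eq_zero.1 key with ha | hb
    · -- v.re = w.re = 0
      have hv : v = (v.im : ℂ) * I := by
        apply Complex.ext <;> simp [h1, ha]
      have hw : w = (w.im : ℂ) * I := by
        apply Complex.ext <;> simp [ha]
      rw [hv, hw, re_imag_odd, re_imag_odd] at h3
      have : v.im = w.im := by
        field_simp at h3; simp [hc] at h3; linarith
      exact Complex.ext (by rw [h1]) this
    · have hsq : v.im ^ 2 = w.im ^ 2 := by nlinarith [hb]
      rcases sq_eq_sq_iff_eq_or_eq_neg.1 hsq with he | hne
      · exact Complex.ext h1 he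
      · have hwc : w = (starRingEnd ℂ) v := by
          apply Complex.ext <;> simp [← h1, hne]
        have hre : (w ^ (2*n+1)).re = (v ^ (2*n+1)).re := by
          rw [hwc, ← map_pow]; exact Complex.conj_re _
        rw [hre] at h3
        have him : v.im = w.im := by linarith [h3]
        exact Complex.ext h1 him
  · -- immersion
    intro z
    have hc : (0:ℝ) < 2 * (n : ℝ) + 1 := by positivity
    have hp3 : HasDerivAt (fun z : ℂ => z ^ 3) (3 * z ^ 2) z := by
      simpa using hasDerivAt_pow 3 z
    have hpm : HasDerivAt (fun z : ℂ => z ^ (2*n+1)) ((2*(n:ℂ)+1) * z ^ (2*n)) z := by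
      have h := hasDerivAt_pow (2*n+1) z
      simpa using h
    have h1 : HasFDerivAt (fun z : ℂ => z.re) (reCLM : ℂ →L[ℝ] ℝ) z :=
      reCLM.hasFDerivAt
    have h2 : HasFDerivAt (fun z : ℂ => (z^3).re / 3)
        (((3:ℝ)⁻¹) • (reCLM.comp ((ContinuousLinearMap.smulRight (1:ℂ→L[ℂ]ℂ) (3*z^2)).restrictScalars ℝ))) z := by
      have := ((reCLM.hasFDerivAt).comp z ((hp3.hasFDerivAt).restrictScalars ℝ)).const_smul ((3:ℝ)⁻¹)
      exact (this.congr_fderiv (ContinuousLinearMap.ext fun w => by simp)).congr_of_eventuallyEq (Eventually.of_forall fun x => by simp [div_eq_inv_mul])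
    have h3 : HasFDerivAt (fun z : ℂ => (z ^ (2*n+1)).re / (2*(n:ℝ)+1) - z.im)
        ((((2*(n:ℝ)+1))⁻¹ • (reCLM.comp ((ContinuousLinearMap.smulRight (1:ℂ→L[ℂ]ℂ) ((2*(n:ℂ)+1) * z^(2*n))).restrictScalars ℝ))) - imCLM) z := by
      have := (((reCLM.hasFDerivAt).comp z ((hpm.hasFDerivAt).restrictScalars ℝ)).const_smul (((2*(n:ℝ)+1))⁻¹)).sub imCLM.hasFDerivAt
      exact (this.congr_fderiv (ContinuousLinearMap.ext fun w => by simp)).congr_of_eventuallyEq (Eventually.of_forall fun x => by simp [div_eq_inv_mul])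
    have hD := h1.prodMk (h2.prodMk h3)
    rw [hD.fderiv]
    intro u u' huu
    have h0 : ∀ v : ℂ, (reCLM.prod
        ((((3:ℝ)⁻¹) • (reCLM.comp ((ContinuousLinearMap.smulRight (1:ℂ→L[ℂ]ℂ) (3*z^2)).restrictScalars ℝ))).prod
         ((((2*(n:ℝ)+1))⁻¹ • (reCLM.comp ((ContinuousLinearMap.smulRight (1:ℂ→L[ℂ]ℂ) ((2*(n:ℂ)+1) * z^(2*n))).restrictScalars ℝ))) - imCLM))) v = 0 → v = 0 := by
      intro v hv
      simp only [ContinuousLinearMap.prod_apply, ContinuousLinearMap.smul_apply,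
        ContinuousLinearMap.coe_comp', Function.comp_apply,
        ContinuousLinearMap.coe_restrictScalars', ContinuousLinearMap.smulRight_apply,
        ContinuousLinearMap.one_apply, ContinuousLinearMap.sub_apply,
        Complex.reCLM_apply, Complex.imCLM_apply, smul_eq_mul, Prod.mk_eq_zero] at hv
      obtain ⟨e1, e2, e3⟩ := hv
      by_cases hvim : v.im = 0
      · exact Complex.ext e1 hvim
      · exfalso
        have e2' : v.im * (z^2).im = 0 := by
          rw [Complex.mul_re, e1] at e2
          have h3i : ((3:ℂ) * z^2).im = 3 * (z^2).im := by simp [Complex.mul_im]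
          rw [h3i] at e2
          linear_combination -e2
        have him0 : (z^2).im = 0 := by
          rcases mul_eq_zero.1 e2' with h | h
          · exact absurd h hvim
          · exact h
        have him2n : (z^(2*n)).im = 0 := by
          rw [pow_mul]
          have hz2 : z^2 = (((z^2).re : ℝ) : ℂ) := Complex.ext rfl (by simp [him0])
          rw [hz2]
          simp [← ofReal_pow]
        rw [Complex.mul_re, e1, Complex.mul_im, him2n] at e3
        simp at e3
        exact hvim e3
    have := h0 (u - u') (by rw [map_sub, huu, sub_self])
    exact sub_eq_zero.1 this
  · -- not proper
    have htop : Tendsto (fun k : ℕ => (k:ℝ) + 1) atTop atTop :=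
      tendsto_atTop_add_const_right _ 1 tendsto_natCast_atTop_atTop
    refine ⟨fun k => (k:ℝ) + 1, htop, ?_, ?_⟩
    · apply tendsto_atTop_mono ?_ htop
      intro k
      have h : ((((-1 : ℝ) ^ n * ((k:ℝ)+1) ^ (-(2 * (n : ℤ) - 1)) : ℝ) : ℂ)
          + (((k:ℝ)+1 : ℝ) : ℂ) * I).im = (k:ℝ)+1 := by
        simp only [Complex.add_im, Complex.ofReal_im, Complex.mul_im,
          Complex.ofReal_re, Complex.I_im, Complex.I_re, mul_one, mul_zero,
          add_zero, zero_add]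
      rw [← h]
      exact (le_abs_self _).trans (Complex.abs_im_le_norm _)
    · refine ⟨(2*n) * (2*(n:ℝ)+1)^(2*n+1) + 2, fun k => ?_⟩
      set Y : ℝ := (k:ℝ) + 1 with hYdef
      have hY : 1 ≤ Y := by
        have : (0:ℝ) ≤ (k:ℝ) := Nat.cast_nonneg k
        rw [hYdef]; linarith
      have hY0 : (0:ℝ) < Y := by linarith
      have hBnn : (0:ℝ) ≤ (2*n) * (2*(n:ℝ)+1)^(2*n+1) := by positivity
      set X : ℝ := (-1 : ℝ) ^ n * Y ^ (-(2 * (n : ℤ) - 1)) with hXdef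
      have hXx : X = (-1:ℝ)^n * (Y^(2*n-1))⁻¹ := by
        rw [hXdef, show (-(2 * (n : ℤ) - 1)) = -((2*n-1 : ℕ) : ℤ) by omega,
          zpow_neg, zpow_natCast]
      have hXabs : |X| = (Y^(2*n-1))⁻¹ := by
        rw [hXx, abs_mul]
        simp [abs_of_pos hY0, _root_.abs_pow, abs_inv]
      have hXle : |X| ≤ 1 := by
        rw [hXabs]
        exact inv_le_one_of_one_le₀ (one_le_pow₀ hY)
      have hXY2 : |X| * Y^2 ≤ 1 := by
        rw [hXabs, inv_mul_le_one₀ (by positivity)]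
        apply pow_le_pow_right₀ hY
        omega
      set z : ℂ := (X:ℂ) + (Y:ℂ)*I with hzdef
      have hzre : z.re = X := by simp [hzdef]
      have hzim : z.im = Y := by simp [hzdef]
      have hcube : (z^3).re = X^3 - 3*X*Y^2 := by
        have h3 : (z^3).re = z.re^3 - 3*z.re*z.im^2 := by
          simp [pow_succ, Complex.mul_re, Complex.mul_im]; ring
        rw [h3, hzre, hzim]
      rw [hf]
      have hb1 : ‖z.re‖ ≤ (2*n) * (2*(n:ℝ)+1)^(2*n+1) + 2 := by
        rw [Real.norm_eq_abs, hzre]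
        linarith [hXle]
      have hb2 : ‖(z^3).re / 3‖ ≤ (2*n) * (2*(n:ℝ)+1)^(2*n+1) + 2 := by
        rw [Real.norm_eq_abs, hcube, abs_div]
        have hX3 : |X^3| ≤ 1 := by
          rw [_root_.abs_pow]
          exact pow_le_one₀ (abs_nonneg _) hXle
        have h32 : |3*X*Y^2| ≤ 3 := by
          have : |3*X*Y^2| = 3 * (|X| * Y^2) := by
            rw [abs_mul, abs_mul, _root_.abs_pow, abs_of_pos hY0,
              show |(3:ℝ)| = 3 by norm_num]
            ring
          rw [this]; linarith [hXY2]
        have h1 : |X^3 - 3*X*Y^2| ≤ 4 := by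
          calc |X^3 - 3*X*Y^2| ≤ |X^3| + |3*X*Y^2| := abs_sub _ _
            _ ≤ 4 := by linarith
        rw [show |(3:ℝ)| = 3 by norm_num]
        linarith
      have hb3 : ‖(z ^ (2*n+1)).re / (2*(n:ℝ)+1) - z.im‖ ≤
          (2*n) * (2*(n:ℝ)+1)^(2*n+1) + 2 := by
        rw [Real.norm_eq_abs, hzim]
        have hc0 : (0:ℝ) < 2*(n:ℝ)+1 := by positivity
        have hc1 : (1:ℝ) ≤ 2*(n:ℝ)+1 := by
          have : (0:ℝ) ≤ (n:ℝ) := Nat.cast_nonneg n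
          linarith
        have hk := key_est n hn Y hY X hXx
        have heq : (z^(2*n+1)).re / (2*(n:ℝ)+1) - Y
            = ((z^(2*n+1)).re - (2*(n:ℝ)+1)*Y) / (2*(n:ℝ)+1) := by
          field_simp
        rw [heq, abs_div, abs_of_pos hc0]
        calc |(z^(2*n+1)).re - (2*(n:ℝ)+1)*Y| / (2*(n:ℝ)+1)
            ≤ |(z^(2*n+1)).re - (2*(n:ℝ)+1)*Y| := div_le_self (abs_nonneg _) hc1
          _ ≤ (2*n) * (2*(n:ℝ)+1)^(2*n+1) := by rw [hzdef]; exact hk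
          _ ≤ (2*n) * (2*(n:ℝ)+1)^(2*n+1) + 2 := by linarith
      exact max_le hb1 (max_le hb2 hb3)
end

section
/- Define f : ℝ² → ℝ³ by f(x,y) = (−y, −x³y + xy³, x + x⁷/7 − 3x⁵y² + 5x³y⁴ − xy⁶). Then: (1) f is injective; (2) f is an immersion, i.e. its real derivative is injective at every point of ℝ²; (3) f is proper, i.e. the preimage of every compact subset of ℝ³ is compact. -/
open Filter Function

set_option maxHeartbeats 1000000

/-- The embedded sphere with a single end of type `(2,5,8)`:
`f(x,y) = (-y, -x³y + xy³, x + x⁷/7 - 3x⁵y² + 5x³y⁴ - xy⁶)` is injective, an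
immersion, and proper. -/
theorem stmt_8 (f : ℝ × ℝ → ℝ × ℝ × ℝ)
    (hf : ∀ x y : ℝ, f (x, y) =
      (-y, -x ^ 3 * y + x * y ^ 3,
        x + x ^ 7 / 7 - 3 * x ^ 5 * y ^ 2 + 5 * x ^ 3 * y ^ 4 - x * y ^ 6)) :
    Function.Injective f ∧
    (∀ p : ℝ × ℝ, Function.Injective (fderiv ℝ f p)) ∧
    (∀ K : Set (ℝ × ℝ × ℝ), IsCompact K → IsCompact (f ⁻¹' K)) := by
  have hfe : f = fun p : ℝ × ℝ =>
      (-p.2, -p.1 ^ 3 * p.2 + p.1 * p.2 ^ 3,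
        p.1 + p.1 ^ 7 / 7 - 3 * p.1 ^ 5 * p.2 ^ 2 + 5 * p.1 ^ 3 * p.2 ^ 4 - p.1 * p.2 ^ 6) := by
    funext p
    obtain ⟨x, y⟩ := p
    exact hf x y
  subst hfe
  refine ⟨?_, ?_, ?_⟩
  · -- Injectivity
    rintro ⟨a, c⟩ ⟨b, d⟩ h
    simp only [Prod.mk.injEq] at h
    obtain ⟨h1, h2, h3⟩ := h
    obtain rfl : c = d := by linarith
    have hab : a = b := by
      by_contra hab
      have hne : a - b ≠ 0 := sub_ne_zero.mpr hab
      have h2' : c * ((a - b) * (c ^ 2 - (a ^ 2 + a * b + b ^ 2))) = 0 := by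
        linear_combination h2
      have h3' : (a - b) *
          (7 + (a ^ 6 + a ^ 5 * b + a ^ 4 * b ^ 2 + a ^ 3 * b ^ 3 + a ^ 2 * b ^ 4 + a * b ^ 5 + b ^ 6)
            - 21 * c ^ 2 * (a ^ 4 + a ^ 3 * b + a ^ 2 * b ^ 2 + a * b ^ 3 + b ^ 4)
            + 35 * c ^ 4 * (a ^ 2 + a * b + b ^ 2) - 7 * c ^ 6) = 0 := by
        linear_combination 7 * h3
      rcases mul_eq_zero.mp h2' with hc | h2''
      · subst hc
        rcases mul_eq_zero.mp h3' with h0 | hE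
        · exact hne h0
        · nlinarith [hE, sq_nonneg (a ^ 3 + a ^ 2 * b / 2), sq_nonneg (a ^ 2 * b + 2 * a * b ^ 2 / 3),
            sq_nonneg (a * b ^ 2 + 3 * b ^ 3 / 4), sq_nonneg (b ^ 3)]
      · rcases mul_eq_zero.mp h2'' with h0 | hc2
        · exact hne h0
        · have hc2' : c ^ 2 = a ^ 2 + a * b + b ^ 2 := by linarith
          rcases mul_eq_zero.mp h3' with h0 | hE
          · exact hne h0
          · have hQ : 8 * a ^ 6 + 43 * a ^ 5 * b + 106 * a ^ 4 * b ^ 2 + 134 * a ^ 3 * b ^ 3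
                + 106 * a ^ 2 * b ^ 4 + 43 * a * b ^ 5 + 8 * b ^ 6 = -7 := by
              linear_combination hE -
                (-21 * (a ^ 4 + a ^ 3 * b + a ^ 2 * b ^ 2 + a * b ^ 3 + b ^ 4)
                  + 35 * (a ^ 2 + a * b + b ^ 2) * (c ^ 2 + (a ^ 2 + a * b + b ^ 2))
                  - 7 * (c ^ 4 + c ^ 2 * (a ^ 2 + a * b + b ^ 2) + (a ^ 2 + a * b + b ^ 2) ^ 2)) * hc2'
            nlinarith [hQ, sq_nonneg (a ^ 3 + 43 / 16 * a ^ 2 * b + 1 / 4 * a * b ^ 2 - 9 / 16 * b ^ 3),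
              sq_nonneg (a ^ 2 * b + 2116 / 1415 * a * b ^ 2 + 451 / 1415 * b ^ 3),
              sq_nonneg (a * b ^ 2 + 1096 / 1851 * b ^ 3), sq_nonneg (b ^ 3)]
    simp [hab]
  · -- Immersion
    rintro ⟨x, y⟩
    have hx : HasFDerivAt (fun p : ℝ × ℝ => p.1) (ContinuousLinearMap.fst ℝ ℝ ℝ) (x, y) :=
      hasFDerivAt_fst
    have hy : HasFDerivAt (fun p : ℝ × ℝ => p.2) (ContinuousLinearMap.snd ℝ ℝ ℝ) (x, y) :=
      hasFDerivAt_snd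
    have hx3 : HasFDerivAt (fun p : ℝ × ℝ => p.1 ^ 3) _ (x, y) :=
      (HasDerivAt.comp_hasFDerivAt _ (hasDerivAt_pow 3 x) hx :)
    have hx5 : HasFDerivAt (fun p : ℝ × ℝ => p.1 ^ 5) _ (x, y) :=
      (HasDerivAt.comp_hasFDerivAt _ (hasDerivAt_pow 5 x) hx :)
    have hx7 : HasFDerivAt (fun p : ℝ × ℝ => p.1 ^ 7 / 7) _ (x, y) :=
      (HasDerivAt.comp_hasFDerivAt _ ((hasDerivAt_pow 7 x).div_const 7) hx :)
    have hy2 : HasFDerivAt (fun p : ℝ × ℝ => p.2 ^ 2) _ (x, y) :=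
      (HasDerivAt.comp_hasFDerivAt _ (hasDerivAt_pow 2 y) hy :)
    have hy3 : HasFDerivAt (fun p : ℝ × ℝ => p.2 ^ 3) _ (x, y) :=
      (HasDerivAt.comp_hasFDerivAt _ (hasDerivAt_pow 3 y) hy :)
    have hy4 : HasFDerivAt (fun p : ℝ × ℝ => p.2 ^ 4) _ (x, y) :=
      (HasDerivAt.comp_hasFDerivAt _ (hasDerivAt_pow 4 y) hy :)
    have hy6 : HasFDerivAt (fun p : ℝ × ℝ => p.2 ^ 6) _ (x, y) :=
      (HasDerivAt.comp_hasFDerivAt _ (hasDerivAt_pow 6 y) hy :)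
    have h : HasFDerivAt (fun p : ℝ × ℝ =>
        (-p.2, -p.1 ^ 3 * p.2 + p.1 * p.2 ^ 3,
          p.1 + p.1 ^ 7 / 7 - 3 * p.1 ^ 5 * p.2 ^ 2 + 5 * p.1 ^ 3 * p.2 ^ 4 - p.1 * p.2 ^ 6)) _
        (x, y) :=
      HasFDerivAt.prodMk (hy.neg) (HasFDerivAt.prodMk ((hx3.neg.mul hy).add (hx.mul hy3))
        ((((hx.add hx7).sub
            ((hx5.const_mul 3).mul hy2)).add
            ((hx3.const_mul 5).mul hy4)).sub (hx.mul hy6)))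
    intro u v huv
    rw [h.fderiv] at huv
    obtain ⟨u1, u2⟩ := u
    obtain ⟨v1, v2⟩ := v
    simp only [ContinuousLinearMap.prod_apply, ContinuousLinearMap.neg_apply,
      ContinuousLinearMap.add_apply, ContinuousLinearMap.coe_smul', Pi.smul_apply,
      ContinuousLinearMap.coe_fst', ContinuousLinearMap.coe_snd', smul_eq_mul,
      ContinuousLinearMap.sub_apply, Prod.mk.injEq] at huv
    obtain ⟨e1, e2, e3⟩ := huv
    obtain rfl : u2 = v2 := by linarith
    have hA : (-3 * x ^ 2 * y + y ^ 3) * (u1 - v1) = 0 := by linear_combination e2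
    have hB : (1 + x ^ 6 - 15 * x ^ 4 * y ^ 2 + 15 * x ^ 2 * y ^ 4 - y ^ 6) * (u1 - v1) = 0 := by
      linear_combination e3
    rcases mul_eq_zero.mp hA with hA0 | hu1
    · rcases mul_eq_zero.mp hB with hB0 | hu1
      · exfalso
        have hpos : (1 : ℝ) + x ^ 6 + 21 * x ^ 4 * y ^ 2 = 0 := by
          linear_combination hB0 - (12 * x ^ 2 * y - y ^ 3) * hA0
        nlinarith [hpos, sq_nonneg (x ^ 3), sq_nonneg (x ^ 2 * y)]
      · have : u1 = v1 := by linarith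
        simp [this]
    · have : u1 = v1 := by linarith
      simp [this]
  · -- Properness
    intro K hK
    have hcont : Continuous (fun p : ℝ × ℝ =>
        (-p.2, -p.1 ^ 3 * p.2 + p.1 * p.2 ^ 3,
          p.1 + p.1 ^ 7 / 7 - 3 * p.1 ^ 5 * p.2 ^ 2 + 5 * p.1 ^ 3 * p.2 ^ 4 - p.1 * p.2 ^ 6)) := by
      fun_prop
    rw [Metric.isCompact_iff_isClosed_bounded]
    refine ⟨hK.isClosed.preimage hcont, ?_⟩
    obtain ⟨r, hr⟩ := hK.isBounded.subset_closedBall (0 : ℝ × ℝ × ℝ)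
    obtain ⟨R, hR0, hKR⟩ : ∃ R : ℝ, 0 ≤ R ∧ K ⊆ Metric.closedBall 0 R :=
      ⟨max r 0, le_max_right _ _,
        hr.trans (Metric.closedBall_subset_closedBall (le_max_left _ _))⟩
    apply (Metric.isBounded_closedBall
      (x := (0 : ℝ × ℝ)) (r := 1 + (7 + 14 * R + 147 * R ^ 2 + 49 * R ^ 6) + R)).subset
    rintro ⟨x, y⟩ hp
    simp only [Set.mem_preimage] at hp
    have hball := mem_closedBall_zero_iff.mp (hKR hp)
    simp only [Prod.norm_def, sup_le_iff, Real.norm_eq_abs, abs_neg] at hball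
    obtain ⟨hy, hv, hw⟩ := hball
    have hy2 : y ^ 2 ≤ R ^ 2 := by nlinarith [abs_le.mp hy]
    obtain ⟨hw1, hw2⟩ := abs_le.mp hw
    have hxe : x ^ 2 + x ^ 8 / 7 - 3 * x ^ 6 * y ^ 2 + 5 * x ^ 4 * y ^ 4 - x ^ 2 * y ^ 6 ≤
        R + R * x ^ 2 := by
      rcases le_or_gt 0 x with hx0 | hx0
      · have h := mul_le_mul_of_nonneg_left hw2 hx0
        nlinarith [h, mul_nonneg hR0 (by nlinarith [sq_nonneg (x - 1)] : (0 : ℝ) ≤ 1 + x ^ 2 - x)]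
      · have h := mul_le_mul_of_nonpos_left hw1 (le_of_lt hx0)
        nlinarith [h, mul_nonneg hR0 (by nlinarith [sq_nonneg (x + 1)] : (0 : ℝ) ≤ 1 + x ^ 2 + x)]
    have hy6 : y ^ 6 ≤ R ^ 6 := by
      have := pow_le_pow_left₀ (sq_nonneg y) hy2 3
      nlinarith [this]
    have t1 : 3 * x ^ 6 * y ^ 2 ≤ 3 * x ^ 6 * R ^ 2 :=
      mul_le_mul_of_nonneg_left hy2 (by positivity)
    have t2 : x ^ 2 * y ^ 6 ≤ x ^ 2 * R ^ 6 := mul_le_mul_of_nonneg_left hy6 (sq_nonneg x)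
    have t3 : (0 : ℝ) ≤ 5 * x ^ 4 * y ^ 4 := by positivity
    have h2 : x ^ 2 + x ^ 8 / 7 ≤ R + R * x ^ 2 + 3 * R ^ 2 * x ^ 6 + R ^ 6 * x ^ 2 := by
      linarith [hxe, t1, t2, t3]
    have hx2 : x ^ 2 ≤ 7 + 14 * R + 147 * R ^ 2 + 49 * R ^ 6 := by
      by_contra hlt
      push_neg at hlt
      have hR6 : (0 : ℝ) ≤ R ^ 6 := by positivity
      have h7 : (7 : ℝ) < x ^ 2 := by nlinarith [sq_nonneg R]
      have h1le : (1 : ℝ) ≤ x ^ 2 := by linarith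
      have hx6x2 : x ^ 2 ≤ x ^ 6 := by
        nlinarith [mul_nonneg (sub_nonneg.mpr h1le) (sq_nonneg (x ^ 2)),
          mul_nonneg (sub_nonneg.mpr h1le) (sq_nonneg x)]
      have hx6pos : (0 : ℝ) < x ^ 6 := by linarith
      have hcube := mul_lt_mul_of_pos_left hlt hx6pos
      have a1 : R < x ^ 2 := by nlinarith [sq_nonneg R]
      have F1 : (0 : ℝ) ≤ R ^ 2 * x ^ 6 := by positivity
      have F2 : (0 : ℝ) ≤ R ^ 6 * (x ^ 6 - x ^ 2) := mul_nonneg hR6 (by linarith)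
      have F3 : (0 : ℝ) ≤ R * (x ^ 6 - x ^ 2) := mul_nonneg hR0 (by linarith)
      have F5 : (0 : ℝ) ≤ R ^ 6 * x ^ 6 := by positivity
      have F6 : (0 : ℝ) ≤ R * x ^ 6 := mul_nonneg hR0 (le_of_lt hx6pos)
      nlinarith [h2, hcube, F1, F2, F3, F5, F6, a1, hx6pos.le]
    simp only [Metric.mem_closedBall, dist_zero_right, Prod.norm_def, Real.norm_eq_abs]
    apply max_le
    · nlinarith [hx2, abs_nonneg x, sq_abs x, sq_nonneg (|x| - 1), sq_nonneg R,
        sq_nonneg (R ^ 3), hR0]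
    · have h6 : (0 : ℝ) ≤ R ^ 6 := by positivity
      have hsq : (0 : ℝ) ≤ R ^ 2 := sq_nonneg R
      calc |y| ≤ R := hy
        _ ≤ 1 + (7 + 14 * R + 147 * R ^ 2 + 49 * R ^ 6) + R := by linarith
end

section
/- Define f : ℝ² → ℝ³ by f(x,y) = (xy, x(3/2 + x² − 3y²), y(5x⁴ − 10x²y² + y⁴ + 5)). Then: (1) f is injective; (2) f is an immersion, i.e. its real derivative is injective at every point of ℝ²; (3) f is proper, i.e. the preimage of every compact subset of ℝ³ is compact. -/
set_option maxHeartbeats 1600000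

open Filter Function

section Aux

lemma stmt9_pos_aux (q C B : ℝ) (hq : 0 < q) (hC : q ≤ C) (hB : q^2 ≤ B) :
    0 < 15*q^3*C - 45*q^3 + 45*q^2 + (C+3/2)^2*B := by
  have h1 : (q+3/2)^2*q^2 ≤ (C+3/2)^2*B := by
    apply mul_le_mul (by nlinarith) hB (sq_nonneg q) (by positivity)
  nlinarith [mul_nonneg (sq_nonneg (4*q-21/4)) (sq_nonneg q),
    mul_nonneg (pow_pos hq 3).le (sub_nonneg.mpr hC), sq_nonneg q, pow_pos hq 2]

lemma stmt9_opp (x1 y1 x2 y2 : ℝ) (hx1 : 0 < x1) (hx2 : x2 < 0) (hy1 : y1 ≠ 0)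
    (e1 : x1*y1 = x2*y2)
    (e2 : x1*(3/2+x1^2-3*y1^2) = x2*(3/2+x2^2-3*y2^2))
    (e3 : y1*(5*x1^4-10*x1^2*y1^2+y1^4+5) = y2*(5*x2^4-10*x2^2*y2^2+y2^4+5)) : False := by
  obtain ⟨s, rfl⟩ : ∃ s, x2 = -s := ⟨-x2, (neg_neg x2).symm⟩
  have hs : 0 < s := by linarith
  have hx1ne : x1 ≠ 0 := ne_of_gt hx1
  have hsne : s ≠ 0 := ne_of_gt hs
  set u := x1 * y1 with hu_def
  have hu : u ≠ 0 := mul_ne_zero hx1ne hy1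
  have hy1eq : y1 = u / x1 := by rw [eq_div_iff hx1ne]; ring
  have hy2eq : y2 = -(u / s) := by
    have : y2 * s = -u := by linear_combination e1
    field_simp at this ⊢
    linarith
  rw [hy1eq, hy2eq] at e2 e3
  field_simp at e2 e3
  have h4 : (4*x1*s*(x1+s)) ≠ 0 := by positivity
  have H1 : 3*u^2 = x1*s*(x1^2 - x1*s + s^2 + 3/2) := by
    apply mul_right_cancel₀ h4
    linear_combination (-2*x1*s)*e2
  have hc : u*x1^2*s^2 ≠ 0 := by
    apply mul_ne_zero (mul_ne_zero hu (pow_ne_zero 2 hx1ne)) (pow_ne_zero 2 hsne)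
  have H2 : s^5*(5*x1^8-10*u^2*x1^4+u^4+5*x1^4) + x1^5*(5*s^8-10*u^2*s^4+u^4+5*s^4) = 0 := by
    apply mul_left_cancel₀ hc
    linear_combination (u*x1^2*s^2)*e3
  have key : (x1+s) * ((x1*s)^2 * (15*(x1*s)^3*(x1^2-x1*s+s^2) - 45*(x1*s)^3 + 45*(x1*s)^2
      + ((x1^2-x1*s+s^2)+3/2)^2*(x1^4-x1^3*s+x1^2*s^2-x1*s^3+s^4))) = 0 := by
    linear_combination 9*H2 - ((3*u^2 + x1*s*(x1^2-x1*s+s^2+3/2))*(x1^5+s^5) - 30*(x1*s)^4*(x1+s))*H1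
  have hq : 0 < x1*s := mul_pos hx1 hs
  have hC : x1*s ≤ x1^2-x1*s+s^2 := by nlinarith [sq_nonneg (x1-s)]
  have hB : (x1*s)^2 ≤ x1^4-x1^3*s+x1^2*s^2-x1*s^3+s^4 := by
    nlinarith [mul_nonneg (sq_nonneg (x1-s)) (by nlinarith [sq_nonneg (x1+s)] : (0:ℝ) ≤ x1^2+x1*s+s^2)]
  have hpos := stmt9_pos_aux (x1*s) (x1^2-x1*s+s^2) (x1^4-x1^3*s+x1^2*s^2-x1*s^3+s^4) hq hC hB
  have : 0 < (x1+s) * ((x1*s)^2 * (15*(x1*s)^3*(x1^2-x1*s+s^2) - 45*(x1*s)^3 + 45*(x1*s)^2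
      + ((x1^2-x1*s+s^2)+3/2)^2*(x1^4-x1^3*s+x1^2*s^2-x1*s^3+s^4))) := by
    apply mul_pos (by linarith) (mul_pos (by positivity) hpos)
  linarith

lemma stmt9_same_sign (x1 y1 x2 y2 : ℝ) (hx : 0 < x1*x2)
    (e1 : x1*y1 = x2*y2)
    (e2 : x1*(3/2+x1^2-3*y1^2) = x2*(3/2+x2^2-3*y2^2)) : x1 = x2 := by
  have key : (x1 - x2) * (3/2*(x1*x2) + (x1*x2)*(x1^2+x1*x2+x2^2) + 3*(x1*y1)*(x2*y2)) = 0 := by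
    linear_combination (x1*x2)*e2 + 3*(x1*(x2*y2) + x2*(x1*y1))*e1
  have ht : (x1*y1)*(x2*y2) = (x2*y2)^2 := by rw [e1]; ring
  have pos : 0 < 3/2*(x1*x2) + (x1*x2)*(x1^2+x1*x2+x2^2) + 3*(x1*y1)*(x2*y2) := by
    have h1 : 0 ≤ x1^2+x1*x2+x2^2 := by nlinarith [sq_nonneg (x1+x2), sq_nonneg x1, sq_nonneg x2]
    nlinarith [mul_nonneg hx.le h1, sq_nonneg (x2*y2), ht]
  rcases mul_eq_zero.mp key with h|h
  · linarith
  · linarith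

lemma stmt9_quintic_inj {a b : ℝ} (h : a*(a^4+5) = b*(b^4+5)) : a = b := by
  have key : (a - b) * (a^4 + a^3*b + a^2*b^2 + a*b^3 + b^4 + 5) = 0 := by linear_combination h
  have pos : 0 < a^4 + a^3*b + a^2*b^2 + a*b^3 + b^4 + 5 := by
    nlinarith [sq_nonneg (a^2 - b^2), mul_nonneg (add_nonneg (sq_nonneg a) (sq_nonneg b)) (sq_nonneg (a+b)), sq_nonneg (a^2+b^2)]
  rcases mul_eq_zero.mp key with h'|h'
  · linarith
  · linarith

lemma stmt9_cubic_inj {a b : ℝ} (h : a*(3/2+a^2) = b*(3/2+b^2)) : a = b := by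
  have key : (a - b) * (3/2 + a^2 + a*b + b^2) = 0 := by linear_combination h
  have pos : 0 < 3/2 + a^2 + a*b + b^2 := by nlinarith [sq_nonneg (a+b), sq_nonneg a, sq_nonneg b]
  rcases mul_eq_zero.mp key with h'|h'
  · linarith
  · linarith

lemma stmt9_inj_main (x1 y1 x2 y2 : ℝ)
    (e1 : x1*y1 = x2*y2)
    (e2 : x1*(3/2+x1^2-3*y1^2) = x2*(3/2+x2^2-3*y2^2))
    (e3 : y1*(5*x1^4-10*x1^2*y1^2+y1^4+5) = y2*(5*x2^4-10*x2^2*y2^2+y2^4+5)) :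
    x1 = x2 ∧ y1 = y2 := by
  by_cases hx1 : x1 = 0
  · subst hx1
    by_cases hx2 : x2 = 0
    · subst hx2
      refine ⟨rfl, stmt9_quintic_inj ?_⟩
      linear_combination e3
    · have hy2 : y2 = 0 := by
        rcases mul_eq_zero.mp (show x2*y2 = 0 by linear_combination -e1) with h|h
        · exact absurd h hx2
        · exact h
      subst hy2
      exfalso
      have : x2*(3/2+x2^2) = 0 := by linear_combination -e2
      rcases mul_eq_zero.mp this with h|h
      · exact hx2 h
      · nlinarith [sq_nonneg x2]
  · by_cases hy1 : y1 = 0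
    · subst hy1
      have h0 : x2*y2 = 0 := by linear_combination -e1
      rcases mul_eq_zero.mp h0 with hx2|hy2
      · exfalso
        subst hx2
        have h2 : y2*(y2^4+5) = 0 := by linear_combination -e3
        have hy2 : y2 = 0 := by
          rcases mul_eq_zero.mp h2 with h|h
          · exact h
          · nlinarith [sq_nonneg (y2^2)]
        subst hy2
        simp at e2
        rcases e2 with h|h
        · exact hx1 h
        · nlinarith [sq_nonneg x1]
      · subst hy2
        refine ⟨stmt9_cubic_inj ?_, rfl⟩
        linear_combination e2
    · have hu : x1*y1 ≠ 0 := mul_ne_zero hx1 hy1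
      have hx2 : x2 ≠ 0 := by
        intro h; apply hu; rw [e1, h]; ring
      have hy2 : y2 ≠ 0 := by
        intro h; apply hu; rw [e1, h]; ring
      rcases lt_trichotomy (x1*x2) 0 with hneg|hzero|hpos
      · exfalso
        rcases lt_trichotomy x1 0 with h1|h1|h1
        · have h2 : 0 < x2 := by
            rcases lt_trichotomy x2 0 with h|h|h
            · nlinarith
            · exact absurd h hx2
            · exact h
          exact stmt9_opp x2 y2 x1 y1 h2 h1 hy2 e1.symm e2.symm e3.symm
        · exact hx1 h1
        · have h2 : x2 < 0 := by
            rcases lt_trichotomy x2 0 with h|h|h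
            · exact h
            · exact absurd h hx2
            · nlinarith
          exact stmt9_opp x1 y1 x2 y2 h1 h2 hy1 e1 e2 e3
      · exact absurd hzero (mul_ne_zero hx1 hx2)
      · have hx12 : x1 = x2 := stmt9_same_sign x1 y1 x2 y2 hpos e1 e2
        refine ⟨hx12, ?_⟩
        subst hx12
        exact mul_left_cancel₀ hx1 e1

noncomputable def stmt9Fm : ℝ × ℝ → ℝ × ℝ × ℝ := fun p =>
  (p.1 * p.2, p.1 * (3/2 + p.1*p.1 - 3*(p.2*p.2)),
   p.2 * (5*((p.1*p.1)*(p.1*p.1)) - 10*((p.1*p.1)*(p.2*p.2)) + (p.2*p.2)*(p.2*p.2) + 5))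

lemma stmt9Fm_hasDeriv (p : ℝ × ℝ) : ∃ L : (ℝ × ℝ) →L[ℝ] (ℝ × ℝ × ℝ), HasFDerivAt stmt9Fm L p ∧
    ∀ v : ℝ × ℝ, L v = (p.2*v.1 + p.1*v.2,
      (3/2 + 3*(p.1*p.1) - 3*(p.2*p.2))*v.1 - 6*(p.1*p.2)*v.2,
      (20*(p.1*p.2)*(p.1*p.1) - 20*(p.1*p.2)*(p.2*p.2))*v.1
        + (5*((p.1*p.1)*(p.1*p.1)) - 30*((p.1*p.1)*(p.2*p.2)) + 5*((p.2*p.2)*(p.2*p.2)) + 5)*v.2) := by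
  have h1 : HasFDerivAt (fun p : ℝ × ℝ => p.1) (ContinuousLinearMap.fst ℝ ℝ ℝ) p := hasFDerivAt_fst
  have h2 : HasFDerivAt (fun p : ℝ × ℝ => p.2) (ContinuousLinearMap.snd ℝ ℝ ℝ) p := hasFDerivAt_snd
  have hx2 := h1.mul h1
  have hy2 := h2.mul h2
  have c1 := h1.mul h2
  have c2 := h1.mul (((hasFDerivAt_const (3/2:ℝ) p).add hx2).sub (hy2.const_mul 3))
  have c3 := h2.mul (((((hx2.mul hx2).const_mul 5).sub ((hx2.mul hy2).const_mul 10)).add (hy2.mul hy2)).add (hasFDerivAt_const (5:ℝ) p))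
  refine ⟨_, (c1.prodMk (c2.prodMk c3) : HasFDerivAt stmt9Fm _ p), fun v => ?_⟩
  simp [ContinuousLinearMap.prod_apply]
  refine ⟨by ring, by ring, by ring⟩

lemma stmt9Fm_immersion (p : ℝ × ℝ) : Function.Injective (fderiv ℝ stmt9Fm p) := by
  obtain ⟨L, hL, hLv⟩ := stmt9Fm_hasDeriv p
  rw [hL.fderiv]
  rw [injective_iff_map_eq_zero]
  intro v hv
  rw [hLv v, Prod.ext_iff, Prod.ext_iff] at hv
  obtain ⟨e1, e2, e3⟩ := hv
  simp only [Prod.fst_zero, Prod.snd_zero] at e1 e2 e3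
  set x := p.1; set y := p.2; set a := v.1; set b := v.2
  have hab : a = 0 ∧ b = 0 := by
    by_cases hx : x = 0
    · rw [hx] at e1 e2 e3
      by_cases hy : y = 0
      · rw [hy] at e2 e3
        constructor
        · nlinarith [e2]
        · nlinarith [e3]
      · constructor
        · have : y * a = 0 := by linear_combination e1
          exact (mul_eq_zero.mp this).resolve_left hy
        · have h3 : (5*((y*y)*(y*y)) + 5) * b = 0 := by linear_combination e3
          have hpos : (5*((y*y)*(y*y)) + 5) ≠ 0 := by nlinarith [sq_nonneg (y*y)]
          exact (mul_eq_zero.mp h3).resolve_left hpos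
    · have hM : (3/2*x*(1+2*x^2+2*y^2)) ≠ 0 := by
        apply mul_ne_zero (by simpa using hx)
        positivity
      have ha : a * (3/2*x*(1+2*x^2+2*y^2)) = 0 := by
        linear_combination (6*x*y)*e1 + x*e2
      have hb : b * (3/2*x*(1+2*x^2+2*y^2)) = 0 := by
        linear_combination (3/2 + 3*x^2 - 3*y^2)*e1 - y*e2
      exact ⟨(mul_eq_zero.mp ha).resolve_right hM, (mul_eq_zero.mp hb).resolve_right hM⟩
  exact Prod.ext hab.1 hab.2

lemma stmt9_coercive_bound (R x y : ℝ) (hR : 0 ≤ R) (h1 : |x*y| ≤ R)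
    (h2 : |x*(3/2+x^2-3*y^2)| ≤ R)
    (h3 : |y*(5*x^4-10*x^2*y^2+y^4+5)| ≤ R) :
    |x| ≤ 30*R^2+4*R+20 ∧ |y| ≤ 30*R^2+4*R+20 := by
  have h1sq : (x*y)^2 ≤ R^2 := by
    rw [← sq_abs (x*y)]; exact pow_le_pow_left₀ (abs_nonneg _) h1 2
  have h3sq : (y*(5*x^4-10*x^2*y^2+y^4+5))^2 ≤ R^2 := by
    rw [← sq_abs _]; exact pow_le_pow_left₀ (abs_nonneg _) h3 2
  have h2sq : (x*(3/2+x^2-3*y^2))^2 ≤ R^2 := by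
    rw [← sq_abs _]; exact pow_le_pow_left₀ (abs_nonneg _) h2 2
  set Cy : ℝ := 10*R^2+R+6 with hCy
  set Cx : ℝ := 3*Cy+R+2 with hCx
  have hCy6 : 6 ≤ Cy := by nlinarith [sq_nonneg R]
  have hy2 : y^2 ≤ Cy := by
    by_contra hy
    push_neg at hy
    have hy4 : Cy^2 < y^4 := by nlinarith [hy, sq_nonneg y]
    have hE : R + 11 < 5*x^4-10*x^2*y^2+y^4+5 := by
      nlinarith [h1sq, hy4, sq_nonneg (x^2), sq_nonneg R, mul_nonneg hR hR, mul_nonneg (mul_nonneg hR hR) hR, sq_nonneg (R^2)]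
    have hy1 : 1 < y^2 := by linarith
    have hE2 : (R+11)^2 < (5*x^4-10*x^2*y^2+y^4+5)^2 := by nlinarith [hE, hR]
    have key : 1*(R+11)^2 < y^2*(5*x^4-10*x^2*y^2+y^4+5)^2 :=
      mul_lt_mul'' hy1 hE2 zero_le_one (by positivity)
    nlinarith [h3sq, key, hR]
  have hx2 : x^2 ≤ Cx := by
    by_contra hx
    push_neg at hx
    have hE : R + 7/2 < 3/2+x^2-3*y^2 := by nlinarith [hy2]
    have hx1 : 1 < x^2 := by nlinarith
    have hE2 : (R+7/2)^2 < (3/2+x^2-3*y^2)^2 := by nlinarith [hE, hR]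
    have key : 1*(R+7/2)^2 < x^2*(3/2+x^2-3*y^2)^2 :=
      mul_lt_mul'' hx1 hE2 zero_le_one (by positivity)
    nlinarith [h2sq, key, hR]
  constructor
  · have hM : x^2 ≤ 30*R^2+4*R+20 := by nlinarith [sq_nonneg R]
    nlinarith [sq_abs x, abs_nonneg x, sq_nonneg R, mul_nonneg hR hR]
  · have hM : y^2 ≤ 30*R^2+4*R+20 := by nlinarith [sq_nonneg R]
    nlinarith [sq_abs y, abs_nonneg y, sq_nonneg R, mul_nonneg hR hR]

lemma stmt9Fm_proper (K : Set (ℝ×ℝ×ℝ)) (hK : IsCompact K) : IsCompact (stmt9Fm ⁻¹' K) := by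
  have hcont : Continuous stmt9Fm := by unfold stmt9Fm; fun_prop
  obtain ⟨r, hr⟩ := hK.isBounded.subset_closedBall 0
  set R := max r 0 with hRdef
  have hR : 0 ≤ R := le_max_right r 0
  apply Metric.isCompact_of_isClosed_isBounded (hK.isClosed.preimage hcont)
  apply Bornology.IsBounded.subset (Metric.isBounded_closedBall (x := (0:ℝ×ℝ)) (r := 30*R^2+4*R+20))
  intro p hp
  have hz : ‖stmt9Fm p‖ ≤ R := by
    have := hr hp
    rw [Metric.mem_closedBall, dist_zero_right] at this
    exact le_trans this (le_max_left r 0)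
  obtain ⟨x, y⟩ := p
  have h1 : |x*y| ≤ R := by
    refine le_trans ?_ hz
    rw [← Real.norm_eq_abs]
    have : x*y = (stmt9Fm (x,y)).1 := by simp only [stmt9Fm]
    rw [this]
    exact norm_fst_le _
  have h2 : |x*(3/2+x^2-3*y^2)| ≤ R := by
    refine le_trans ?_ hz
    refine le_trans ?_ (norm_snd_le (stmt9Fm (x,y)))
    rw [← Real.norm_eq_abs]
    have : x*(3/2+x^2-3*y^2) = (stmt9Fm (x,y)).2.1 := by simp only [stmt9Fm]; ring
    rw [this]
    exact norm_fst_le _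
  have h3 : |y*(5*x^4-10*x^2*y^2+y^4+5)| ≤ R := by
    refine le_trans ?_ hz
    refine le_trans ?_ (norm_snd_le (stmt9Fm (x,y)))
    rw [← Real.norm_eq_abs]
    have : y*(5*x^4-10*x^2*y^2+y^4+5) = (stmt9Fm (x,y)).2.2 := by simp only [stmt9Fm]; ring
    rw [this]
    exact norm_snd_le _
  obtain ⟨hx, hy⟩ := stmt9_coercive_bound R x y hR h1 h2 h3
  rw [Metric.mem_closedBall, dist_zero_right, Prod.norm_def]
  simp only [Real.norm_eq_abs]
  exact max_le hx hy

end Aux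

/-- The complete properly embedded surface with a single end of type `(3,4,6)`
(parameter `a = 1/2`): `f(x,y) = (xy, x(3/2 + x² - 3y²), y(5x⁴ - 10x²y² + y⁴ + 5))`
is injective, an immersion, and proper. -/
theorem stmt_9 (f : ℝ × ℝ → ℝ × ℝ × ℝ)
    (hf : ∀ x y : ℝ, f (x, y) =
      (x * y, x * (3 / 2 + x ^ 2 - 3 * y ^ 2),
        y * (5 * x ^ 4 - 10 * x ^ 2 * y ^ 2 + y ^ 4 + 5))) :
    Function.Injective f ∧
    (∀ p : ℝ × ℝ, Function.Injective (fderiv ℝ f p)) ∧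
    (∀ K : Set (ℝ × ℝ × ℝ), IsCompact K → IsCompact (f ⁻¹' K)) := by
  have hfF : f = stmt9Fm := by
    funext p
    obtain ⟨x, y⟩ := p
    rw [hf x y]
    simp only [stmt9Fm]
    exact Prod.ext (by ring) (Prod.ext (by ring) (by ring))
  refine ⟨?_, ?_, ?_⟩
  · intro p q h
    obtain ⟨x1, y1⟩ := p
    obtain ⟨x2, y2⟩ := q
    rw [hf x1 y1, hf x2 y2, Prod.mk.injEq, Prod.mk.injEq] at h
    obtain ⟨e1, e2, e3⟩ := h
    obtain ⟨hx, hy⟩ := stmt9_inj_main x1 y1 x2 y2 e1 e2 e3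
    exact Prod.ext hx hy
  · intro p
    rw [hfF]
    exact stmt9Fm_immersion p
  · intro K hK
    rw [hfF]
    exact stmt9Fm_proper K hK
end

section
/- Let ζ = e^{2πi/3} and let D = ℂ ∖ {1, ζ, ζ̄} (the plane punctured at the three cube roots of unity). Define f : D → ℝ³ by f(z) = (2·log|z−1| − log|z−ζ| − log|z−ζ̄|, √3·(log|z−ζ| − log|z−ζ̄|), log|z³−1|). Then: (1) f is injective; (2) f is an immersion, i.e. its real derivative is injective at every point of D; (3) f is proper, i.e. the preimage of every compact subset of ℝ³ is compact (equivalently ‖f(z)‖ → ∞ as z approaches any of the three punctures and as |z| → ∞). -/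
open Complex Filter Function Real

noncomputable def dlog (c : ℂ) : ℂ →L[ℝ] ℝ :=
  Complex.reCLM.comp (((1 : ℂ →L[ℂ] ℂ).smulRight c⁻¹).restrictScalars ℝ)

lemma dlog_apply (c u : ℂ) : dlog c u = (u * c⁻¹).re := by
  simp [dlog, smul_eq_mul]

lemma re_mul_inv (U w : ℂ) :
    (U * w⁻¹).re = (U.re * w.re + U.im * w.im) / Complex.normSq w := by
  rw [← div_eq_mul_inv, Complex.div_re]; ring

lemma hasFDerivAt_logabs (p z : ℂ) (h : z ≠ p) :
    HasFDerivAt (fun w => Real.log (‖w - p‖)) (dlog (z - p)) z := by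
  have hzp : z - p ≠ 0 := sub_ne_zero.mpr h
  have hns : Complex.normSq (z - p) ≠ 0 := by
    simpa [Complex.normSq_eq_zero] using hzp
  have h1 : HasFDerivAt (fun w : ℂ => (w - p).re) Complex.reCLM z := by
    have := (Complex.reCLM.hasFDerivAt (x := z)).sub_const p.re
    simpa only [Complex.reCLM_apply, ← Complex.sub_re] using this
  have h2 : HasFDerivAt (fun w : ℂ => (w - p).im) Complex.imCLM z := by
    have := (Complex.imCLM.hasFDerivAt (x := z)).sub_const p.im
    simpa only [Complex.imCLM_apply, ← Complex.sub_im] using this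
  have hn : HasFDerivAt (fun w : ℂ => Complex.normSq (w - p))
      ((z - p).re • Complex.reCLM + (z - p).re • Complex.reCLM +
        ((z - p).im • Complex.imCLM + (z - p).im • Complex.imCLM)) z := by
    have := (h1.mul h1).add (h2.mul h2)
    simpa only [Complex.normSq_apply, Pi.mul_def, Pi.add_def] using this
  have hlog := (hn.log hns).const_mul (2⁻¹ : ℝ)
  have hev : (fun w => (2⁻¹ : ℝ) * Real.log (Complex.normSq (w - p)))
      =ᶠ[nhds z] fun w => Real.log (‖w - p‖) := by
    filter_upwards [isOpen_ne_fun continuous_id (continuous_const (y := p))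
      |>.mem_nhds (by exact h)] with w hw
    rw [Complex.norm_def, Real.log_sqrt (Complex.normSq_nonneg _)]
    ring
  have hfin := hlog.congr_of_eventuallyEq hev.symm
  refine HasFDerivAt.congr_fderiv hfin ?_
  ext u
  simp only [dlog_apply, ContinuousLinearMap.smul_apply, ContinuousLinearMap.add_apply,
      Complex.reCLM_apply, Complex.imCLM_apply, smul_eq_mul]
  rw [← div_eq_mul_inv, Complex.div_re]
  field_simp
  ring

/-- The properly embedded sphere with four ends of type `(0,0,1)` and total
curvature `-4π`, punctured at the three cube roots of unity. -/
theorem stmt_10 (ζ : ℂ) (hζ : ζ = Complex.exp (2 * Real.pi * I / 3))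
    (D : Set ℂ) (hD : D = {z : ℂ | z ≠ 1 ∧ z ≠ ζ ∧ z ≠ (starRingEnd ℂ) ζ})
    (f : ℂ → ℝ × ℝ × ℝ)
    (hf : ∀ z, f z =
      (2 * Real.log (‖z - 1‖) - Real.log (‖z - ζ‖)
          - Real.log (‖z - (starRingEnd ℂ) ζ‖),
       Real.sqrt 3 * (Real.log (‖z - ζ‖)
          - Real.log (‖z - (starRingEnd ℂ) ζ‖)),
       Real.log (‖z ^ 3 - 1‖))) :
    Set.InjOn f D ∧
    (∀ z ∈ D, Function.Injective (fderiv ℝ f z)) ∧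
    (∀ K : Set (ℝ × ℝ × ℝ), IsCompact K →
      IsCompact {z ∈ D | f z ∈ K}) := by
  have hfe : f = fun z => (2 * Real.log (‖z - 1‖) - Real.log (‖z - ζ‖)
          - Real.log (‖z - (starRingEnd ℂ) ζ‖),
       Real.sqrt 3 * (Real.log (‖z - ζ‖)
          - Real.log (‖z - (starRingEnd ℂ) ζ‖)),
       Real.log (‖z ^ 3 - 1‖)) := funext hf
  subst hfe
  clear hf
  set c : ℂ := (starRingEnd ℂ) ζ with hcdef
  -- basic facts about ζ
  have hs3 : (0:ℝ) < Real.sqrt 3 := Real.sqrt_pos.mpr (by norm_num)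
  have hs3sq : Real.sqrt 3 ^ 2 = 3 := Real.sq_sqrt (by norm_num)
  have hre : ζ.re = -(1/2) ∧ ζ.im = Real.sqrt 3 / 2 := by
    have h : (2 * (Real.pi:ℂ) * I / 3) = ((2 * Real.pi / 3 : ℝ) : ℂ) * I := by
      push_cast; ring
    rw [h] at hζ
    have hre : ζ.re = Real.cos (2 * Real.pi / 3) := by
      rw [hζ, Complex.exp_ofReal_mul_I_re]
    have him : ζ.im = Real.sin (2 * Real.pi / 3) := by
      rw [hζ, Complex.exp_ofReal_mul_I_im]
    have e : 2 * Real.pi / 3 = Real.pi - Real.pi / 3 := by ring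
    constructor
    · rw [hre, e, Real.cos_pi_sub, Real.cos_pi_div_three]
    · rw [him, e, Real.sin_pi_sub, Real.sin_pi_div_three]
  obtain ⟨hζre, hζim⟩ := hre
  have hcre : c.re = -(1/2) := by rw [hcdef, Complex.conj_re, hζre]
  have hcim : c.im = -(Real.sqrt 3 / 2) := by rw [hcdef, Complex.conj_im, hζim]
  have h1 : ζ + c = -1 := by
    apply Complex.ext <;>
      simp [Complex.add_re, Complex.add_im, hζre, hζim, hcre, hcim] <;> norm_num
  have h2 : ζ * c = 1 := by
    apply Complex.ext <;>
      simp [Complex.mul_re, Complex.mul_im, hζre, hζim, hcre, hcim] <;> nlinarith [hs3sq]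
  have hfac : ∀ w : ℂ, (w - 1) * ((w - ζ) * (w - c)) = w ^ 3 - 1 := by
    intro w
    linear_combination (w - w^2) * h1 + (w - 1) * h2
  have hlog3 : ∀ w : ℂ, w ≠ 1 → w ≠ ζ → w ≠ c →
      Real.log (‖w ^ 3 - 1‖) =
        Real.log (‖w - 1‖) + Real.log (‖w - ζ‖)
          + Real.log (‖w - c‖) := by
    intro w hw1 hw2 hw3
    have e1 : ‖w - 1‖ ≠ 0 := norm_ne_zero_iff.mpr (sub_ne_zero.mpr hw1)
    have e2 : ‖w - ζ‖ ≠ 0 := norm_ne_zero_iff.mpr (sub_ne_zero.mpr hw2)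
    have e3 : ‖w - c‖ ≠ 0 := norm_ne_zero_iff.mpr (sub_ne_zero.mpr hw3)
    rw [← hfac w, norm_mul, norm_mul, Real.log_mul e1 (mul_ne_zero e2 e3),
      Real.log_mul e2 e3]
    ring
  have hDopen : IsOpen D := by
    rw [hD]
    have : {z : ℂ | z ≠ 1 ∧ z ≠ ζ ∧ z ≠ c} =
        ({(1:ℂ)}ᶜ : Set ℂ) ∩ ({ζ}ᶜ ∩ {c}ᶜ) := by
      ext w; simp [Set.mem_setOf_eq]
    rw [this]
    exact isOpen_compl_singleton.inter (isOpen_compl_singleton.inter isOpen_compl_singleton)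
  have hmemD : ∀ z ∈ D, z ≠ 1 ∧ z ≠ ζ ∧ z ≠ c := by
    intro z hz; rw [hD] at hz; exact hz
  -- the derivative
  have hF : ∀ z ∈ D, HasFDerivAt
      (fun z : ℂ => (2 * Real.log (‖z - 1‖) - Real.log (‖z - ζ‖)
          - Real.log (‖z - c‖),
       Real.sqrt 3 * (Real.log (‖z - ζ‖) - Real.log (‖z - c‖)),
       Real.log (‖z ^ 3 - 1‖)))
      ((((2:ℝ) • dlog (z - 1) - dlog (z - ζ)) - dlog (z - c)).prod
        (((Real.sqrt 3) • (dlog (z - ζ) - dlog (z - c))).prod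
          (dlog (z - 1) + dlog (z - ζ) + dlog (z - c)))) z := by
    intro z hz
    obtain ⟨hz1, hz2, hz3⟩ := hmemD z hz
    have hd1 := hasFDerivAt_logabs 1 z hz1
    have hd2 := hasFDerivAt_logabs ζ z hz2
    have hd3 := hasFDerivAt_logabs c z hz3
    have comp1 := ((hd1.const_mul (2:ℝ)).sub hd2).sub hd3
    have comp2 := (hd2.sub hd3).const_mul (Real.sqrt 3)
    have comp3 : HasFDerivAt (fun w : ℂ => Real.log (‖w ^ 3 - 1‖))
        (dlog (z - 1) + dlog (z - ζ) + dlog (z - c)) z := by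
      refine ((hd1.add hd2).add hd3).congr_of_eventuallyEq ?_
      filter_upwards [hDopen.mem_nhds hz] with w hw
      obtain ⟨hw1, hw2, hw3⟩ := hmemD w hw
      exact hlog3 w hw1 hw2 hw3
    exact comp1.prodMk (comp2.prodMk comp3)
  refine ⟨?_, ?_, ?_⟩
  · -- injectivity
    intro z hz w hw hzw
    obtain ⟨hz1, hz2, hz3⟩ := hmemD z hz
    obtain ⟨hw1, hw2, hw3⟩ := hmemD w hw
    simp only [Prod.mk.injEq] at hzw
    obtain ⟨e1, e2, e3⟩ := hzw
    rw [hlog3 z hz1 hz2 hz3, hlog3 w hw1 hw2 hw3] at e3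
    set az := Real.log (‖z - 1‖)
    set bz := Real.log (‖z - ζ‖)
    set cz := Real.log (‖z - c‖)
    set aw := Real.log (‖w - 1‖)
    set bw := Real.log (‖w - ζ‖)
    set cw := Real.log (‖w - c‖)
    have ebc : bz - cz = bw - cw := mul_left_cancel₀ (ne_of_gt hs3) e2
    have ha : az = aw := by linarith
    have hb : bz = bw := by linarith
    have hcc : cz = cw := by linarith
    -- turn log equalities into abs equalities
    have habs : ∀ u v : ℂ, u ≠ 0 → v ≠ 0 → Real.log (‖u‖) = Real.log (‖v‖) →
        Complex.normSq u = Complex.normSq v := by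
      intro u v hu hv hlog
      have h1 : ‖u‖ = ‖v‖ := by
        have := congrArg Real.exp hlog
        rwa [Real.exp_log (norm_pos_iff.mpr hu), Real.exp_log (norm_pos_iff.mpr hv)] at this
      rw [← Complex.sq_norm, ← Complex.sq_norm, h1]
    have P1 := habs _ _ (sub_ne_zero.mpr hz1) (sub_ne_zero.mpr hw1) ha
    have P2 := habs _ _ (sub_ne_zero.mpr hz2) (sub_ne_zero.mpr hw2) hb
    have P3 := habs _ _ (sub_ne_zero.mpr hz3) (sub_ne_zero.mpr hw3) hcc
    simp only [Complex.normSq_apply, Complex.sub_re, Complex.sub_im, Complex.one_re,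
      Complex.one_im, hζre, hζim, hcre, hcim] at P1 P2 P3
    have hzi : z.im = w.im := by
      have h5 : Real.sqrt 3 * z.im = Real.sqrt 3 * w.im := by linear_combination (P3 - P2) / 2
      exact mul_left_cancel₀ (ne_of_gt hs3) h5
    have hzr : z.re = w.re := by linear_combination (P2 - P1) / 3 + (Real.sqrt 3 / 3) * hzi
    exact Complex.ext hzr hzi
  · -- immersion
    intro z hz
    obtain ⟨hz1, hz2, hz3⟩ := hmemD z hz
    rw [(hF z hz).fderiv]
    intro u v huv
    have h0 : ((((2:ℝ) • dlog (z - 1) - dlog (z - ζ)) - dlog (z - c)).prod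
        (((Real.sqrt 3) • (dlog (z - ζ) - dlog (z - c))).prod
          (dlog (z - 1) + dlog (z - ζ) + dlog (z - c)))) (u - v) = 0 := by
      rw [map_sub, huv, sub_self]
    set U := u - v with hU
    simp only [ContinuousLinearMap.prod_apply, ContinuousLinearMap.sub_apply,
      ContinuousLinearMap.add_apply, ContinuousLinearMap.smul_apply, smul_eq_mul,
      Prod.mk_eq_zero] at h0
    obtain ⟨E1, E2, E3⟩ := h0
    set q1 := dlog (z - 1) U with hq1
    set q2 := dlog (z - ζ) U with hq2
    set q3 := dlog (z - c) U with hq3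
    have hq23 : q2 = q3 := by
      have : q2 - q3 = 0 := by
        rcases mul_eq_zero.mp E2 with h | h
        · exact absurd h (ne_of_gt hs3)
        · exact h
      linarith
    have hq10 : q1 = 0 := by linarith
    have hq20 : q2 = 0 := by linarith
    have hq30 : q3 = 0 := by linarith
    have hns : ∀ p : ℂ, z ≠ p → Complex.normSq (z - p) ≠ 0 := fun p hp => by
      simpa [Complex.normSq_eq_zero] using sub_ne_zero.mpr hp
    have key : ∀ p : ℂ, z ≠ p → dlog (z - p) U = 0 →
        U.re * (z - p).re + U.im * (z - p).im = 0 := by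
      intro p hp h
      rw [dlog_apply, re_mul_inv] at h
      exact (div_eq_zero_iff.mp h).resolve_right (hns p hp)
    have k1 := key 1 hz1 hq10
    have k2 := key ζ hz2 (hq2 ▸ hq20)
    have k3 := key c hz3 (hq3 ▸ hq30)
    simp only [Complex.sub_re, Complex.sub_im, Complex.one_re, Complex.one_im,
      hζre, hζim, hcre, hcim] at k1 k2 k3
    have hUim : U.im = 0 := by
      have h5 : U.im * Real.sqrt 3 = 0 := by linear_combination k3 - k2
      exact (mul_eq_zero.mp h5).resolve_right (ne_of_gt hs3)
    have hUre : U.re = 0 := by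
      have h6 : U.re * (3/2) = 0 := by
        linear_combination k2 - k1 + (Real.sqrt 3 / 2) * hUim
      linarith
    have : U = 0 := Complex.ext hUre hUim
    exact sub_eq_zero.mp (hU ▸ this)
  · -- properness
    intro K hK
    obtain ⟨M0, hM0⟩ := hK.isBounded.subset_closedBall (0 : ℝ × ℝ × ℝ)
    set M := max M0 0 with hM
    have hMnn : (0:ℝ) ≤ M := le_max_right _ _
    have hMK : ∀ y ∈ K, ‖y‖ ≤ M := by
      intro y hy
      have := hM0 hy
      rw [Metric.mem_closedBall, dist_zero_right] at this
      exact this.trans (le_max_left _ _)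
    set R := 2 * M with hR
    have hRnn : (0:ℝ) ≤ R := by positivity
    have hs31 : (1:ℝ) ≤ Real.sqrt 3 := by
      nlinarith [hs3, hs3sq]
    -- bound lemma
    have hSb : ∀ w : ℂ, w ∈ D →
        (2 * Real.log (‖w - 1‖) - Real.log (‖w - ζ‖)
          - Real.log (‖w - c‖),
         Real.sqrt 3 * (Real.log (‖w - ζ‖) - Real.log (‖w - c‖)),
         Real.log (‖w ^ 3 - 1‖)) ∈ K →
        (Real.exp (-R) ≤ ‖w - 1‖ ∧ ‖w - 1‖ ≤ Real.exp R) ∧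
        (Real.exp (-R) ≤ ‖w - ζ‖ ∧ ‖w - ζ‖ ≤ Real.exp R) ∧
        (Real.exp (-R) ≤ ‖w - c‖ ∧ ‖w - c‖ ≤ Real.exp R) := by
      intro w hw hwK
      obtain ⟨hw1, hw2, hw3⟩ := hmemD w hw
      set a := Real.log (‖w - 1‖) with hadef
      set b := Real.log (‖w - ζ‖) with hbdef
      set d := Real.log (‖w - c‖) with hddef
      have hnorm := hMK _ hwK
      have hx : |2 * a - b - d| ≤ M := by
        have := (norm_fst_le ((2 * a - b - d, (Real.sqrt 3 * (b - d),
          Real.log (‖w ^ 3 - 1‖))) : ℝ × ℝ × ℝ)).trans hnorm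
        simpa [Real.norm_eq_abs] using this
      have hy : Real.sqrt 3 * |b - d| ≤ M := by
        have h1 := norm_snd_le ((2 * a - b - d, (Real.sqrt 3 * (b - d),
          Real.log (‖w ^ 3 - 1‖))) : ℝ × ℝ × ℝ)
        have h2 := norm_fst_le ((Real.sqrt 3 * (b - d),
          Real.log (‖w ^ 3 - 1‖)) : ℝ × ℝ)
        have := (h2.trans h1).trans hnorm
        simpa [Real.norm_eq_abs, abs_mul, abs_of_pos hs3] using this
      have ht : |a + b + d| ≤ M := by
        have h1 := norm_snd_le ((2 * a - b - d, (Real.sqrt 3 * (b - d),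
          Real.log (‖w ^ 3 - 1‖))) : ℝ × ℝ × ℝ)
        have h2 := norm_snd_le ((Real.sqrt 3 * (b - d),
          Real.log (‖w ^ 3 - 1‖)) : ℝ × ℝ)
        have := (h2.trans h1).trans hnorm
        rw [hlog3 w hw1 hw2 hw3] at this
        simpa [Real.norm_eq_abs, hadef, hbdef, hddef] using this
      have hbd : |b - d| ≤ M := by
        nlinarith [abs_nonneg (b - d)]
      obtain ⟨hx1, hx2⟩ := abs_le.mp hx
      obtain ⟨ht1, ht2⟩ := abs_le.mp ht
      obtain ⟨hb1, hb2⟩ := abs_le.mp hbd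
      have ha' : |a| ≤ R := abs_le.mpr ⟨by linarith, by linarith⟩
      have hb' : |b| ≤ R := abs_le.mpr ⟨by linarith, by linarith⟩
      have hd' : |d| ≤ R := abs_le.mpr ⟨by linarith, by linarith⟩
      have conv : ∀ (x : ℂ), x ≠ 0 → |Real.log (‖x‖)| ≤ R →
          Real.exp (-R) ≤ ‖x‖ ∧ ‖x‖ ≤ Real.exp R := by
        intro x hx0 hlx
        obtain ⟨hl1, hl2⟩ := abs_le.mp hlx
        have hpos := norm_pos_iff.mpr hx0
        constructor
        · calc Real.exp (-R) ≤ Real.exp (Real.log (‖x‖)) :=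
            Real.exp_le_exp.mpr hl1
          _ = ‖x‖ := Real.exp_log hpos
        · calc ‖x‖ = Real.exp (Real.log (‖x‖)) :=
            (Real.exp_log hpos).symm
          _ ≤ Real.exp R := Real.exp_le_exp.mpr hl2
      exact ⟨conv _ (sub_ne_zero.mpr hw1) ha', conv _ (sub_ne_zero.mpr hw2) hb',
        conv _ (sub_ne_zero.mpr hw3) hd'⟩
    set S := {z ∈ D | (2 * Real.log (‖z - 1‖) - Real.log (‖z - ζ‖)
          - Real.log (‖z - c‖),
       Real.sqrt 3 * (Real.log (‖z - ζ‖) - Real.log (‖z - c‖)),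
       Real.log (‖z ^ 3 - 1‖)) ∈ K} with hS
    have hbdd : Bornology.IsBounded S := by
      apply (Metric.isBounded_closedBall (x := (1:ℂ)) (r := Real.exp R)).subset
      rintro z ⟨hzD, hzK⟩
      rw [Metric.mem_closedBall, Complex.dist_eq]
      exact ((hSb z hzD hzK).1).2
    have hclosed : IsClosed S := by
      rw [← isOpen_compl_iff, isOpen_iff_mem_nhds]
      intro z hz
      by_cases hzD : z ∈ D
      · have hfz : (2 * Real.log (‖z - 1‖) - Real.log (‖z - ζ‖)
            - Real.log (‖z - c‖),
            Real.sqrt 3 * (Real.log (‖z - ζ‖) - Real.log (‖z - c‖)),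
            Real.log (‖z ^ 3 - 1‖)) ∉ K := by
          intro hmem
          exact hz ⟨hzD, hmem⟩
        have hcont := (hF z hzD).continuousAt
        have hnh := hcont.preimage_mem_nhds (hK.isClosed.isOpen_compl.mem_nhds hfz)
        refine mem_of_superset hnh ?_
        intro w hw hwS
        exact hw hwS.2
      · have hz3 : z = 1 ∨ z = ζ ∨ z = c := by
          rw [hD] at hzD
          simp only [Set.mem_setOf_eq, not_and_or, not_not] at hzD
          tauto
        refine mem_of_superset (Metric.ball_mem_nhds z (Real.exp_pos (-R))) ?_
        intro w hw hwS
        rw [Metric.mem_ball, Complex.dist_eq] at hw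
        obtain ⟨B1, B2, B3⟩ := hSb w hwS.1 hwS.2
        rcases hz3 with h | h | h
        · rw [h] at hw; linarith [B1.1]
        · rw [h] at hw; linarith [B2.1]
        · rw [h] at hw; linarith [B3.1]
    exact Metric.isCompact_of_isClosed_isBounded hclosed hbdd
end

section
/- Let D = ℝ² ∖ {(1,0), (−1,0)} and define f : D → ℝ³ by f(x,y) = (−y, log( ((1−x)²+y²) / ((1+x)²+y²) ), 2·log( 4x²y² + (x²−y²−1)² )). Then: (1) f is injective; (2) f is an immersion, i.e. its (Fréchet) derivative is injective at every point of D; (3) f is proper, i.e. the preimage of every compact subset of ℝ³ is compact (equivalently ‖f‖ → ∞ as (x,y) approaches (±1,0) and as |(x,y)| → ∞). -/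
open Filter Function

private lemma auxpos11 (x y a : ℝ) (h : (x,y) ≠ (a,0)) : 0 < (a - x)^2 + y^2 := by
  rcases eq_or_ne x a with rfl | hx
  · have hy : y ≠ 0 := fun hy => h (by rw [hy])
    positivity
  · have hax : a - x ≠ 0 := sub_ne_zero.mpr (Ne.symm hx)
    positivity

set_option maxHeartbeats 2000000 in
/-- The properly embedded sphere with two ends of type `(0,0,1)` and one end
of type `(2,0,1)`, defined on `ℝ² ∖ {(±1,0)}`. -/
theorem stmt_11 (D : Set (ℝ × ℝ))
    (hD : D = {p : ℝ × ℝ | p ≠ (1, 0) ∧ p ≠ (-1, 0)})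
    (f : ℝ × ℝ → ℝ × ℝ × ℝ)
    (hf : ∀ x y : ℝ, f (x, y) =
      (-y,
       Real.log (((1 - x) ^ 2 + y ^ 2) / ((1 + x) ^ 2 + y ^ 2)),
       2 * Real.log (4 * x ^ 2 * y ^ 2 + (x ^ 2 - y ^ 2 - 1) ^ 2))) :
    Set.InjOn f D ∧
    (∀ p ∈ D, Function.Injective (fderiv ℝ f p)) ∧
    (∀ K : Set (ℝ × ℝ × ℝ), IsCompact K →
      IsCompact {p ∈ D | f p ∈ K}) := by
  have hfg : f = fun p : ℝ × ℝ => (-p.2,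
      Real.log (((1 - p.1) ^ 2 + p.2 ^ 2) / ((1 + p.1) ^ 2 + p.2 ^ 2)),
      2 * Real.log (4 * p.1 ^ 2 * p.2 ^ 2 + (p.1 ^ 2 - p.2 ^ 2 - 1) ^ 2)) :=
    funext fun p => hf p.1 p.2
  subst hD
  refine ⟨?_, ?_, ?_⟩
  · -- Injectivity
    rintro ⟨x, y⟩ ⟨h1, h2⟩ ⟨a, b⟩ ⟨g1, g2⟩ heq
    rw [hf x y, hf a b, Prod.mk.injEq, Prod.mk.injEq] at heq
    obtain ⟨e1, e2, e3⟩ := heq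
    have hy : y = b := by linarith
    subst hy
    have hN1 : 0 < (1 - x) ^ 2 + y ^ 2 := by have := auxpos11 x y 1 h1; nlinarith
    have hM1 : 0 < (1 + x) ^ 2 + y ^ 2 := by have := auxpos11 x y (-1) h2; nlinarith
    have hN2 : 0 < (1 - a) ^ 2 + y ^ 2 := by have := auxpos11 a y 1 g1; nlinarith
    have hM2 : 0 < (1 + a) ^ 2 + y ^ 2 := by have := auxpos11 a y (-1) g2; nlinarith
    have hQ1 : (0:ℝ) < 4 * x ^ 2 * y ^ 2 + (x ^ 2 - y ^ 2 - 1) ^ 2 := by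
      have e : 4 * x ^ 2 * y ^ 2 + (x ^ 2 - y ^ 2 - 1) ^ 2
          = ((1 - x) ^ 2 + y ^ 2) * ((1 + x) ^ 2 + y ^ 2) := by ring
      rw [e]; exact mul_pos hN1 hM1
    have hQ2 : (0:ℝ) < 4 * a ^ 2 * y ^ 2 + (a ^ 2 - y ^ 2 - 1) ^ 2 := by
      have e : 4 * a ^ 2 * y ^ 2 + (a ^ 2 - y ^ 2 - 1) ^ 2
          = ((1 - a) ^ 2 + y ^ 2) * ((1 + a) ^ 2 + y ^ 2) := by ring
      rw [e]; exact mul_pos hN2 hM2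
    have eQ : 4 * x ^ 2 * y ^ 2 + (x ^ 2 - y ^ 2 - 1) ^ 2
        = 4 * a ^ 2 * y ^ 2 + (a ^ 2 - y ^ 2 - 1) ^ 2 :=
      Real.log_injOn_pos (Set.mem_Ioi.mpr hQ1) (Set.mem_Ioi.mpr hQ2) (by linarith)
    have eP : ((1 - x) ^ 2 + y ^ 2) * ((1 + x) ^ 2 + y ^ 2)
        = ((1 - a) ^ 2 + y ^ 2) * ((1 + a) ^ 2 + y ^ 2) := by linear_combination eQ
    have eR : ((1 - x) ^ 2 + y ^ 2) / ((1 + x) ^ 2 + y ^ 2)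
        = ((1 - a) ^ 2 + y ^ 2) / ((1 + a) ^ 2 + y ^ 2) :=
      Real.log_injOn_pos (Set.mem_Ioi.mpr (div_pos hN1 hM1))
        (Set.mem_Ioi.mpr (div_pos hN2 hM2)) e2
    have eX : ((1 - x) ^ 2 + y ^ 2) * ((1 + a) ^ 2 + y ^ 2)
        = ((1 - a) ^ 2 + y ^ 2) * ((1 + x) ^ 2 + y ^ 2) :=
      (div_eq_div_iff hM1.ne' hM2.ne').mp eR
    have hNN : ((1 - x) ^ 2 + y ^ 2 - ((1 - a) ^ 2 + y ^ 2))
        * (((1 + x) ^ 2 + y ^ 2) + ((1 + a) ^ 2 + y ^ 2)) = 0 := by linear_combination eP + eX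
    have hN12 : (1 - x) ^ 2 + y ^ 2 = (1 - a) ^ 2 + y ^ 2 := by
      rcases mul_eq_zero.mp hNN with h | h
      · linarith [sub_eq_zero.mp h]
      · nlinarith
    have hM12 : (1 + x) ^ 2 + y ^ 2 = (1 + a) ^ 2 + y ^ 2 := by
      have : ((1 - a) ^ 2 + y ^ 2) * (((1 + x) ^ 2 + y ^ 2) - ((1 + a) ^ 2 + y ^ 2)) = 0 := by
        linear_combination -eX + ((1 + a) ^ 2 + y ^ 2) * hN12
      rcases mul_eq_zero.mp this with h | h
      · exact absurd h hN2.ne'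
      · linarith [sub_eq_zero.mp h]
    have hx : x = a := by linear_combination (hM12 - hN12)/4
    rw [hx]
  · -- Immersion
    rintro ⟨x, y⟩ ⟨h1, h2⟩
    have hN : 0 < (1 - x) ^ 2 + y ^ 2 := by have := auxpos11 x y 1 h1; nlinarith
    have hM : 0 < (1 + x) ^ 2 + y ^ 2 := by have := auxpos11 x y (-1) h2; nlinarith
    have hQ : 0 < 4 * x ^ 2 * y ^ 2 + (x ^ 2 - y ^ 2 - 1) ^ 2 := by
      have e : 4 * x ^ 2 * y ^ 2 + (x ^ 2 - y ^ 2 - 1) ^ 2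
          = ((1 - x) ^ 2 + y ^ 2) * ((1 + x) ^ 2 + y ^ 2) := by ring
      rw [e]; exact mul_pos hN hM
    have hfst := hasFDerivAt_fst (𝕜:=ℝ) (E:=ℝ) (F:=ℝ) (p:=(x,y))
    have hsnd := hasFDerivAt_snd (𝕜:=ℝ) (E:=ℝ) (F:=ℝ) (p:=(x,y))
    have hA := (hasFDerivAt_const (1:ℝ) ((x,y):ℝ×ℝ)).sub hfst
    have hB := (hasFDerivAt_const (1:ℝ) ((x,y):ℝ×ℝ)).add hfst
    have hNder : HasFDerivAt (fun p : ℝ×ℝ => (1 - p.1) ^ 2 + p.2 ^ 2) _ (x,y) :=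
      ((hA.mul hA).add (hsnd.mul hsnd)).congr_of_eventuallyEq
        (Filter.Eventually.of_forall fun p => by simp only [Pi.add_apply, Pi.sub_apply, Pi.mul_apply, Pi.pow_apply]; ring)
    have hMder : HasFDerivAt (fun p : ℝ×ℝ => (1 + p.1) ^ 2 + p.2 ^ 2) _ (x,y) :=
      ((hB.mul hB).add (hsnd.mul hsnd)).congr_of_eventuallyEq
        (Filter.Eventually.of_forall fun p => by simp only [Pi.add_apply, Pi.sub_apply, Pi.mul_apply, Pi.pow_apply]; ring)
    have hQder : HasFDerivAt
        (fun p : ℝ×ℝ => 4 * p.1 ^ 2 * p.2 ^ 2 + (p.1 ^ 2 - p.2 ^ 2 - 1) ^ 2) _ (x,y) :=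
      ((((hfst.mul hfst).const_mul 4).mul (hsnd.mul hsnd)).add
        ((((hfst.mul hfst).sub (hsnd.mul hsnd)).sub (hasFDerivAt_const (1:ℝ) _)).mul
         (((hfst.mul hfst).sub (hsnd.mul hsnd)).sub
           (hasFDerivAt_const (1:ℝ) _)))).congr_of_eventuallyEq
        (Filter.Eventually.of_forall fun p => by simp only [Pi.add_apply, Pi.sub_apply, Pi.mul_apply, Pi.pow_apply]; ring)
    have hUopen : IsOpen {p : ℝ×ℝ | 0 < (1 - p.1) ^ 2 + p.2 ^ 2 ∧ 0 < (1 + p.1) ^ 2 + p.2 ^ 2} := by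
      have c1 : Continuous (fun p : ℝ×ℝ => (1 - p.1) ^ 2 + p.2 ^ 2) := by fun_prop
      have c2 : Continuous (fun p : ℝ×ℝ => (1 + p.1) ^ 2 + p.2 ^ 2) := by fun_prop
      exact (isOpen_lt continuous_const c1).inter (isOpen_lt continuous_const c2)
    have hev : (fun p : ℝ×ℝ => Real.log (((1 - p.1) ^ 2 + p.2 ^ 2) / ((1 + p.1) ^ 2 + p.2 ^ 2)))
        =ᶠ[nhds ((x,y) : ℝ×ℝ)]
          fun p => Real.log ((1 - p.1) ^ 2 + p.2 ^ 2) - Real.log ((1 + p.1) ^ 2 + p.2 ^ 2) := by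
      filter_upwards [hUopen.mem_nhds ⟨hN, hM⟩] with p hp
      exact Real.log_div hp.1.ne' hp.2.ne'
    have h2der : HasFDerivAt (fun p : ℝ×ℝ =>
        Real.log (((1 - p.1) ^ 2 + p.2 ^ 2) / ((1 + p.1) ^ 2 + p.2 ^ 2))) _ (x,y) :=
      (((hNder.log hN.ne').sub (hMder.log hM.ne')).congr_of_eventuallyEq hev)
    have h3der : HasFDerivAt (fun p : ℝ×ℝ =>
        2 * Real.log (4 * p.1 ^ 2 * p.2 ^ 2 + (p.1 ^ 2 - p.2 ^ 2 - 1) ^ 2)) _ (x,y) :=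
      (hQder.log hQ.ne').const_mul 2
    have h1der : HasFDerivAt (fun p : ℝ×ℝ => -p.2) _ (x,y) := hsnd.neg
    have hL := h1der.prodMk (h2der.prodMk h3der)
    rw [hfg, hL.fderiv]
    intro v w hvw
    have hu := sub_eq_zero.mpr hvw
    rw [← map_sub] at hu
    refine sub_eq_zero.mp ?_
    set u := v - w with hudef
    have e1 := congrArg Prod.fst hu
    have e2 := congrArg (fun z : ℝ×ℝ×ℝ => z.2.1) hu
    have e3 := congrArg (fun z : ℝ×ℝ×ℝ => z.2.2) hu
    simp at e1 e2 e3
    rw [e1] at e2 e3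
    field_simp [hN.ne', hM.ne', hQ.ne'] at e2 e3
    have k2 : (((x-1)*((1+x)^2+y^2) - (x+1)*((1-x)^2+y^2)) * u.1) * (2*((1-x)^2+y^2)) = 0 := by
      linear_combination ((1-x)^2+y^2) * e2
    have k3 : (x*(x^2+y^2-1) * u.1) * 8 = 0 := by
      have hQ' : x ^ 2 * y ^ 2 * 4 + (x ^ 2 - y ^ 2 - 1) ^ 2 ≠ 0 := by convert hQ.ne' using 1; ring
      rw [div_eq_iff hQ'] at e3
      linear_combination e3
    have hu1 : u.1 = 0 := by
      by_contra hne
      have c2 : (x-1)*((1+x)^2+y^2) - (x+1)*((1-x)^2+y^2) = 0 := by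
        rcases mul_eq_zero.mp k2 with h | h
        · rcases mul_eq_zero.mp h with h' | h'
          · exact h'
          · exact absurd h' hne
        · exact absurd h (by positivity)
      have c3 : x*(x^2+y^2-1) = 0 := by
        rcases mul_eq_zero.mp k3 with h | h
        · rcases mul_eq_zero.mp h with h' | h'
          · exact h'
          · exact absurd h' hne
        · norm_num at h
      have hy2 : y^2 = x^2 - 1 := by linear_combination -c2/2
      have hxy : x * y^2 = 0 := by linear_combination c3/2 + (x/2)*hy2
      rcases mul_eq_zero.mp hxy with h | h
      · nlinarith [sq_nonneg y]
      · have hx2 : (x-1)*(x+1) = 0 := by linear_combination h - hy2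
        rcases mul_eq_zero.mp hx2 with h' | h'
        · nlinarith
        · nlinarith
    exact Prod.ext hu1 e1
  · -- Properness
    intro K hK
    obtain ⟨R, hRK⟩ := hK.isBounded.subset_closedBall 0
    set ε : ℝ := Real.exp (-(5*R/4)) with hεdef
    set B : ℝ := 1 + Real.exp (3*R/4) with hBdef
    have hεpos : 0 < ε := Real.exp_pos _
    set T : Set (ℝ×ℝ) := Metric.closedBall (0:ℝ×ℝ) B ∩
      ({p : ℝ×ℝ | ε ≤ (1-p.1)^2+p.2^2} ∩ {p : ℝ×ℝ | ε ≤ (1+p.1)^2+p.2^2}) with hTdef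
    have hc1 : IsClosed {p : ℝ×ℝ | ε ≤ (1-p.1)^2+p.2^2} :=
      isClosed_le continuous_const (by fun_prop)
    have hc2 : IsClosed {p : ℝ×ℝ | ε ≤ (1+p.1)^2+p.2^2} :=
      isClosed_le continuous_const (by fun_prop)
    have hTcomp : IsCompact T :=
      (isCompact_closedBall _ _).inter_right (hc1.inter hc2)
    have hTD : T ⊆ {p : ℝ×ℝ | p ≠ (1,0) ∧ p ≠ (-1,0)} := by
      rintro ⟨x, y⟩ ⟨-, hN, hM⟩
      simp only [Set.mem_setOf_eq] at hN hM ⊢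
      constructor
      · intro h
        rw [Prod.mk.injEq] at h
        obtain ⟨rfl, rfl⟩ := h
        norm_num at hN
        linarith
      · intro h
        rw [Prod.mk.injEq] at h
        obtain ⟨rfl, rfl⟩ := h
        norm_num at hM
        linarith
    have hcontT : ContinuousOn f T := by
      rw [hfg]
      rintro p hp
      obtain ⟨-, hN, hM⟩ := hp
      simp only [Set.mem_setOf_eq] at hN hM
      have hNpos : 0 < (1-p.1)^2+p.2^2 := lt_of_lt_of_le hεpos hN
      have hMpos : 0 < (1+p.1)^2+p.2^2 := lt_of_lt_of_le hεpos hM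
      apply ContinuousAt.continuousWithinAt
      have cN : Continuous (fun q : ℝ×ℝ => (1 - q.1) ^ 2 + q.2 ^ 2) := by fun_prop
      have cM : Continuous (fun q : ℝ×ℝ => (1 + q.1) ^ 2 + q.2 ^ 2) := by fun_prop
      have cQ : Continuous (fun q : ℝ×ℝ => 4 * q.1 ^ 2 * q.2 ^ 2 + (q.1 ^ 2 - q.2 ^ 2 - 1) ^ 2) := by
        fun_prop
      have hQpos : 0 < 4 * p.1 ^ 2 * p.2 ^ 2 + (p.1 ^ 2 - p.2 ^ 2 - 1) ^ 2 := by
        have e : 4 * p.1 ^ 2 * p.2 ^ 2 + (p.1 ^ 2 - p.2 ^ 2 - 1) ^ 2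
            = ((1 - p.1) ^ 2 + p.2 ^ 2) * ((1 + p.1) ^ 2 + p.2 ^ 2) := by ring
        rw [e]; exact mul_pos hNpos hMpos
      refine ContinuousAt.prodMk ?_ (ContinuousAt.prodMk ?_ ?_)
      · exact (continuous_snd.neg).continuousAt
      · exact ((cN.continuousAt).div (cM.continuousAt) hMpos.ne').log
          (div_ne_zero hNpos.ne' hMpos.ne')
      · exact continuousAt_const.mul ((cQ.continuousAt).log hQpos.ne')
    have hST : {p ∈ {p : ℝ×ℝ | p ≠ (1,0) ∧ p ≠ (-1,0)} | f p ∈ K} ⊆ T := by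
      rintro ⟨x, y⟩ ⟨⟨h1, h2⟩, hfK⟩
      have hN : 0 < (1 - x) ^ 2 + y ^ 2 := by have := auxpos11 x y 1 h1; nlinarith
      have hM : 0 < (1 + x) ^ 2 + y ^ 2 := by have := auxpos11 x y (-1) h2; nlinarith
      have hQ : 0 < 4 * x ^ 2 * y ^ 2 + (x ^ 2 - y ^ 2 - 1) ^ 2 := by
        have e : 4 * x ^ 2 * y ^ 2 + (x ^ 2 - y ^ 2 - 1) ^ 2
            = ((1 - x) ^ 2 + y ^ 2) * ((1 + x) ^ 2 + y ^ 2) := by ring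
        rw [e]; exact mul_pos hN hM
      have hnorm : ‖f (x,y)‖ ≤ R := mem_closedBall_zero_iff.mp (hRK hfK)
      have h2b := (norm_fst_le ((f ((x,y):ℝ×ℝ)).2)).trans
        ((norm_snd_le (f ((x,y):ℝ×ℝ))).trans hnorm)
      have h3b := (norm_snd_le ((f ((x,y):ℝ×ℝ)).2)).trans
        ((norm_snd_le (f ((x,y):ℝ×ℝ))).trans hnorm)
      rw [hf x y] at h2b h3b
      simp only [Real.norm_eq_abs] at h2b h3b
      obtain ⟨l2, u2⟩ := abs_le.mp h2b
      obtain ⟨l3, u3⟩ := abs_le.mp h3b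
      -- bounds on Q = N*M
      have hQle : 4 * x ^ 2 * y ^ 2 + (x ^ 2 - y ^ 2 - 1) ^ 2 ≤ Real.exp (R/2) :=
        (Real.log_le_iff_le_exp hQ).mp (by linarith)
      have hQge : Real.exp (-(R/2)) ≤ 4 * x ^ 2 * y ^ 2 + (x ^ 2 - y ^ 2 - 1) ^ 2 :=
        (Real.le_log_iff_exp_le hQ).mp (by linarith)
      have hQeq : 4 * x ^ 2 * y ^ 2 + (x ^ 2 - y ^ 2 - 1) ^ 2
          = ((1 - x) ^ 2 + y ^ 2) * ((1 + x) ^ 2 + y ^ 2) := by ring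
      rw [hQeq] at hQle hQge
      -- bounds on N/M
      have hRle : ((1 - x) ^ 2 + y ^ 2) / ((1 + x) ^ 2 + y ^ 2) ≤ Real.exp R :=
        (Real.log_le_iff_le_exp (div_pos hN hM)).mp u2
      have hRge : Real.exp (-R) ≤ ((1 - x) ^ 2 + y ^ 2) / ((1 + x) ^ 2 + y ^ 2) :=
        (Real.le_log_iff_exp_le (div_pos hN hM)).mp (by linarith)
      have hNM1 : (1 - x) ^ 2 + y ^ 2 ≤ Real.exp R * ((1 + x) ^ 2 + y ^ 2) :=
        (div_le_iff₀ hM).mp hRle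
      have hNM2 : Real.exp (-R) * ((1 + x) ^ 2 + y ^ 2) ≤ (1 - x) ^ 2 + y ^ 2 :=
        (le_div_iff₀ hM).mp hRge
      have heRR : Real.exp R * Real.exp (-R) = 1 := by
        rw [← Real.exp_add]; simp
      have he34 : Real.exp (3*R/4) * Real.exp (3*R/4) = Real.exp (R/2) * Real.exp R := by
        rw [← Real.exp_add, ← Real.exp_add]; ring_nf
      have hee : ε * Real.exp (3*R/4) = Real.exp (-(R/2)) := by
        rw [hεdef, ← Real.exp_add]; ring_nf
      have hN2 : ((1 - x) ^ 2 + y ^ 2)^2 ≤ Real.exp R * Real.exp (R/2) := by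
        nlinarith [mul_le_mul_of_nonneg_left hQle (Real.exp_pos R).le,
          mul_le_mul_of_nonneg_right hNM1 hN.le]
      have hM2 : ((1 + x) ^ 2 + y ^ 2)^2 ≤ Real.exp R * Real.exp (R/2) := by
        have hMN : (1 + x) ^ 2 + y ^ 2 ≤ Real.exp R * ((1 - x) ^ 2 + y ^ 2) := by
          nlinarith [mul_le_mul_of_nonneg_left hNM2 (Real.exp_pos R).le,
            Real.exp_pos R, Real.exp_pos (-R)]
        nlinarith [mul_le_mul_of_nonneg_left hQle (Real.exp_pos R).le,
          mul_le_mul_of_nonneg_right hMN hM.le]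
      have hNle : (1 - x) ^ 2 + y ^ 2 ≤ Real.exp (3*R/4) := by
        nlinarith [hN2, he34, Real.exp_pos (3*R/4), hN]
      have hMle : (1 + x) ^ 2 + y ^ 2 ≤ Real.exp (3*R/4) := by
        nlinarith [hM2, he34, Real.exp_pos (3*R/4), hM]
      have hNge : ε ≤ (1 - x) ^ 2 + y ^ 2 := by
        nlinarith [hQge, hMle, hN, hM, hee, Real.exp_pos (3*R/4),
          mul_le_mul_of_nonneg_left hMle hN.le]
      have hMge : ε ≤ (1 + x) ^ 2 + y ^ 2 := by
        nlinarith [hQge, hNle, hN, hM, hee, Real.exp_pos (3*R/4),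
          mul_le_mul_of_nonneg_left hNle hM.le]
      refine ⟨?_, hNge, hMge⟩
      · rw [Metric.mem_closedBall, dist_zero_right, Prod.norm_def]
        have hE := Real.exp_pos (3*R/4)
        apply max_le
        · rw [Real.norm_eq_abs]
          apply abs_le.mpr
          constructor
          · rw [hBdef]; nlinarith [hNle, hMle, sq_nonneg (x+1), sq_nonneg y]
          · rw [hBdef]; nlinarith [hNle, hMle, sq_nonneg (x-1), sq_nonneg y]
        · rw [Real.norm_eq_abs]
          apply abs_le.mpr
          constructor
          · rw [hBdef]; nlinarith [hNle, hMle, sq_nonneg (y+1)]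
          · rw [hBdef]; nlinarith [hNle, hMle, sq_nonneg (y-1)]
    have hSeq : {p ∈ {p : ℝ×ℝ | p ≠ (1,0) ∧ p ≠ (-1,0)} | f p ∈ K} = T ∩ f ⁻¹' K := by
      apply Set.Subset.antisymm
      · intro p hp
        exact ⟨hST hp, hp.2⟩
      · intro p hp
        exact ⟨hTD hp.1, hp.2⟩
    rw [hSeq]
    exact hTcomp.of_isClosed_subset
      (hcontT.preimage_isClosed_of_isClosed hTcomp.isClosed hK.isClosed)
      Set.inter_subset_left
end

section
/- Define f : ℝ² ∖ {(0,0)} → ℝ³ by f(x,y) = (−y − y/(x²+y²), x, (1/2)·log(x²+y²)); in polar coordinates z = r e^{it} this is f = (−sin t·(1/r + r), r cos t, log r). Then: (1) f is injective; (2) f is an immersion, i.e. its (Fréchet) derivative is injective at every point; (3) f is proper, i.e. the preimage of every compact subset of ℝ³ is compact (the third coordinate blows up as z → 0 and as |z| → ∞). -/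
set_option maxHeartbeats 1000000

open Filter Function

private lemma spos (p : ℝ × ℝ) (hp : p ≠ (0, 0)) : 0 < p.1 ^ 2 + p.2 ^ 2 := by
  rcases (add_nonneg (sq_nonneg p.1) (sq_nonneg p.2)).lt_or_eq with h | h
  · exact h
  · exfalso; apply hp
    have h1 : p.1 = 0 := by nlinarith [sq_nonneg p.1, sq_nonneg p.2]
    have h2 : p.2 = 0 := by nlinarith [sq_nonneg p.1, sq_nonneg p.2]
    exact Prod.ext h1 h2

/-- The properly embedded sphere with one end of type `(0,1,2)` and one end of
type `(1,2,2)`, total curvature `-4π`: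
`f(x,y) = (-y - y/(x²+y²), x, log(x²+y²)/2)` on `ℝ² ∖ {(0,0)}`. -/
theorem stmt_12 (f : ℝ × ℝ → ℝ × ℝ × ℝ)
    (hf : ∀ x y : ℝ, f (x, y) =
      (-y - y / (x ^ 2 + y ^ 2), x, (1 / 2) * Real.log (x ^ 2 + y ^ 2))) :
    Set.InjOn f {p : ℝ × ℝ | p ≠ (0, 0)} ∧
    (∀ p : ℝ × ℝ, p ≠ (0, 0) → Function.Injective (fderiv ℝ f p)) ∧
    (∀ K : Set (ℝ × ℝ × ℝ), IsCompact K →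
      IsCompact {p : ℝ × ℝ | p ≠ (0, 0) ∧ f p ∈ K}) := by
  have hfF : f = fun p : ℝ × ℝ =>
      (-p.2 - p.2 / (p.1 ^ 2 + p.2 ^ 2), p.1,
        (1 / 2) * Real.log (p.1 ^ 2 + p.2 ^ 2)) := by
    funext p; obtain ⟨x, y⟩ := p; exact hf x y
  subst hfF
  clear hf
  refine ⟨?_, ?_, ?_⟩
  · -- injectivity
    intro p hp q hq hfeq
    have hsp := spos p hp
    have hsq := spos q hq
    have h2 : p.1 = q.1 := congrArg (fun z => z.2.1) hfeq
    have h3 : (1 / 2 : ℝ) * Real.log (p.1 ^ 2 + p.2 ^ 2)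
        = (1 / 2 : ℝ) * Real.log (q.1 ^ 2 + q.2 ^ 2) := congrArg (fun z => z.2.2) hfeq
    have h1 : -p.2 - p.2 / (p.1 ^ 2 + p.2 ^ 2)
        = -q.2 - q.2 / (q.1 ^ 2 + q.2 ^ 2) := congrArg (fun z => z.1) hfeq
    have hlog : Real.log (p.1 ^ 2 + p.2 ^ 2) = Real.log (q.1 ^ 2 + q.2 ^ 2) := by linarith
    have hs : p.1 ^ 2 + p.2 ^ 2 = q.1 ^ 2 + q.2 ^ 2 :=
      Real.log_injOn_pos (Set.mem_Ioi.2 hsp) (Set.mem_Ioi.2 hsq) hlog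
    rw [← hs] at h1
    have hne : (p.1 ^ 2 + p.2 ^ 2) ≠ 0 := ne_of_gt hsp
    have hkey : p.2 * ((p.1 ^ 2 + p.2 ^ 2) + 1) = q.2 * ((p.1 ^ 2 + p.2 ^ 2) + 1) := by
      field_simp at h1
      nlinarith [h1]
    have h2' : p.2 = q.2 := mul_right_cancel₀ (by positivity) hkey
    exact Prod.ext h2 h2'
  · -- immersion
    intro p hp
    have hsp := spos p hp
    have hs0 : p.1 ^ 2 + p.2 ^ 2 ≠ 0 := ne_of_gt hsp
    set F : ℝ × ℝ →L[ℝ] ℝ := ContinuousLinearMap.fst ℝ ℝ ℝ with hF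
    set G : ℝ × ℝ →L[ℝ] ℝ := ContinuousLinearMap.snd ℝ ℝ ℝ with hG
    have hmul : (fun q : ℝ × ℝ => q.1 ^ 2 + q.2 ^ 2)
        = fun q : ℝ × ℝ => q.1 * q.1 + q.2 * q.2 := by funext q; ring
    have hS : HasFDerivAt (fun q : ℝ × ℝ => q.1 ^ 2 + q.2 ^ 2)
        ((p.1 • F + p.1 • F) + (p.2 • G + p.2 • G)) p := by
      rw [hmul]
      exact (hasFDerivAt_fst.mul hasFDerivAt_fst).add (hasFDerivAt_snd.mul hasFDerivAt_snd)
    set S : ℝ × ℝ →L[ℝ] ℝ := (p.1 • F + p.1 • F) + (p.2 • G + p.2 • G) with hSdef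
    have hinv : HasFDerivAt (fun q : ℝ × ℝ => (q.1 ^ 2 + q.2 ^ 2)⁻¹)
        ((-((p.1 ^ 2 + p.2 ^ 2) ^ 2)⁻¹) • S) p :=
      (hasDerivAt_inv hs0).comp_hasFDerivAt p hS
    have hdiv : HasFDerivAt (fun q : ℝ × ℝ => q.2 * (q.1 ^ 2 + q.2 ^ 2)⁻¹)
        (p.2 • ((-((p.1 ^ 2 + p.2 ^ 2) ^ 2)⁻¹) • S) + (p.1 ^ 2 + p.2 ^ 2)⁻¹ • G) p :=
      hasFDerivAt_snd.mul hinv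
    have hf1 : HasFDerivAt (fun q : ℝ × ℝ => -q.2 - q.2 / (q.1 ^ 2 + q.2 ^ 2))
        ((-G) - (p.2 • ((-((p.1 ^ 2 + p.2 ^ 2) ^ 2)⁻¹) • S)
          + (p.1 ^ 2 + p.2 ^ 2)⁻¹ • G)) p := by
      simpa [div_eq_mul_inv] using hasFDerivAt_snd.fun_neg.fun_sub hdiv
    have hf3 : HasFDerivAt (fun q : ℝ × ℝ => (1 / 2 : ℝ) * Real.log (q.1 ^ 2 + q.2 ^ 2))
        ((1 / 2 : ℝ) • ((p.1 ^ 2 + p.2 ^ 2)⁻¹ • S)) p :=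
      ((Real.hasDerivAt_log hs0).comp_hasFDerivAt p hS).const_mul (1 / 2 : ℝ)
    have hD : HasFDerivAt (fun p : ℝ × ℝ =>
        (-p.2 - p.2 / (p.1 ^ 2 + p.2 ^ 2), p.1,
          (1 / 2) * Real.log (p.1 ^ 2 + p.2 ^ 2)))
        (((-G) - (p.2 • ((-((p.1 ^ 2 + p.2 ^ 2) ^ 2)⁻¹) • S)
          + (p.1 ^ 2 + p.2 ^ 2)⁻¹ • G)).prod
          (F.prod ((1 / 2 : ℝ) • ((p.1 ^ 2 + p.2 ^ 2)⁻¹ • S)))) p :=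
      hf1.prodMk (hasFDerivAt_fst.prodMk hf3)
    rw [hD.fderiv]
    intro u v huv
    simp only [ContinuousLinearMap.prod_apply, ContinuousLinearMap.coe_sub', Pi.sub_apply,
      ContinuousLinearMap.add_apply, ContinuousLinearMap.smul_apply,
      ContinuousLinearMap.neg_apply, ContinuousLinearMap.coe_fst',
      ContinuousLinearMap.coe_snd', hSdef, hF, hG, smul_eq_mul, Prod.mk.injEq] at huv
    obtain ⟨e1, e2, e3⟩ := huv
    have hu1 : u.1 = v.1 := e2
    have hy2 : p.2 * u.2 = p.2 * v.2 := by
      field_simp at e3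
      rw [hu1] at e3
      linarith
    have hkey : u.2 * ((p.1 ^ 2 + p.2 ^ 2) ^ 2 * (p.1 ^ 2 + p.2 ^ 2) + (p.1 ^ 2 + p.2 ^ 2) ^ 2)
        = v.2 * ((p.1 ^ 2 + p.2 ^ 2) ^ 2 * (p.1 ^ 2 + p.2 ^ 2) + (p.1 ^ 2 + p.2 ^ 2) ^ 2) := by
      field_simp at e1
      linear_combination (-(p.1 ^ 2 + p.2 ^ 2)) * e1 + (2 * p.2 * (p.1 ^ 2 + p.2 ^ 2)) * hy2
        + (2 * p.1 * p.2 * (p.1 ^ 2 + p.2 ^ 2)) * hu1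
    have hu2 : u.2 = v.2 := mul_right_cancel₀
      (ne_of_gt (add_pos (mul_pos (pow_pos hsp 2) hsp) (pow_pos hsp 2))) hkey
    exact Prod.ext hu1 hu2
  · -- properness
    intro K hK
    obtain ⟨M0, hM0⟩ := hK.isBounded.exists_norm_le
    obtain ⟨M, hMnn, hbound⟩ : ∃ M : ℝ, 0 ≤ M ∧ ∀ q ∈ K, |q.2.2| ≤ M := by
      refine ⟨max M0 0, le_max_right _ _, fun q hq => ?_⟩
      have h1 : ‖q.2.2‖ ≤ ‖q‖ := (norm_snd_le q.2).trans (norm_snd_le q)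
      exact le_trans (h1.trans (hM0 q hq)) (le_max_left _ _)
    have ha : (0 : ℝ) < Real.exp (-M) / 2 := by positivity
    have hsub : {p : ℝ × ℝ | p ≠ (0, 0) ∧
        (fun p : ℝ × ℝ => (-p.2 - p.2 / (p.1 ^ 2 + p.2 ^ 2), p.1,
          (1 / 2) * Real.log (p.1 ^ 2 + p.2 ^ 2))) p ∈ K}
        = {p : ℝ × ℝ | Real.exp (-M) / 2 ≤ ‖p‖} ∩
          (fun p : ℝ × ℝ => (-p.2 - p.2 / (p.1 ^ 2 + p.2 ^ 2), p.1,
            (1 / 2) * Real.log (p.1 ^ 2 + p.2 ^ 2))) ⁻¹' K := by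
      ext p
      simp only [Set.mem_setOf_eq, Set.mem_inter_iff, Set.mem_preimage]
      constructor
      · rintro ⟨hp, hpK⟩
        refine ⟨?_, hpK⟩
        have hsp := spos p hp
        have h3 := hbound _ hpK
        simp only [abs_le] at h3
        have hlog : -(2 * M) ≤ Real.log (p.1 ^ 2 + p.2 ^ 2) := by
          have := h3.1; linarith
        have hlb : Real.exp (-(2 * M)) ≤ p.1 ^ 2 + p.2 ^ 2 := by
          calc Real.exp (-(2 * M)) ≤ Real.exp (Real.log (p.1 ^ 2 + p.2 ^ 2)) :=
              Real.exp_le_exp.2 hlog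
            _ = p.1 ^ 2 + p.2 ^ 2 := Real.exp_log hsp
        have hx : |p.1| ≤ ‖p‖ := norm_fst_le p
        have hy : |p.2| ≤ ‖p‖ := norm_snd_le p
        have hexp : Real.exp (-(2 * M)) = Real.exp (-M) ^ 2 := by
          rw [sq, ← Real.exp_add]; congr 1; ring
        have hnsq : Real.exp (-M) ^ 2 ≤ 2 * ‖p‖ ^ 2 := by
          nlinarith [sq_abs p.1, sq_abs p.2, norm_nonneg p,
            mul_self_le_mul_self (abs_nonneg p.1) hx,
            mul_self_le_mul_self (abs_nonneg p.2) hy]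
        nlinarith [norm_nonneg p, Real.exp_pos (-M)]
      · rintro ⟨hp, hpK⟩
        refine ⟨?_, hpK⟩
        intro h0
        rw [h0] at hp
        have hz : ‖((0, 0) : ℝ × ℝ)‖ = 0 := by simp [Prod.norm_def]
        rw [hz] at hp
        linarith
    rw [hsub]
    have hcont : ContinuousOn (fun p : ℝ × ℝ =>
        (-p.2 - p.2 / (p.1 ^ 2 + p.2 ^ 2), p.1,
          (1 / 2) * Real.log (p.1 ^ 2 + p.2 ^ 2)))
        {p : ℝ × ℝ | Real.exp (-M) / 2 ≤ ‖p‖} := by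
      intro p hp
      have hp0 : p ≠ (0, 0) := by
        intro h0
        rw [Set.mem_setOf_eq, h0] at hp
        have hz : ‖((0, 0) : ℝ × ℝ)‖ = 0 := by simp [Prod.norm_def]
        rw [hz] at hp
        linarith
      have hs0 : p.1 ^ 2 + p.2 ^ 2 ≠ 0 := ne_of_gt (spos p hp0)
      apply ContinuousAt.continuousWithinAt
      apply ContinuousAt.prodMk
      · exact continuousAt_snd.neg.sub (continuousAt_snd.div (by fun_prop) hs0)
      apply ContinuousAt.prodMk continuousAt_fst
      have hlogc : ContinuousAt (fun q : ℝ × ℝ => Real.log (q.1 ^ 2 + q.2 ^ 2)) p :=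
        ContinuousAt.comp (g := Real.log) (f := fun q : ℝ × ℝ => q.1 ^ 2 + q.2 ^ 2)
          (Real.continuousAt_log hs0) (by fun_prop)
      exact continuousAt_const.mul hlogc
    have hclosed : IsClosed ({p : ℝ × ℝ | Real.exp (-M) / 2 ≤ ‖p‖} ∩ _) :=
      hcont.preimage_isClosed_of_isClosed
        (isClosed_le continuous_const continuous_norm) hK.isClosed
    apply IsCompact.of_isClosed_subset (isCompact_closedBall (0 : ℝ × ℝ) (Real.exp M)) hclosed
    rintro p ⟨hpa, hpK⟩
    have hp0 : p ≠ (0, 0) := by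
      intro h0
      rw [Set.mem_setOf_eq, h0] at hpa
      have hz : ‖((0, 0) : ℝ × ℝ)‖ = 0 := by simp [Prod.norm_def]
      rw [hz] at hpa
      linarith
    have hsp := spos p hp0
    have h3 := hbound _ hpK
    simp only [abs_le] at h3
    have hlog : Real.log (p.1 ^ 2 + p.2 ^ 2) ≤ 2 * M := by
      have := h3.2; linarith
    have hub : p.1 ^ 2 + p.2 ^ 2 ≤ Real.exp (2 * M) := by
      calc p.1 ^ 2 + p.2 ^ 2 = Real.exp (Real.log (p.1 ^ 2 + p.2 ^ 2)) :=
          (Real.exp_log hsp).symm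
        _ ≤ Real.exp (2 * M) := Real.exp_le_exp.2 hlog
    have hexp : Real.exp (2 * M) = Real.exp M ^ 2 := by
      rw [sq, ← Real.exp_add]; congr 1; ring
    rw [Metric.mem_closedBall, dist_zero_right, Prod.norm_def]
    apply max_le
    · rw [Real.norm_eq_abs]
      nlinarith [abs_nonneg p.1, sq_abs p.1, Real.exp_pos M, sq_nonneg p.2]
    · rw [Real.norm_eq_abs]
      nlinarith [abs_nonneg p.2, sq_abs p.2, Real.exp_pos M, sq_nonneg p.1]
end

section
/- Let n ≥ 3 be an integer and let a, b be positive real numbers. Define f : ℂ∖{0} → ℝ³ by f(z) = (Re(z) + Re(1/z), −(Im(z) − Im(1/z)), (a/(n−1))·(Re(z^{n−1}) + Re(z^{1−n})) + b·n·log|z|); in polar coordinates z = r e^{it} this is f(r,t) = ((r + 1/r)cos t, −(r + 1/r)sin t, (a/(n−1))(r^{n−1} + r^{1−n})cos((n−1)t) + b·n·log r). Then f is injective. -/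
open Complex Filter Function

/-- The embedded sphere with two ends of type `(2,2,n)`, one at `0` and one at
`∞`: the map `f` below is injective on `ℂ ∖ {0}`. -/
theorem stmt_13 (n : ℕ) (hn : 3 ≤ n) (a b : ℝ) (ha : 0 < a) (hb : 0 < b)
    (f : ℂ → ℝ × ℝ × ℝ)
    (hf : ∀ z, f z =
      (z.re + (1 / z).re,
       -(z.im - (1 / z).im),
       (a / ((n : ℝ) - 1)) * ((z ^ (n - 1)).re + (z ^ ((1 : ℤ) - n)).re)
         + b * n * Real.log ‖z‖)) :
    Set.InjOn f {z : ℂ | z ≠ 0} := by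
  intro z hz w hw hfzw
  simp only [Set.mem_setOf_eq] at hz hw
  rw [hf z, hf w, Prod.mk.injEq, Prod.mk.injEq] at hfzw
  obtain ⟨h1, h2, h3⟩ := hfzw
  -- first two coordinates give a complex equation: conj z + 1/z = conj w + 1/w
  have e : (starRingEnd ℂ) z + 1 / z = (starRingEnd ℂ) w + 1 / w := by
    apply Complex.ext
    · simpa using h1
    · simp only [Complex.add_im, Complex.conj_im]
      linarith [h2]
  -- multiply through by z * w
  have key : w * ((Complex.normSq z : ℂ) + 1) = z * ((Complex.normSq w : ℂ) + 1) := by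
    rw [Complex.normSq_eq_conj_mul_self, Complex.normSq_eq_conj_mul_self]
    field_simp at e
    linear_combination e
  have hne : ((Complex.normSq z : ℂ) + 1) ≠ 0 := by
    intro h
    have := congrArg Complex.re h
    simp at this
    nlinarith [Complex.normSq_nonneg z]
  -- taking absolute values
  have hfac : (‖z‖ - ‖w‖) * (‖z‖ * ‖w‖ - 1) = 0 := by
    have h1' : (0:ℝ) ≤ Complex.normSq z + 1 := by linarith [Complex.normSq_nonneg z]
    have h2' : (0:ℝ) ≤ Complex.normSq w + 1 := by linarith [Complex.normSq_nonneg w]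
    have habs := congrArg norm key
    have e1 : ((Complex.normSq z : ℂ) + 1) = ((Complex.normSq z + 1 : ℝ) : ℂ) := by
      push_cast; ring
    have e2 : ((Complex.normSq w : ℂ) + 1) = ((Complex.normSq w + 1 : ℝ) : ℂ) := by
      push_cast; ring
    rw [e1, e2, norm_mul, norm_mul, Complex.norm_real, Complex.norm_real,
      Real.norm_of_nonneg h1', Real.norm_of_nonneg h2',
      ← Complex.sq_norm z, ← Complex.sq_norm w] at habs
    linear_combination habs
  rcases mul_eq_zero.1 hfac with hcase | hcase
  · -- |z| = |w| : then w = z directly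
    have hsq : Complex.normSq z = Complex.normSq w := by
      have h' : ‖z‖ = ‖w‖ := by linarith
      rw [← Complex.sq_norm z, ← Complex.sq_norm w, h']
    rw [hsq] at key
    exact (mul_right_cancel₀ (by rw [← hsq]; exact hne) key).symm
  · -- |z| * |w| = 1 : then w = (conj z)⁻¹
    have hns : Complex.normSq z * Complex.normSq w = 1 := by
      rw [← Complex.sq_norm z, ← Complex.sq_norm w]
      nlinarith [hcase]
    have hzw : (starRingEnd ℂ) z * w = 1 := by
      have hnsC : ((Complex.normSq z : ℂ)) * ((Complex.normSq w : ℂ)) = 1 := by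
        exact_mod_cast hns
      have hc : ((Complex.normSq z : ℂ)) = (starRingEnd ℂ) z * z :=
        Complex.normSq_eq_conj_mul_self
      have : ((starRingEnd ℂ) z * w) * ((Complex.normSq z : ℂ) + 1)
          = 1 * ((Complex.normSq z : ℂ) + 1) := by
        linear_combination (starRingEnd ℂ) z * key + hnsC - ((Complex.normSq w : ℂ) + 1) * hc
      exact mul_right_cancel₀ hne this
    have hw_eq : w = ((starRingEnd ℂ) z)⁻¹ := (inv_eq_of_mul_eq_one_right hzw).symm
    -- power identities
    have hm : (1:ℤ) - n = -((n-1 : ℕ) : ℤ) := by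
      have : ((n-1:ℕ):ℤ) = (n:ℤ) - 1 := by omega
      omega
    have hzpow : z ^ ((1:ℤ) - n) = (z ^ (n-1))⁻¹ := by rw [hm, zpow_neg, zpow_natCast]
    have hwpow : w ^ ((1:ℤ) - n) = (w ^ (n-1))⁻¹ := by rw [hm, zpow_neg, zpow_natCast]
    have hwn : w ^ (n-1) = (starRingEnd ℂ) ((z ^ (n-1))⁻¹) := by
      rw [hw_eq, inv_pow, ← map_pow, ← map_inv₀]
    have A1 : (w ^ (n-1)).re = (z ^ ((1:ℤ) - n)).re := by
      rw [hwn, hzpow]; exact Complex.conj_re _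
    have A2 : (w ^ ((1:ℤ) - n)).re = (z ^ (n-1)).re := by
      rw [hwpow, hwn, ← map_inv₀, inv_inv]; exact Complex.conj_re _
    have habsw : ‖w‖ = (‖z‖)⁻¹ := by
      rw [hw_eq, norm_inv, Complex.norm_conj]
    rw [A1, A2, habsw, Real.log_inv] at h3
    -- the log term forces |z| = 1
    have hL : Real.log (‖z‖) = 0 := by
      have hbn : (0:ℝ) < b * n := by positivity
      have h2L : 2 * (b * n) * Real.log (‖z‖) = 0 := by linear_combination h3
      have := mul_eq_zero.1 h2L
      rcases this with h | h
      · nlinarith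
      · exact h
    have habsz : ‖z‖ = 1 := by
      rcases Real.log_eq_zero.1 hL with h | h | h
      · exact absurd h (norm_ne_zero_iff.mpr hz)
      · exact h
      · nlinarith [norm_nonneg z]
    have hns1 : Complex.normSq z = 1 := by
      rw [← Complex.sq_norm z, habsz]; norm_num
    have hc1 : (starRingEnd ℂ) z * z = 1 := by
      rw [← Complex.normSq_eq_conj_mul_self, hns1]; norm_num
    rw [hw_eq] at *
    exact ((inv_eq_of_mul_eq_one_right hc1)).symm ▸ rfl
end

section
/- Define f : ℝ² ∖ {(0,0)} → ℝ³ by f(x,y) = (−y, −xy − (1/2)·log(x²+y²), (1/3)·x·(x² − 3y² + 1)). Then f is injective, and f is an immersion: its (Fréchet) derivative is injective at every point of ℝ² ∖ {(0,0)}. -/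
open Filter Function

/-- The fundamental polynomial positivity: Ψ(c,d) > 0 on the nonnegative
quadrant, with SOS certificate `4c(c-1/6)² + (2c-5/36)² + 23/1296 + d·(...)`. -/
lemma stmt14_psi_pos (c d : ℝ) (hc : 0 ≤ c) (hd : 0 ≤ d) :
    c < (c + d/12 + 1/3) * ((2*c + d/3 + 1/3)^2 - c*d) := by
  nlinarith [mul_nonneg hc (sq_nonneg (c - 1/6)), sq_nonneg (2*c - 5/36),
    mul_nonneg hd hc, mul_nonneg hd (mul_nonneg hc hc),
    mul_nonneg (mul_nonneg hd hd) hc, mul_nonneg hd hd,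
    mul_nonneg (mul_nonneg hd hd) hd]

/-- Log bound: `(log a - log b)·√(ab) ≤ a - b` for `0 < b ≤ a`. -/
lemma stmt14_log_diff_le (a b : ℝ) (hb : 0 < b) (hab : b ≤ a) :
    (Real.log a - Real.log b) * Real.sqrt (a*b) ≤ a - b := by
  have ha : 0 < a := lt_of_lt_of_le hb hab
  set z := (Real.log a - Real.log b)/2 with hz
  have hz0 : 0 ≤ z := by
    have := Real.log_le_log hb hab
    rw [hz]; linarith
  have hsinh : z ≤ Real.sinh z := Real.self_le_sinh_iff.mpr hz0
  have h2 : (Real.exp z)^2 = a/b := by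
    rw [sq, ← Real.exp_add]
    have hzz : z + z = Real.log (a/b) := by
      rw [hz, Real.log_div ha.ne' hb.ne']; ring
    rw [hzz, Real.exp_log (div_pos ha hb)]
  have hexp : Real.sqrt (a/b) = Real.exp z := by
    rw [← h2, Real.sqrt_sq (Real.exp_pos z).le]
  have hsinh' : Real.sinh z = (Real.sqrt (a/b) - (Real.sqrt (a/b))⁻¹)/2 := by
    rw [Real.sinh_eq, Real.exp_neg, ← hexp]
  have hXab : Real.sqrt (a/b) * Real.sqrt (a*b) = a := by
    rw [← Real.sqrt_mul (by positivity)]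
    rw [show a/b*(a*b) = a^2 by field_simp]
    exact Real.sqrt_sq ha.le
  have hXinv : (Real.sqrt (a/b))⁻¹ * Real.sqrt (a*b) = b := by
    rw [← Real.sqrt_inv, show (a/b)⁻¹ = b/a by field_simp, ← Real.sqrt_mul (by positivity)]
    rw [show b/a*(a*b) = b^2 by field_simp]
    exact Real.sqrt_sq hb.le
  have hmul : (2*z) * Real.sqrt (a*b) ≤
      (Real.sqrt (a/b) - (Real.sqrt (a/b))⁻¹) * Real.sqrt (a*b) := by
    apply mul_le_mul_of_nonneg_right _ (Real.sqrt_nonneg _)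
    rw [hsinh'] at hsinh; linarith
  calc (Real.log a - Real.log b) * Real.sqrt (a*b)
      = (2*z) * Real.sqrt (a*b) := by rw [hz]; ring
    _ ≤ (Real.sqrt (a/b) - (Real.sqrt (a/b))⁻¹) * Real.sqrt (a*b) := hmul
    _ = a - b := by rw [sub_mul, hXab, hXinv]

/-- Squared symmetric form of the log bound. -/
lemma stmt14_log_sq_le (a b : ℝ) (ha : 0 < a) (hb : 0 < b) :
    (Real.log a - Real.log b)^2 * (a*b) ≤ (a-b)^2 := by
  wlog hab : b ≤ a generalizing a b
  · have := this b a hb ha (le_of_not_ge hab)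
    rw [show a*b = b*a by ring]
    nlinarith [this]
  have h := stmt14_log_diff_le a b hb hab
  have h0 : 0 ≤ (Real.log a - Real.log b) := by
    have := Real.log_le_log hb hab; linarith
  have hs : 0 ≤ Real.sqrt (a*b) := Real.sqrt_nonneg _
  have := mul_le_mul h h (mul_nonneg h0 hs) (by linarith [mul_nonneg h0 hs])
  calc (Real.log a - Real.log b)^2 * (a*b)
      = ((Real.log a - Real.log b) * Real.sqrt (a*b))^2 := by
        rw [mul_pow, Real.sq_sqrt (by positivity)]
    _ ≤ (a-b)^2 := by nlinarith [this]

/-- Key inequality on the cubic's level ellipse. -/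
lemma stmt14_keyineq (x1 x2 y : ℝ) (h1 : x1^2+x1*x2+x2^2 = 3*y^2-1) :
    (x1+x2)^2 < 4*y^2*((x1^2+y^2)*(x2^2+y^2)) := by
  have ht : y^2 = ((x1+x2)/2)^2 + (x1-x2)^2/12 + 1/3 := by linear_combination -h1/3
  have h := stmt14_psi_pos (((x1+x2)/2)^2) ((x1-x2)^2) (sq_nonneg _) (sq_nonneg _)
  have hsub : 4*y^2*((x1^2+y^2)*(x2^2+y^2)) =
      4*(((x1+x2)/2)^2 + (x1-x2)^2/12 + 1/3)*((2*(((x1+x2)/2)^2) + (x1-x2)^2/3 + 1/3)^2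
        - (((x1+x2)/2)^2)*((x1-x2)^2)) := by
    rw [ht]; ring
  rw [hsub]
  nlinarith [h]

/-- Positivity of `a*a+b*b` away from the origin. -/
lemma stmt14_pos_aux (a b : ℝ) (h : (a,b) ≠ ((0:ℝ),(0:ℝ))) : 0 < a*a+b*b := by
  rcases eq_or_ne a 0 with ha | ha
  · have hb : b ≠ 0 := fun hb => h (by rw [ha, hb])
    have := mul_self_pos.mpr hb
    nlinarith [mul_self_nonneg a]
  · have := mul_self_pos.mpr ha
    nlinarith [mul_self_nonneg b]

/-- Immersion property at a single point. -/
lemma stmt14_immersion (x y : ℝ) (hp : ((x,y) : ℝ×ℝ) ≠ (0,0)) :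
    Function.Injective (fderiv ℝ (fun p : ℝ×ℝ =>
      ((-p.2 : ℝ), -(p.1*p.2) - (1/2)*Real.log (p.1*p.1+p.2*p.2),
        (1/3)*p.1*(p.1*p.1 - 3*(p.2*p.2) + 1))) (x,y)) := by
  have hA : 0 < x*x+y*y := stmt14_pos_aux x y hp
  have hx1 : HasFDerivAt (fun p : ℝ×ℝ => p.1)
      (ContinuousLinearMap.fst ℝ ℝ ℝ) (x,y) := hasFDerivAt_fst
  have hy1 : HasFDerivAt (fun p : ℝ×ℝ => p.2)
      (ContinuousLinearMap.snd ℝ ℝ ℝ) (x,y) := hasFDerivAt_snd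
  have h1 : HasFDerivAt (fun p : ℝ×ℝ => -p.2)
      (-(ContinuousLinearMap.snd ℝ ℝ ℝ)) (x,y) := hy1.neg
  have hr : HasFDerivAt (fun p : ℝ×ℝ => p.1*p.1 + p.2*p.2)
      _ (x,y) := (hx1.mul hx1).add (hy1.mul hy1)
  have hlog0 := (Real.hasDerivAt_log hA.ne').comp_hasFDerivAt (x,y) hr
  have hlog : HasFDerivAt (fun p : ℝ×ℝ => Real.log (p.1*p.1+p.2*p.2)) _ (x,y) :=
    hlog0
  have h2 : HasFDerivAt
      (fun p : ℝ×ℝ => -(p.1*p.2) - (1/2)*Real.log (p.1*p.1+p.2*p.2))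
      _ (x,y) := (hx1.mul hy1).neg.sub (hlog.const_mul (1/2))
  have h3 : HasFDerivAt
      (fun p : ℝ×ℝ => (1/3)*p.1*(p.1*p.1 - 3*(p.2*p.2) + 1)) _ (x,y) :=
    (hx1.const_mul (1/3)).mul
      (((hx1.mul hx1).sub ((hy1.mul hy1).const_mul 3)).add_const 1)
  have hD := (HasFDerivAt.prodMk h1 (HasFDerivAt.prodMk h2 h3)).fderiv
  rw [hD]
  intro v w hvw
  obtain ⟨v1,v2⟩ := v
  obtain ⟨w1,w2⟩ := w
  simp only [ContinuousLinearMap.prod_apply, ContinuousLinearMap.add_apply,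
    ContinuousLinearMap.smul_apply, ContinuousLinearMap.neg_apply,
    ContinuousLinearMap.sub_apply, ContinuousLinearMap.coe_fst',
    ContinuousLinearMap.coe_snd', smul_eq_mul, Prod.mk.injEq] at hvw
  obtain ⟨e1, e2, e3⟩ := hvw
  have hv2 : v2 = w2 := by linarith
  subst hv2
  by_cases hu : v1 = w1
  · rw [hu]
  exfalso
  have hune : v1 - w1 ≠ 0 := sub_ne_zero.mpr hu
  have hAinv : (x*x+y*y)⁻¹ * (x*x+y*y) = 1 := inv_mul_cancel₀ hA.ne'
  have e2' : (y*(x*x+y*y) + x) * (v1 - w1) = 0 := by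
    linear_combination (-(x*x+y*y))*e2 - (x*(v1-w1))*hAinv
  have e3' : (3*(x*x) - 3*(y*y) + 1) * (v1 - w1) = 0 := by
    linear_combination 3*e3
  have hq2 : y*(x*x+y*y) + x = 0 := by
    rcases mul_eq_zero.mp e2' with h | h
    · exact h
    · exact absurd h hune
  have hc2 : 3*(x*x) - 3*(y*y) + 1 = 0 := by
    rcases mul_eq_zero.mp e3' with h | h
    · exact h
    · exact absurd h hune
  have hy2 : y*y = x*x + 1/3 := by linarith
  have hxx : y*(x*x+y*y) = -x := by linarith
  have h5 : (x*x+1/3)*((x*x)+(x*x+1/3))^2 = x*x := by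
    rw [← hy2]
    have h6 : (y*(x*x+y*y))^2 = x*x := by rw [hxx]; ring
    linear_combination h6
  have psi := stmt14_psi_pos (x*x) 0 (mul_self_nonneg x) le_rfl
  nlinarith [psi, h5]

/-- The embedded surface with one horn end of type `(0,0,1)` and one end of
type `(2,3,4)`: `f(x,y) = (-y, -xy - log(x²+y²)/2, x(x²-3y²+1)/3)` is
injective and an immersion on `ℝ² ∖ {(0,0)}`. -/
theorem stmt_14 (f : ℝ × ℝ → ℝ × ℝ × ℝ)
    (hf : ∀ x y : ℝ, f (x, y) =
      (-y, -(x * y) - (1 / 2) * Real.log (x ^ 2 + y ^ 2),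
        (1 / 3) * x * (x ^ 2 - 3 * y ^ 2 + 1))) :
    Set.InjOn f {p : ℝ × ℝ | p ≠ (0, 0)} ∧
    (∀ p : ℝ × ℝ, p ≠ (0, 0) → Function.Injective (fderiv ℝ f p)) := by
  have hfF : f = fun p : ℝ×ℝ =>
      ((-p.2 : ℝ), -(p.1*p.2) - (1/2)*Real.log (p.1*p.1+p.2*p.2),
        (1/3)*p.1*(p.1*p.1 - 3*(p.2*p.2) + 1)) := by
    funext p
    obtain ⟨x,y⟩ := p
    rw [hf x y]
    have h2 : x^2+y^2 = x*x+y*y := by ring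
    have h3 : (1/3)*x*(x^2-3*y^2+1) = (1/3)*x*(x*x-3*(y*y)+1) := by ring
    rw [h2, h3]
  subst hfF
  constructor
  · -- Injectivity
    rintro ⟨x1,y1⟩ hp ⟨x2,y2⟩ hq hpq
    simp only [Set.mem_setOf_eq] at hp hq
    simp only [Prod.mk.injEq] at hpq
    obtain ⟨e1, e2, e3⟩ := hpq
    have hy : y1 = y2 := by linarith
    subst hy
    by_cases hx : x1 = x2
    · rw [hx]
    exfalso
    have hxne : x1 - x2 ≠ 0 := sub_ne_zero.mpr hx
    have h30 : (x1 - x2) * (x1^2+x1*x2+x2^2 - 3*y1^2 + 1) = 0 := by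
      linear_combination 3*e3
    have h1 : x1^2+x1*x2+x2^2 = 3*y1^2-1 := by
      rcases mul_eq_zero.mp h30 with h | h
      · exact absurd h hxne
      · linarith
    have hA1 : 0 < x1*x1+y1*y1 := stmt14_pos_aux x1 y1 hp
    have hA2 : 0 < x2*x2+y1*y1 := stmt14_pos_aux x2 y1 hq
    have hL : Real.log (x1*x1+y1*y1) - Real.log (x2*x2+y1*y1) = 2*y1*(x2-x1) := by
      linarith
    have hs := stmt14_log_sq_le (x1*x1+y1*y1) (x2*x2+y1*y1) hA1 hA2
    rw [hL] at hs
    have hk := stmt14_keyineq x1 x2 y1 h1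
    have hd : 0 < (x1-x2)^2 := by
      have : (x1-x2)^2 ≠ 0 := pow_ne_zero _ hxne
      exact (sq_nonneg _).lt_of_ne (Ne.symm this)
    nlinarith [hs, mul_lt_mul_of_pos_left hk hd]
  · -- Immersion
    rintro ⟨x,y⟩ hp
    exact stmt14_immersion x y hp
end
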